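/- arXiv:1005.1151 — 7 statements merged into one kernel-verified Lean document; each statement's English description precedes it below -/
import Mathlib

section
/- Let K ⊆ ℝ^k be a nontrivial pointed closed convex cone and M ⊆ ℝ^k a polyhedral set with M ∩ K = {0}. Then there exists γ ∈ ℝ^k \ {0} such that γᵀu < 0 ≤ γᵀm for all u ∈ K \ {0} and all m ∈ M. -/
open Matrix

private theorem aux_isCompact_convexHull {E : Type*} [NormedAddCommGroup E] [NormedSpace ℝ E]
    [FiniteDimensional ℝ E] {S : Set E} (hS : IsCompact S) :
    IsCompact (convexHull ℝ S) := by
  classical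
  rcases S.eq_empty_or_nonempty with rfl | ⟨s₀, hs₀⟩
  · simp
  set n := Module.finrank ℝ E + 1 with hn
  set Φ : (Fin n → ℝ) × (Fin n → E) → E := fun p => ∑ i, p.1 i • p.2 i with hΦ
  have hΦcont : Continuous Φ := by
    apply continuous_finset_sum
    intro i _
    exact ((continuous_apply i).comp continuous_fst).smul
      ((continuous_apply i).comp continuous_snd)
  have hT : IsCompact ((stdSimplex ℝ (Fin n)) ×ˢ (Set.univ.pi fun _ : Fin n => S)) :=
    (isCompact_stdSimplex (𝕜 := ℝ) (ι := Fin n)).prod (isCompact_univ_pi fun _ => hS)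
  have himg : convexHull ℝ S =
      Φ '' ((stdSimplex ℝ (Fin n)) ×ˢ (Set.univ.pi fun _ : Fin n => S)) := by
    apply Set.Subset.antisymm
    · intro x hx
      obtain ⟨ι, hfin, z, w, hzS, hAI, hw0, hw1, hsum⟩ :=
        eq_pos_convex_span_of_mem_convexHull hx
      letI := hfin
      have hcard : Fintype.card ι ≤ n :=
        hAI.card_le_finrank_succ.trans (add_le_add_left (Submodule.finrank_le _) 1)
      set emb : ι ↪ Fin n := (Fintype.equivFin ι).toEmbedding.trans (Fin.castLEEmb hcard)
        with hemb
      set w' : Fin n → ℝ := fun j => if h : ∃ i, emb i = j then w h.choose else 0 with hw'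
      set z' : Fin n → E := fun j => if h : ∃ i, emb i = j then z h.choose else s₀ with hz'
      have hch : ∀ i : ι, (⟨i, rfl⟩ : ∃ i', emb i' = emb i).choose = i := fun i =>
        emb.injective (⟨i, rfl⟩ : ∃ i', emb i' = emb i).choose_spec
      have hw'emb : ∀ i : ι, w' (emb i) = w i := by
        intro i
        show (if h : ∃ i', emb i' = emb i then w h.choose else 0) = w i
        rw [dif_pos (⟨i, rfl⟩ : ∃ i', emb i' = emb i)]
        exact congrArg w (hch i)
      have hz'emb : ∀ i : ι, z' (emb i) = z i := by
        intro i
        show (if h : ∃ i', emb i' = emb i then z h.choose else s₀) = z i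
        rw [dif_pos (⟨i, rfl⟩ : ∃ i', emb i' = emb i)]
        exact congrArg z (hch i)
      have hnotmem : ∀ j : Fin n, j ∉ Finset.univ.map emb → ¬∃ i, emb i = j := by
        intro j hj h
        obtain ⟨i, hi⟩ := h
        exact hj (Finset.mem_map.2 ⟨i, Finset.mem_univ i, hi⟩)
      refine ⟨(w', z'), ⟨?_, ?_⟩, ?_⟩
      · constructor
        · intro j
          rw [hw']
          dsimp only
          split
          · exact (hw0 _).le
          · exact le_refl 0
        · have h1 : ∑ j ∈ Finset.univ.map emb, w' j = ∑ j, w' j := by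
            apply Finset.sum_subset (Finset.subset_univ _)
            intro j _ hj
            show (if h : ∃ i, emb i = j then w h.choose else 0) = 0
            rw [dif_neg (hnotmem j hj)]
          rw [← h1, Finset.sum_map]
          rw [← hw1]
          exact Finset.sum_congr rfl fun i _ => hw'emb i
      · intro j _
        rw [hz']
        dsimp only
        split
        · exact hzS ⟨_, rfl⟩
        · exact hs₀
      · have h1 : ∑ j ∈ Finset.univ.map emb, w' j • z' j = ∑ j, w' j • z' j := by
          apply Finset.sum_subset (Finset.subset_univ _)
          intro j _ hj
          show (if h : ∃ i, emb i = j then w h.choose else 0) • z' j = 0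
          rw [dif_neg (hnotmem j hj), zero_smul]
        rw [hΦ]
        dsimp only
        rw [← h1, Finset.sum_map]
        rw [← hsum]
        exact Finset.sum_congr rfl fun i _ => by rw [hw'emb i, hz'emb i]
    · rintro _ ⟨⟨w, z⟩, ⟨hw, hz⟩, rfl⟩
      exact (convex_convexHull ℝ S).sum_mem (fun i _ => hw.1 i) hw.2
        (fun i _ => subset_convexHull ℝ S (hz i (Set.mem_univ i)))
  rw [himg]
  exact hT.image hΦcont

theorem stmt0 (k : ℕ) (K M : Set (Fin k → ℝ))
    (hKcone : ∀ (c : ℝ), 0 ≤ c → ∀ x ∈ K, c • x ∈ K)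
    (hKclosed : IsClosed K) (hKconvex : Convex ℝ K)
    (hKpointed : K ∩ (-K) = {0})
    (hKne : K ≠ {0}) (hKuniv : K ≠ Set.univ)
    (hMpoly : ∃ (N : ℕ) (a : Fin N → (Fin k → ℝ)) (β : Fin N → ℝ),
      M = {x | ∀ i, a i ⬝ᵥ x ≤ β i})
    (hMK : M ∩ K = {0}) :
    ∃ γ : Fin k → ℝ, γ ≠ 0 ∧ (∀ u ∈ K, u ≠ 0 → γ ⬝ᵥ u < 0) ∧
      (∀ m ∈ M, 0 ≤ γ ⬝ᵥ m) := by
  classical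
  obtain ⟨N, a, β, hM⟩ := hMpoly
  have h0MK : (0 : Fin k → ℝ) ∈ M ∩ K := by rw [hMK]; rfl
  have h0K : (0 : Fin k → ℝ) ∈ K := h0MK.2
  have h0M : (0 : Fin k → ℝ) ∈ M := h0MK.1
  have hβ : ∀ i, 0 ≤ β i := by
    intro i
    have := h0M
    rw [hM] at this
    simpa using this i
  -- K is closed under addition
  have hKadd : ∀ x ∈ K, ∀ y ∈ K, x + y ∈ K := by
    intro x hx y hy
    have h2 : (1/2 : ℝ) • x + (1/2 : ℝ) • y ∈ K :=
      hKconvex hx hy (by norm_num) (by norm_num) (by norm_num)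
    have := hKcone 2 (by norm_num) _ h2
    convert this using 1
    rw [smul_add, smul_smul, smul_smul]
    norm_num
  -- the auxiliary closed convex cone E
  set E : Set (Fin k → ℝ) := {x | ∀ i, β i ≤ 0 → a i ⬝ᵥ x ≤ 0} with hEdef
  have hacont : ∀ i, Continuous fun x : Fin k → ℝ => a i ⬝ᵥ x := by
    intro i
    apply continuous_finset_sum
    intro j _
    exact continuous_const.mul (continuous_apply j)
  have hEclosed : IsClosed E := by
    have : E = ⋂ i, {x : Fin k → ℝ | β i ≤ 0 → a i ⬝ᵥ x ≤ 0} := by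
      ext x; simp [hEdef]
    rw [this]
    apply isClosed_iInter
    intro i
    by_cases h : β i ≤ 0
    · have : {x : Fin k → ℝ | β i ≤ 0 → a i ⬝ᵥ x ≤ 0}
          = (fun x => a i ⬝ᵥ x) ⁻¹' Set.Iic 0 := by
        ext x; simp [h]
      rw [this]
      exact IsClosed.preimage (hacont i) isClosed_Iic
    · have : {x : Fin k → ℝ | β i ≤ 0 → a i ⬝ᵥ x ≤ 0} = Set.univ := by
        ext x; simp [h]
      rw [this]
      exact isClosed_univ
  have hEconvex : Convex ℝ E := by
    intro x hx y hy s t hs ht hst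
    intro i hβi
    have hx' := hx i hβi
    have hy' := hy i hβi
    have h1 : a i ⬝ᵥ (s • x + t • y) = s * (a i ⬝ᵥ x) + t * (a i ⬝ᵥ y) := by
      rw [dotProduct_add, dotProduct_smul, dotProduct_smul, smul_eq_mul, smul_eq_mul]
    rw [h1]
    have := mul_le_mul_of_nonneg_left hx' hs
    have := mul_le_mul_of_nonneg_left hy' ht
    nlinarith
  have h0E : (0 : Fin k → ℝ) ∈ E := by
    intro i _
    simp
  have hME : M ⊆ E := by
    intro m hm i hβi
    rw [hM] at hm
    exact (hm i).trans hβi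
  -- E ∩ K = {0}
  have hEK : ∀ x ∈ E, x ∈ K → x = 0 := by
    intro x hxE hxK
    set t : ℝ := (∑ i, if 0 < β i then max 0 (a i ⬝ᵥ x / β i) else 0) + 1 with ht
    have htsum : (0:ℝ) ≤ ∑ i, if 0 < β i then max 0 (a i ⬝ᵥ x / β i) else 0 := by
      apply Finset.sum_nonneg
      intro i _
      split
      · exact le_max_left 0 _
      · exact le_refl 0
    have ht0 : 0 < t := by rw [ht]; linarith
    have hmem : t⁻¹ • x ∈ M := by
      rw [hM]
      intro i
      have hdp : a i ⬝ᵥ (t⁻¹ • x) = t⁻¹ * (a i ⬝ᵥ x) := by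
        rw [dotProduct_smul, smul_eq_mul]
      rw [hdp]
      by_cases hb : 0 < β i
      · have h1 : a i ⬝ᵥ x / β i ≤ t := by
          have h2 : (if 0 < β i then max 0 (a i ⬝ᵥ x / β i) else 0)
              ≤ ∑ j, if 0 < β j then max 0 (a j ⬝ᵥ x / β j) else 0 := by
            apply Finset.single_le_sum (fun j _ => ?_) (Finset.mem_univ i)
            split
            · exact le_max_left 0 _
            · exact le_refl 0
          rw [if_pos hb] at h2
          have h3 : a i ⬝ᵥ x / β i ≤ max 0 (a i ⬝ᵥ x / β i) := le_max_right 0 _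
          rw [ht]; linarith
        have h4 : a i ⬝ᵥ x ≤ t * β i := by
          rw [div_le_iff₀ hb] at h1
          linarith [h1]
        calc t⁻¹ * (a i ⬝ᵥ x) ≤ t⁻¹ * (t * β i) :=
              mul_le_mul_of_nonneg_left h4 (inv_nonneg.2 ht0.le)
          _ = β i := by field_simp
      · push_neg at hb
        have h5 : a i ⬝ᵥ x ≤ 0 := hxE i hb
        have h6 : t⁻¹ * (a i ⬝ᵥ x) ≤ 0 :=
          mul_nonpos_of_nonneg_of_nonpos (inv_nonneg.2 ht0.le) h5
        exact h6.trans (hβ i)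
    have hmemK : t⁻¹ • x ∈ K := hKcone t⁻¹ (inv_nonneg.2 ht0.le) x hxK
    have : t⁻¹ • x ∈ M ∩ K := ⟨hmem, hmemK⟩
    rw [hMK] at this
    have h7 : t⁻¹ • x = 0 := this
    have h8 : t⁻¹ ≠ 0 := inv_ne_zero ht0.ne'
    rcases smul_eq_zero.1 h7 with h | h
    · exact absurd h h8
    · exact h
  -- the compact convex set C
  set S : Set (Fin k → ℝ) := K ∩ Metric.sphere 0 1 with hSdef
  have hScompact : IsCompact S := (isCompact_sphere (0 : Fin k → ℝ) 1).inter_left hKclosed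
  set C : Set (Fin k → ℝ) := convexHull ℝ S with hCdef
  have hCcompact : IsCompact C := aux_isCompact_convexHull hScompact
  have hCconvex : Convex ℝ C := convex_convexHull ℝ S
  have hCK : C ⊆ K := convexHull_min Set.inter_subset_left hKconvex
  -- 0 ∉ C using pointedness
  have hC0 : (0 : Fin k → ℝ) ∉ C := by
    intro h
    rw [hCdef, convexHull_eq] at h
    obtain ⟨ι, t, w, z, hw0, hw1, hzS, hcm⟩ := h
    rw [Finset.centerMass_eq_of_sum_1 _ _ hw1] at hcm
    have hex : ∃ i ∈ t, 0 < w i := by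
      by_contra hno
      push_neg at hno
      have : ∑ i ∈ t, w i = 0 :=
        Finset.sum_eq_zero fun i hi => le_antisymm (hno i hi) (hw0 i hi)
      rw [hw1] at this
      norm_num at this
    obtain ⟨i₀, hi₀t, hi₀⟩ := hex
    have hsplit : w i₀ • z i₀ + ∑ i ∈ t.erase i₀, w i • z i = 0 :=
      (Finset.add_sum_erase t (fun i => w i • z i) hi₀t).trans hcm
    have hyK : ∑ i ∈ t.erase i₀, w i • z i ∈ K := by
      apply Finset.sum_induction _ (· ∈ K)
      · intro x y hx hy
        exact hKadd x hx y hy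
      · exact h0K
      · intro i hi
        have hit := Finset.mem_of_mem_erase hi
        exact hKcone (w i) (hw0 i hit) (z i) (hzS i hit).1
    have hxK : w i₀ • z i₀ ∈ K := hKcone (w i₀) hi₀.le (z i₀) (hzS i₀ hi₀t).1
    have hneg : w i₀ • z i₀ ∈ -K := by
      rw [Set.mem_neg]
      have : -(w i₀ • z i₀) = ∑ i ∈ t.erase i₀, w i • z i := by
        rw [neg_eq_iff_add_eq_zero]
        exact hsplit
      rw [this]
      exact hyK
    have : w i₀ • z i₀ ∈ K ∩ (-K) := ⟨hxK, hneg⟩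
    rw [hKpointed] at this
    have hz0 : z i₀ = 0 := by
      rcases smul_eq_zero.1 this with h | h
      · exact absurd h hi₀.ne'
      · exact h
    have := (hzS i₀ hi₀t).2
    rw [mem_sphere_zero_iff_norm, hz0] at this
    norm_num at this
  -- C and E are disjoint
  have hdisj : Disjoint C E := by
    rw [Set.disjoint_left]
    intro x hxC hxE
    have := hEK x hxE (hCK hxC)
    rw [this] at hxC
    exact hC0 hxC
  -- separate
  obtain ⟨f, u, v, hfu, huv, hvf⟩ :=
    geometric_hahn_banach_compact_closed hCconvex hCcompact hEconvex hEclosed hdisj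
  have hv0 : v < 0 := by
    have := hvf 0 h0E
    rwa [map_zero] at this
  have hfE : ∀ b ∈ E, 0 ≤ f b := by
    intro b hb
    by_contra hfb
    push_neg at hfb
    set c : ℝ := 2 * v / f b with hc
    have hc0 : 0 < c := div_pos_of_neg_of_neg (by linarith) hfb
    have hcb : c • b ∈ E := by
      intro i hβi
      have := hb i hβi
      rw [dotProduct_smul, smul_eq_mul]
      exact mul_nonpos_of_nonneg_of_nonpos hc0.le this
    have hne : f b ≠ 0 := ne_of_lt hfb
    have := hvf _ hcb
    rw [f.map_smul, smul_eq_mul, hc, div_mul_cancel₀ _ hne] at this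
    linarith
  have hfC : ∀ x ∈ C, f x < 0 := fun x hx => (hfu x hx).trans (huv.trans hv0)
  -- γ
  set γ : Fin k → ℝ := fun i => f (fun j => if i = j then 1 else 0) with hγ
  have hγf : ∀ x, γ ⬝ᵥ x = f x := by
    intro x
    conv_rhs => rw [pi_eq_sum_univ x]
    rw [map_sum]
    rw [dotProduct]
    apply Finset.sum_congr rfl
    intro i _
    rw [f.map_smul, smul_eq_mul, mul_comm]
  -- S nonempty element use
  have hKu : ∀ u' ∈ K, u' ≠ 0 → γ ⬝ᵥ u' < 0 := by
    intro u' hu' hu'0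
    have hn : (0:ℝ) < ‖u'‖ := norm_pos_iff.2 hu'0
    have hsS : ‖u'‖⁻¹ • u' ∈ S := by
      constructor
      · exact hKcone _ (inv_nonneg.2 hn.le) _ hu'
      · rw [mem_sphere_zero_iff_norm, norm_smul, norm_inv, norm_norm]
        field_simp
    have hsC : ‖u'‖⁻¹ • u' ∈ C := subset_convexHull ℝ S hsS
    have hfs : f (‖u'‖⁻¹ • u') < 0 := hfC _ hsC
    have heq : ‖u'‖ • (‖u'‖⁻¹ • u') = u' := by
      rw [smul_smul]
      field_simp
      rw [one_smul]
    have : f u' = ‖u'‖ * f (‖u'‖⁻¹ • u') := by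
      conv_lhs => rw [← heq]
      rw [f.map_smul]
      rfl
    rw [hγf, this]
    exact mul_neg_of_pos_of_neg hn hfs
  refine ⟨γ, ?_, hKu, ?_⟩
  · -- γ ≠ 0
    intro hγ0
    obtain ⟨x₀, hx₀K, hx₀⟩ : ∃ x₀ ∈ K, x₀ ≠ 0 := by
      by_contra h
      push_neg at h
      apply hKne
      apply Set.Subset.antisymm
      · intro x hx
        exact h x hx
      · intro x hx
        rw [Set.mem_singleton_iff] at hx
        rw [hx]
        exact h0K
    have := hKu x₀ hx₀K hx₀
    rw [hγ0] at this
    simp [dotProduct] at this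
  · intro m hm
    rw [hγf]
    exact hfE m (hME hm)
end

section
/- Let K ⊆ ℝ^k be a nontrivial pointed closed convex cone, L ∈ ℝ^{k×n}, A ∈ ℝ^{m×n}, b ∈ ℝ^m, and 𝒜 = {x ∈ ℝ^n_+ : Ax = b}. If x̄ ∈ 𝒜 is an efficient solution to the problem of minimizing Lx over 𝒜 with respect to K, then x̄ is properly efficient in the sense of linear scalarization, i.e. there exists λ in the quasi-interior K*⁰ of the dual cone such that λᵀ(Lx̄) ≤ λᵀ(Lx) for all x ∈ 𝒜. -/
open Matrix Set

section conic
variable {E : Type*} [AddCommGroup E] [Module ℝ E] {ι : Type*} [Fintype ι]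

lemma conic_caratheodory (g : ι → E) :
    ∀ (N : ℕ) (c : ι → ℝ), {i | c i ≠ 0}.ncard ≤ N → (∀ i, 0 ≤ c i) →
    ∃ c' : ι → ℝ, (∀ i, 0 ≤ c' i) ∧ (∑ i, c' i • g i = ∑ i, c i • g i) ∧
      LinearIndependent ℝ (fun i : {i // c' i ≠ 0} => g i) := by
  classical
  intro N
  induction N with
  | zero =>
    intro c hcard hc
    have hemp : {i | c i ≠ 0} = ∅ :=
      Set.ncard_eq_zero (Set.toFinite _) |>.mp (Nat.le_zero.mp hcard)
    have hE : IsEmpty {i // c i ≠ 0} :=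
      ⟨fun j => Set.eq_empty_iff_forall_notMem.mp hemp j.1 j.2⟩
    exact ⟨c, hc, rfl, linearIndependent_empty_type⟩
  | succ N ih =>
    intro c hcard hc
    by_cases hli : LinearIndependent ℝ (fun i : {i // c i ≠ 0} => g i)
    · exact ⟨c, hc, rfl, hli⟩
    obtain ⟨d₀, hd₀sum, j₀, hj₀⟩ := Fintype.not_linearIndependent_iff.mp hli
    obtain ⟨d, hdsupp, hdsum, i₁, hi₁⟩ :
        ∃ d : ι → ℝ, (∀ i, c i = 0 → d i = 0) ∧ (∑ i, d i • g i = 0) ∧ ∃ i, 0 < d i := by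
      set d : ι → ℝ := fun i => if h : c i ≠ 0 then d₀ ⟨i, h⟩ else 0 with hd
      have hdsupp : ∀ i, c i = 0 → d i = 0 := fun i hi => by simp [hd, hi]
      have hdsum : ∑ i, d i • g i = 0 := by
        rw [← Finset.sum_filter_add_sum_filter_not Finset.univ (fun i => c i ≠ 0)
          (fun i => d i • g i)]
        have h2 : ∑ i ∈ Finset.univ.filter (fun i => ¬ c i ≠ 0), d i • g i = 0 :=
          Finset.sum_eq_zero fun i hi => by
            rw [hdsupp i (not_not.mp (Finset.mem_filter.mp hi).2), zero_smul]
        rw [h2, add_zero,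
          Finset.sum_subtype (p := fun i => c i ≠ 0) (Finset.univ.filter (fun i => c i ≠ 0)) (by simp)
            (fun i => d i • g i), ← hd₀sum]
        exact Finset.sum_congr rfl fun j _ => by
          have : d ↑j = d₀ j := by rw [hd]; simp only [dif_pos j.2]
          rw [this]
      have hdne : d ↑j₀ ≠ 0 := by rw [hd]; simpa only [dif_pos j₀.2] using hj₀
      by_cases hpos : ∃ i, 0 < d i
      · exact ⟨d, hdsupp, hdsum, hpos⟩
      · push_neg at hpos
        refine ⟨-d, fun i hi => by simp [hdsupp i hi], by simp [hdsum], ↑j₀, ?_⟩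
        have := hpos ↑j₀
        simp only [Pi.neg_apply]
        cases lt_or_eq_of_le this with
        | inl h => linarith
        | inr h => exact absurd h hdne
    set P := Finset.univ.filter (fun i => 0 < d i) with hP
    have hPne : P.Nonempty := ⟨i₁, by simp [hP, hi₁]⟩
    obtain ⟨i₀, hi₀P, hmin⟩ := Finset.exists_min_image P (fun i => c i / d i) hPne
    have hdi₀ : 0 < d i₀ := by simpa [hP] using hi₀P
    set t := c i₀ / d i₀ with ht
    have ht0 : 0 ≤ t := div_nonneg (hc i₀) hdi₀.le
    set c' : ι → ℝ := fun i => c i - t * d i with hc'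
    have hc'0 : ∀ i, 0 ≤ c' i := by
      intro i
      rcases le_or_gt (d i) 0 with h | h
      · have h2 : t * d i ≤ 0 := mul_nonpos_of_nonneg_of_nonpos ht0 h
        have := hc i
        simp only [hc']; linarith
      · have hiP : i ∈ P := by simp [hP, h]
        have h2 := hmin i hiP
        simp only [hc', sub_nonneg]
        calc t * d i ≤ (c i / d i) * d i := mul_le_mul_of_nonneg_right h2 h.le
          _ = c i := div_mul_cancel₀ _ h.ne'
    have hsum' : ∑ i, c' i • g i = ∑ i, c i • g i := by
      simp only [hc', sub_smul, Finset.sum_sub_distrib]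
      have h3 : ∑ i, (t * d i) • g i = t • ∑ i, d i • g i := by
        rw [Finset.smul_sum]
        exact Finset.sum_congr rfl fun i _ => (smul_smul t (d i) (g i)).symm
      rw [h3, hdsum, smul_zero, sub_zero]
    have hsubset : {i | c' i ≠ 0} ⊆ {i | c i ≠ 0} := by
      intro i hi
      intro h0
      exact hi (by simp [hc', hdsupp i h0, h0])
    have hmemc : c i₀ ≠ 0 := by
      intro h0
      rw [hdsupp i₀ h0] at hdi₀
      exact lt_irrefl 0 hdi₀
    have hnmem : i₀ ∉ {i | c' i ≠ 0} := by
      simp only [Set.mem_setOf_eq, not_not, hc', ht]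
      field_simp
      ring
    have hcard' : {i | c' i ≠ 0}.ncard ≤ N := by
      have hlt : {i | c' i ≠ 0}.ncard < {i | c i ≠ 0}.ncard :=
        Set.ncard_lt_ncard ((Set.ssubset_iff_of_subset hsubset).mpr ⟨i₀, hmemc, hnmem⟩)
          (Set.toFinite _)
      omega
    obtain ⟨c'', h1, h2, h3⟩ := ih c' hcard' hc'0
    exact ⟨c'', h1, h2.trans hsum', h3⟩

end conic

lemma isClosed_conicHull {E : Type*} [NormedAddCommGroup E] [NormedSpace ℝ E]
    [FiniteDimensional ℝ E] {ι : Type*} [Fintype ι] (g : ι → E) :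
    IsClosed {x : E | ∃ c : ι → ℝ, (∀ i, 0 ≤ c i) ∧ x = ∑ i, c i • g i} := by
  classical
  have main : {x : E | ∃ c : ι → ℝ, (∀ i, 0 ≤ c i) ∧ x = ∑ i, c i • g i} =
      ⋃ s ∈ {s : Finset ι | LinearIndependent ℝ (fun i : ↥s => g ↑i)},
        {x : E | ∃ c : ι → ℝ, (∀ i, 0 ≤ c i) ∧ (∀ i ∉ s, c i = 0) ∧ x = ∑ i, c i • g i} := by
    ext x
    simp only [Set.mem_setOf_eq, Set.mem_iUnion, exists_prop]
    constructor
    · rintro ⟨c, hc, rfl⟩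
      obtain ⟨c', hc', hsum, hli⟩ :=
        conic_caratheodory g ({i | c i ≠ 0}.ncard) c le_rfl hc
      refine ⟨Finset.univ.filter (fun i => c' i ≠ 0), ?_, c', hc',
        fun i hi => by simpa using hi, hsum.symm⟩
      rw [show (fun i : ↥(Finset.univ.filter fun i => c' i ≠ 0) => g ↑i) =
          (fun i : {i // c' i ≠ 0} => g ↑i) ∘
            (Equiv.subtypeEquivRight (fun i => by simp)) from
        funext fun i => by simp [Equiv.subtypeEquivRight]; rfl]
      exact hli.comp _ (Equiv.injective _)
    · rintro ⟨s, _, c, hc, _, rfl⟩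
      exact ⟨c, hc, rfl⟩
  rw [main]
  refine Set.Finite.isClosed_biUnion (Set.toFinite _) fun s hs => ?_
  set f : (↥s → ℝ) →ₗ[ℝ] E := ∑ j : ↥s, (LinearMap.proj j).smulRight (g ↑j) with hf
  have hfapp : ∀ c : ↥s → ℝ, f c = ∑ j : ↥s, c j • g ↑j := by
    intro c
    rw [hf]
    simp [LinearMap.sum_apply]
  have hker : LinearMap.ker f = ⊥ := by
    rw [LinearMap.ker_eq_bot']
    intro c hcf
    rw [hfapp] at hcf
    have := Fintype.linearIndependent_iff.mp hs c hcf
    funext j; exact this j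
  have hemb : Topology.IsClosedEmbedding f := LinearMap.isClosedEmbedding_of_injective hker
  have himg : {x : E | ∃ c : ι → ℝ, (∀ i, 0 ≤ c i) ∧ (∀ i ∉ s, c i = 0) ∧ x = ∑ i, c i • g i}
      = f '' {c : ↥s → ℝ | ∀ j, 0 ≤ c j} := by
    ext x
    simp only [Set.mem_setOf_eq, Set.mem_image]
    constructor
    · rintro ⟨c, hc, hsupp, rfl⟩
      refine ⟨fun j => c ↑j, fun j => hc ↑j, ?_⟩
      rw [hfapp, Finset.sum_coe_sort s (fun i => c i • g i)]
      exact Finset.sum_subset s.subset_univ (fun i _ hi => by rw [hsupp i hi, zero_smul])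
    · rintro ⟨c₀, hc₀, rfl⟩
      refine ⟨fun i => if h : i ∈ s then c₀ ⟨i, h⟩ else 0, fun i => ?_, fun i hi => dif_neg hi, ?_⟩
      · by_cases h : i ∈ s
        · dsimp only; rw [dif_pos h]; exact hc₀ _
        · dsimp only; rw [dif_neg h]
      · rw [hfapp]
        refine Eq.symm ?_
        calc ∑ i : ι, (fun i => if h : i ∈ s then c₀ ⟨i, h⟩ else 0) i • g i
            = ∑ i ∈ s, (if h : i ∈ s then c₀ ⟨i, h⟩ else 0) • g i :=
              (Finset.sum_subset s.subset_univ (fun i _ hi => by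
                dsimp only; rw [dif_neg hi, zero_smul])).symm
          _ = ∑ j : ↥s, (if h : (↑j : ι) ∈ s then c₀ ⟨↑j, h⟩ else 0) • g ↑j :=
              (Finset.sum_coe_sort s _).symm
          _ = ∑ j : ↥s, c₀ j • g ↑j := Finset.sum_congr rfl fun j _ => by rw [dif_pos j.2]
  rw [himg]
  refine hemb.isClosedMap _ ?_
  have : {c : ↥s → ℝ | ∀ j, 0 ≤ c j} = ⋂ j, {c : ↥s → ℝ | 0 ≤ c j} := by
    ext c; simp [Set.mem_iInter]
  rw [this]
  exact isClosed_iInter fun j => isClosed_le continuous_const (continuous_apply j)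

lemma dual_vec {k : ℕ} (f : (Fin k → ℝ) →ₗ[ℝ] ℝ) : ∃ l : Fin k → ℝ, ∀ x, f x = l ⬝ᵥ x := by
  refine ⟨fun i => f (Pi.single i 1), fun x => ?_⟩
  have hx : x = ∑ i, Pi.single i (x i) := by rw [Finset.univ_sum_single]
  conv_lhs => rw [hx]
  rw [map_sum, dotProduct]
  refine Finset.sum_congr rfl fun i _ => ?_
  have : Pi.single i (x i) = x i • (Pi.single i 1 : Fin k → ℝ) := by
    rw [← Pi.single_smul]; simp
  rw [this, _root_.map_smul, smul_eq_mul, mul_comm]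

lemma contdot_right {k : ℕ} (v : Fin k → ℝ) : Continuous fun l : Fin k → ℝ => l ⬝ᵥ v := by
  unfold dotProduct
  exact continuous_finset_sum _ fun i _ => (continuous_apply i).mul continuous_const

lemma contdot_left {k : ℕ} (v : Fin k → ℝ) : Continuous fun l : Fin k → ℝ => v ⬝ᵥ l := by
  unfold dotProduct
  exact continuous_finset_sum _ fun i _ => continuous_const.mul (continuous_apply i)

lemma cone_nonpos {k : ℕ} {S : Set (Fin k → ℝ)}
    (hS : ∀ (c : ℝ), 0 ≤ c → ∀ x ∈ S, c • x ∈ S) {l : Fin k → ℝ} {u : ℝ}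
    (h : ∀ a ∈ S, l ⬝ᵥ a < u) : ∀ a ∈ S, l ⬝ᵥ a ≤ 0 := by
  intro a ha
  by_contra hpos
  push_neg at hpos
  have hnum : (0:ℝ) < u + 1 + |u| := by
    have := neg_abs_le u; linarith [abs_nonneg u]
  have h2 := h (((u + 1 + |u|) / (l ⬝ᵥ a)) • a)
    (hS _ (div_nonneg hnum.le hpos.le) a ha)
  rw [dotProduct_smul, smul_eq_mul, div_mul_cancel₀ _ hpos.ne'] at h2
  linarith [le_abs_self u]

lemma sum_smul_mulVec {p q : ℕ} (M : Matrix (Fin p) (Fin q) ℝ) (y : Fin q → ℝ) :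
    ∑ j, y j • (M *ᵥ Pi.single j 1) = M *ᵥ y := by
  have h1 : ∀ j, y j • (M *ᵥ Pi.single j 1) = M *ᵥ Pi.single j (y j) := by
    intro j
    rw [← Matrix.mulVec_smul]
    congr 1
    rw [← Pi.single_smul, smul_eq_mul, mul_one]
  simp_rw [h1]
  calc ∑ j, M *ᵥ Pi.single j (y j) = ∑ j, (Matrix.mulVecLin M) (Pi.single j (y j)) := rfl
    _ = (Matrix.mulVecLin M) (∑ j, Pi.single j (y j)) := (map_sum _ _ _).symm
    _ = M *ᵥ y := by rw [Finset.univ_sum_single]; rfl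

theorem stmt1 (k n m : ℕ) (K : Set (Fin k → ℝ))
    (hKcone : ∀ (c : ℝ), 0 ≤ c → ∀ x ∈ K, c • x ∈ K)
    (hKclosed : IsClosed K) (hKconvex : Convex ℝ K)
    (hKpointed : K ∩ (-K) = {0})
    (hKne : K ≠ {0}) (hKuniv : K ≠ Set.univ)
    (L : Matrix (Fin k) (Fin n) ℝ) (A : Matrix (Fin m) (Fin n) ℝ) (b : Fin m → ℝ)
    (xbar : Fin n → ℝ)
    (hxbar : (∀ i, 0 ≤ xbar i) ∧ A *ᵥ xbar = b)
    (heff : ¬ ∃ x : Fin n → ℝ, ((∀ i, 0 ≤ x i) ∧ A *ᵥ x = b) ∧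
      L *ᵥ xbar - L *ᵥ x ∈ K ∧ L *ᵥ x ≠ L *ᵥ xbar) :
    ∃ l : Fin k → ℝ, (∀ u ∈ K, u ≠ 0 → 0 < l ⬝ᵥ u) ∧
      ∀ x : Fin n → ℝ, ((∀ i, 0 ≤ x i) ∧ A *ᵥ x = b) →
        l ⬝ᵥ (L *ᵥ xbar) ≤ l ⬝ᵥ (L *ᵥ x) := by
  classical
  push_neg at heff
  obtain ⟨hx0, hxA⟩ := hxbar
  have h0K : (0 : Fin k → ℝ) ∈ K := by
    have h : (0 : Fin k → ℝ) ∈ K ∩ (-K) := by rw [hKpointed]; exact rfl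
    exact h.1
  have hKpt : ∀ w : Fin k → ℝ, w ∈ K → -w ∈ K → w = 0 := by
    intro w hw hw'
    have : w ∈ K ∩ (-K) := ⟨hw, by simpa [Set.mem_neg] using hw'⟩
    rw [hKpointed] at this
    exact this
  -- Step 1 : a strictly positive functional e on K
  set D := {l : Fin k → ℝ | ∀ v ∈ K, 0 ≤ l ⬝ᵥ v} with hD
  have hDconv : Convex ℝ D := by
    intro l1 h1 l2 h2 a c ha hc hac
    intro v hv
    have e1 := h1 v hv
    have e2 := h2 v hv
    rw [add_dotProduct, smul_dotProduct, smul_dotProduct, smul_eq_mul, smul_eq_mul]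
    nlinarith
  have h0D : (0 : Fin k → ℝ) ∈ D := by
    intro v hv; rw [zero_dotProduct]
  have claimA : ∀ u : Fin k → ℝ, (∀ l ∈ D, 0 ≤ l ⬝ᵥ u) → u ∈ K := by
    intro u hu
    by_contra hnot
    obtain ⟨f, c, hfK, hcu⟩ := geometric_hahn_banach_closed_point hKconvex hKclosed hnot
    obtain ⟨lf, hlf⟩ := dual_vec (f : (Fin k → ℝ) →ₗ[ℝ] ℝ)
    have hfK' : ∀ a ∈ K, lf ⬝ᵥ a < c := fun a ha => by rw [← hlf]; exact hfK a ha
    have hle := cone_nonpos hKcone hfK'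
    have hneg : (-lf) ∈ D := fun v hv => by
      rw [neg_dotProduct]; linarith [hle v hv]
    have h1 := hu (-lf) hneg
    have h2 : (0:ℝ) < c := by
      have := hfK' 0 h0K; rwa [dotProduct_zero] at this
    have h3 : c < lf ⬝ᵥ u := by rw [← hlf]; exact hcu
    rw [neg_dotProduct] at h1
    linarith
  have hspan : Submodule.span ℝ D = ⊤ := by
    by_contra hne
    obtain ⟨φ, hφ0, hφ⟩ := Submodule.exists_dual_map_eq_bot_of_lt_top
      (p := Submodule.span ℝ D) (lt_top_iff_ne_top.mpr hne) inferInstance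
    obtain ⟨lφ, hlφ⟩ := dual_vec φ
    have hzero : ∀ l ∈ D, l ⬝ᵥ lφ = 0 := by
      intro l hl
      have hmem : l ∈ Submodule.span ℝ D := Submodule.subset_span hl
      have : φ l = 0 := by
        have hin : φ l ∈ (Submodule.span ℝ D).map φ := Submodule.mem_map_of_mem hmem
        rw [hφ] at hin
        exact (Submodule.mem_bot ℝ).mp hin
      rw [hlφ] at this
      rw [dotProduct_comm]
      exact this
    have hK1 : lφ ∈ K := claimA lφ (fun l hl => by rw [hzero l hl])
    have hK2 : -lφ ∈ K := claimA (-lφ) (fun l hl => by rw [dotProduct_neg, hzero l hl, neg_zero])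
    have : lφ = 0 := hKpt lφ hK1 hK2
    apply hφ0
    apply LinearMap.ext
    intro x
    rw [hlφ, this, zero_dotProduct, LinearMap.zero_apply]
  have hDclosed : IsClosed D := by
    have hDeq : D = ⋂ v ∈ K, {l : Fin k → ℝ | 0 ≤ l ⬝ᵥ v} := by
      ext l; simp [hD]
    rw [hDeq]
    exact isClosed_biInter fun v hv => isClosed_le continuous_const (contdot_right v)
  have haff : affineSpan ℝ D = ⊤ := by
    rw [← AffineSubspace.coe_eq_univ_iff]
    have h2 : insert (0 : Fin k → ℝ) D = D := Set.insert_eq_self.mpr h0D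
    rw [← h2, affineSpan_insert_zero, hspan]
    rfl
  obtain ⟨e, he⟩ : (interior D).Nonempty := by
    rw [hDconv.interior_nonempty_iff_affineSpan_eq_top]
    exact haff
  have hestrict : ∀ v ∈ K, v ≠ 0 → 0 < e ⬝ᵥ v := by
    intro v hv hv0
    obtain ⟨ε, hε, hball⟩ := Metric.mem_nhds_iff.mp (mem_interior_iff_mem_nhds.mp he)
    have hvn : 0 < ‖v‖ := norm_pos_iff.mpr hv0
    have humem : e - (ε / (2 * ‖v‖)) • v ∈ D := by
      apply hball
      rw [Metric.mem_ball, dist_eq_norm]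
      rw [show e - (ε / (2 * ‖v‖)) • v - e = -((ε / (2 * ‖v‖)) • v) by abel]
      rw [norm_neg, norm_smul, Real.norm_eq_abs, abs_of_pos (by positivity)]
      rw [show ε / (2 * ‖v‖) * ‖v‖ = ε / 2 by field_simp]
      linarith
    have h2 := humem v hv
    rw [sub_dotProduct, smul_dotProduct, smul_eq_mul] at h2
    have hvv : 0 < v ⬝ᵥ v := by
      have hnn : 0 ≤ v ⬝ᵥ v := Finset.sum_nonneg fun i _ => mul_self_nonneg _
      rcases hnn.lt_or_eq with h | h
      · exact h
      · exact absurd (dotProduct_self_eq_zero.mp h.symm) hv0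
    nlinarith [div_pos hε (by positivity : (0:ℝ) < 2 * ‖v‖)]
  -- Step 2 : the polyhedral cone Q
  set g : (Fin n ⊕ Unit) → (Fin k → ℝ) × (Fin m → ℝ) :=
    Sum.elim (fun j => (-(L *ᵥ Pi.single j 1), A *ᵥ Pi.single j 1))
      (fun _ => (L *ᵥ xbar, -b)) with hg
  have hsum_eval : ∀ (y : Fin n → ℝ) (t : ℝ),
      ∑ i, (Sum.elim y (fun _ => t)) i • g i
        = (t • (L *ᵥ xbar) - L *ᵥ y, A *ᵥ y - t • b) := by
    intro y t
    rw [Fintype.sum_sum_type]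
    have h1 : ∑ j, (Sum.elim y (fun _ => t) : Fin n ⊕ Unit → ℝ) (Sum.inl j) • g (Sum.inl j)
        = ((-(L *ᵥ y) : Fin k → ℝ), (A *ᵥ y : Fin m → ℝ)) := by
      simp only [hg, Sum.elim_inl, Prod.smul_mk]
      rw [← prod_mk_sum]
      have hfst : ∑ j, y j • -(L *ᵥ Pi.single j 1) = -(L *ᵥ y) := by
        rw [show (fun j => y j • -(L *ᵥ Pi.single j 1)) = fun j => -(y j • (L *ᵥ Pi.single j 1))
          from funext fun j => smul_neg _ _]
        rw [Finset.sum_neg_distrib, sum_smul_mulVec]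
      rw [hfst, sum_smul_mulVec]
    have h2 : ∑ (z : Unit), (Sum.elim y (fun _ => t) : Fin n ⊕ Unit → ℝ) (Sum.inr z) • g (Sum.inr z)
        = ((t • (L *ᵥ xbar) : Fin k → ℝ), (-(t • b) : Fin m → ℝ)) := by
      simp only [hg, Sum.elim_inr, Prod.smul_mk]
      rw [Fintype.sum_unique, smul_neg]
    rw [h1, h2, Prod.mk_add_mk, Prod.mk.injEq]
    constructor
    · abel
    · abel
  set G := {z : (Fin k → ℝ) × (Fin m → ℝ) | ∃ c : (Fin n ⊕ Unit) → ℝ, (∀ i, 0 ≤ c i) ∧ z = ∑ i, c i • g i} with hG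
  have hGclosed : IsClosed G := isClosed_conicHull g
  set Q := {v : Fin k → ℝ | (v, (0 : Fin m → ℝ)) ∈ G} with hQ
  have hQclosed : IsClosed Q := hGclosed.preimage (continuous_id.prodMk continuous_const)
  have hQconvex : Convex ℝ Q := by
    intro v1 h1 v2 h2 a c ha hc hac
    obtain ⟨c1, hc1, hz1⟩ := h1
    obtain ⟨c2, hc2, hz2⟩ := h2
    refine ⟨fun i => a * c1 i + c * c2 i,
      fun i => add_nonneg (mul_nonneg ha (hc1 i)) (mul_nonneg hc (hc2 i)), ?_⟩
    have hmk : ((a • v1 + c • v2 : Fin k → ℝ), (0 : Fin m → ℝ))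
        = a • ((v1, (0 : Fin m → ℝ))) + c • ((v2, (0 : Fin m → ℝ))) := by
      rw [Prod.smul_mk, Prod.smul_mk, Prod.mk_add_mk, smul_zero, smul_zero, add_zero]
    rw [hmk, hz1, hz2, Finset.smul_sum, Finset.smul_sum, ← Finset.sum_add_distrib]
    exact Finset.sum_congr rfl fun i _ => by
      rw [add_smul, smul_smul, smul_smul]
  have hQcone : ∀ (t : ℝ), 0 ≤ t → ∀ v ∈ Q, t • v ∈ Q := by
    intro t ht v hv
    obtain ⟨c, hc, hz⟩ := hv
    refine ⟨fun i => t * c i, fun i => mul_nonneg ht (hc i), ?_⟩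
    have hmk : ((t • v : Fin k → ℝ), (0 : Fin m → ℝ)) = t • ((v, (0 : Fin m → ℝ))) := by
      rw [Prod.smul_mk, smul_zero]
    rw [hmk, hz, Finset.smul_sum]
    exact Finset.sum_congr rfl fun i _ => (smul_smul t (c i) (g i))
  have h0Q : (0 : Fin k → ℝ) ∈ Q := ⟨0, fun i => le_rfl, by simp⟩
  have hGmem : ∀ v ∈ Q, ∃ (y : Fin n → ℝ) (t : ℝ), (∀ i, 0 ≤ y i) ∧ 0 ≤ t ∧
      v = t • (L *ᵥ xbar) - L *ᵥ y ∧ A *ᵥ y = t • b := by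
    intro v hv
    obtain ⟨c, hc, hz⟩ := hv
    have hcel : c = Sum.elim (fun j => c (Sum.inl j)) (fun _ => c (Sum.inr ())) := by
      funext i
      cases i with
      | inl j => rfl
      | inr u => cases u; rfl
    rw [hcel, hsum_eval] at hz
    have h1 := congrArg Prod.fst hz
    have h2 := congrArg Prod.snd hz
    simp only at h1 h2
    exact ⟨fun j => c (Sum.inl j), c (Sum.inr ()), fun j => hc _, hc _, h1,
      (sub_eq_zero.mp h2.symm)⟩
  have hQK : ∀ v ∈ Q, v ∈ K → v = 0 := by
    intro v hv hvK
    obtain ⟨y, t, hy, ht, hveq, hAy⟩ := hGmem v hv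
    rcases ht.lt_or_eq with htpos | hteq
    · have hxfeas : (∀ i, 0 ≤ (t⁻¹ • y) i) ∧ A *ᵥ (t⁻¹ • y) = b := by
        constructor
        · intro i
          exact mul_nonneg (inv_nonneg.mpr htpos.le) (hy i)
        · rw [Matrix.mulVec_smul, hAy, smul_smul, inv_mul_cancel₀ htpos.ne', one_smul]
      have hKmem : L *ᵥ xbar - L *ᵥ (t⁻¹ • y) ∈ K := by
        have heq2 : L *ᵥ xbar - L *ᵥ (t⁻¹ • y) = t⁻¹ • v := by
          rw [Matrix.mulVec_smul, hveq, smul_sub, smul_smul,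
            inv_mul_cancel₀ htpos.ne', one_smul]
        rw [heq2]
        exact hKcone _ (inv_nonneg.mpr htpos.le) v hvK
      have hLeq := heff _ hxfeas hKmem
      have hy' : y = t • (t⁻¹ • y) := by
        rw [smul_smul, mul_inv_cancel₀ htpos.ne', one_smul]
      rw [hveq, hy', Matrix.mulVec_smul, hLeq, sub_self]
    · have ht0 : t = 0 := hteq.symm
      have hAy0 : A *ᵥ y = 0 := by rw [hAy, ht0, zero_smul]
      have hveq' : v = -(L *ᵥ y) := by rw [hveq, ht0, zero_smul, zero_sub]
      have hxfeas : (∀ i, 0 ≤ (xbar + y) i) ∧ A *ᵥ (xbar + y) = b := by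
        constructor
        · intro i; exact add_nonneg (hx0 i) (hy i)
        · rw [Matrix.mulVec_add, hxA, hAy0, add_zero]
      have hKmem : L *ᵥ xbar - L *ᵥ (xbar + y) ∈ K := by
        rw [Matrix.mulVec_add,
          show L *ᵥ xbar - (L *ᵥ xbar + L *ᵥ y) = -(L *ᵥ y) by abel, ← hveq']
        exact hvK
      have hLeq := heff _ hxfeas hKmem
      rw [Matrix.mulVec_add] at hLeq
      have hLy0 : L *ᵥ y = 0 := by
        have := congrArg (fun z => z - L *ᵥ xbar) hLeq
        simpa using this
      rw [hveq', hLy0, neg_zero]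
  have hfeas : ∀ x : Fin n → ℝ, ((∀ i, 0 ≤ x i) ∧ A *ᵥ x = b) → L *ᵥ xbar - L *ᵥ x ∈ Q := by
    intro x hx
    refine ⟨Sum.elim x (fun _ => 1), fun i => ?_, ?_⟩
    · cases i with
      | inl j => exact hx.1 j
      | inr u => exact zero_le_one
    · rw [hsum_eval, one_smul, one_smul, hx.2, sub_self]
  -- Step 3 : compact base B of K
  set B := {w : Fin k → ℝ | w ∈ K ∧ e ⬝ᵥ w = 1} with hB
  have hBconv : Convex ℝ B := by
    intro w1 h1 w2 h2 a c ha hc hac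
    refine ⟨hKconvex h1.1 h2.1 ha hc hac, ?_⟩
    rw [dotProduct_add, dotProduct_smul, dotProduct_smul, h1.2, h2.2]
    simpa using hac
  have hBclosed : IsClosed B :=
    hKclosed.inter (isClosed_eq (contdot_left e) continuous_const)
  have hBbdd : Bornology.IsBounded B := by
    rw [isBounded_iff_forall_norm_le]
    by_contra hub
    push_neg at hub
    have hseq : ∀ nn : ℕ, ∃ x, x ∈ B ∧ ((nn:ℝ) + 1) ≤ ‖x‖ := by
      intro nn
      obtain ⟨x, hxB, hxn⟩ := hub ((nn:ℝ) + 1)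
      exact ⟨x, hxB, hxn.le⟩
    choose w hwB hwn using hseq
    have hwpos : ∀ nn, 0 < ‖w nn‖ := fun nn => lt_of_lt_of_le (by positivity) (hwn nn)
    have hd1 : ∀ nn, ‖w nn‖⁻¹ • w nn ∈ Metric.sphere (0 : Fin k → ℝ) 1 := by
      intro nn
      rw [mem_sphere_zero_iff_norm, norm_smul, norm_inv, norm_norm]
      exact inv_mul_cancel₀ (hwpos nn).ne'
    obtain ⟨dlim, hdmem, φ, hφmono, hconv⟩ :=
      (isCompact_sphere (0 : Fin k → ℝ) 1).tendsto_subseq hd1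
    have hdK : ∀ nn, ‖w nn‖⁻¹ • w nn ∈ K :=
      fun nn => hKcone _ (inv_nonneg.mpr (hwpos nn).le) _ (hwB nn).1
    have hdlimK : dlim ∈ K :=
      hKclosed.mem_of_tendsto hconv (Filter.Eventually.of_forall fun nn => hdK _)
    have hlim1 : Filter.Tendsto (fun nn => e ⬝ᵥ (‖w (φ nn)‖⁻¹ • w (φ nn)))
        Filter.atTop (nhds (e ⬝ᵥ dlim)) :=
      ((contdot_left e).tendsto dlim).comp hconv
    have hval : ∀ nn, e ⬝ᵥ (‖w nn‖⁻¹ • w nn) = ‖w nn‖⁻¹ := by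
      intro nn
      rw [dotProduct_smul, (hwB nn).2, smul_eq_mul, mul_one]
    have hlim2 : Filter.Tendsto (fun nn => e ⬝ᵥ (‖w (φ nn)‖⁻¹ • w (φ nn)))
        Filter.atTop (nhds 0) := by
      simp_rw [hval]
      apply tendsto_of_tendsto_of_tendsto_of_le_of_le (g := fun _ => (0:ℝ))
        (h := fun nn : ℕ => 1 / ((nn:ℝ) + 1)) tendsto_const_nhds
        tendsto_one_div_add_atTop_nhds_zero_nat
        (fun nn => inv_nonneg.mpr (hwpos _).le) (fun nn => ?_)
      dsimp only
      rw [one_div]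
      apply inv_anti₀ (by positivity)
      calc ((nn:ℝ) + 1) ≤ (φ nn : ℝ) + 1 := by
            have hle := hφmono.le_apply (x := nn)
            have : (nn : ℝ) ≤ (φ nn : ℝ) := by exact_mod_cast hle
            linarith
        _ ≤ ‖w (φ nn)‖ := hwn _
    have hedlim : e ⬝ᵥ dlim = 0 := tendsto_nhds_unique hlim1 hlim2
    have hdne : dlim ≠ 0 := by
      intro h0
      rw [h0] at hdmem
      simp at hdmem
    exact absurd hedlim (hestrict dlim hdlimK hdne).ne'
  have hBcompact : IsCompact B := Metric.isCompact_of_isClosed_isBounded hBclosed hBbdd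
  have hdisj : Disjoint Q B := by
    rw [Set.disjoint_left]
    intro v hvQ hvB
    have h0v := hQK v hvQ hvB.1
    have := hvB.2
    rw [h0v, dotProduct_zero] at this
    exact one_ne_zero this.symm
  obtain ⟨f, u, v', hfQ, huv, hfB⟩ :=
    geometric_hahn_banach_closed_compact hQconvex hQclosed hBconv hBcompact hdisj
  obtain ⟨l, hl0⟩ := dual_vec (f : (Fin k → ℝ) →ₗ[ℝ] ℝ)
  have hl : ∀ x, f x = l ⬝ᵥ x := fun x => hl0 x
  have hu0 : (0:ℝ) < u := by
    have := hfQ 0 h0Q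
    rw [hl, dotProduct_zero] at this
    exact this
  have hlQ : ∀ q ∈ Q, l ⬝ᵥ q ≤ 0 :=
    cone_nonpos hQcone (fun a ha => by rw [← hl]; exact hfQ a ha)
  refine ⟨l, ?_, ?_⟩
  · intro v hv hv0
    have heV := hestrict v hv hv0
    have hmem : (e ⬝ᵥ v)⁻¹ • v ∈ B :=
      ⟨hKcone _ (inv_nonneg.mpr heV.le) v hv, by
        rw [dotProduct_smul, smul_eq_mul, inv_mul_cancel₀ heV.ne']⟩
    have hp := hfB _ hmem
    rw [hl, dotProduct_smul, smul_eq_mul] at hp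
    have hpos : 0 < (e ⬝ᵥ v)⁻¹ * (l ⬝ᵥ v) := by linarith
    nlinarith [inv_pos.mpr heV]
  · intro x hx
    have := hlQ _ (hfeas x hx)
    rw [dotProduct_sub] at this
    linarith
end

section
/- Let K ⊆ ℝ^k be a nontrivial pointed closed convex cone, L ∈ ℝ^{k×n}, A ∈ ℝ^{m×n}, and U ∈ ℝ^{k×m}. Then (L − UA)(ℝ^n_+) ∩ (−K) = {0} if and only if there exists λ ∈ K*⁰ such that (L − UA)ᵀλ ∈ ℝ^n_+. -/
open Matrix Set Finset

lemma cone_carath {ι E : Type*} [DecidableEq ι] [AddCommGroup E] [Module ℝ E] (v : ι → E)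
    (s : Finset ι) : ∀ (x : ι → ℝ), (∀ i ∈ s, 0 ≤ x i) →
    ∃ t, t ⊆ s ∧ LinearIndependent ℝ (fun i : t => v i) ∧
      ∃ y : ι → ℝ, (∀ i, 0 ≤ y i) ∧ ∑ i ∈ t, y i • v i = ∑ i ∈ s, x i • v i := by
  induction s using Finset.strongInductionOn with
  | _ s ih =>
    intro x hx
    by_cases hli : LinearIndependent ℝ (fun i : s => v i)
    · refine ⟨s, subset_rfl, hli, fun i => if i ∈ s then x i else 0, fun i => ?_, ?_⟩
      · dsimp only; split
        · exact hx _ ‹_›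
        · exact le_rfl
      · exact Finset.sum_congr rfl (fun i hi => by simp only [if_pos hi])
    · obtain ⟨g, hgsum, j, hgj⟩ := Fintype.not_linearIndependent_iff.1 hli
      have key : ∀ g : s → ℝ, (∑ i : s, g i • v i = 0) → (∃ i, 0 < g i) →
          ∃ t, t ⊆ s ∧ LinearIndependent ℝ (fun i : t => v i) ∧
            ∃ y : ι → ℝ, (∀ i, 0 ≤ y i) ∧ ∑ i ∈ t, y i • v i = ∑ i ∈ s, x i • v i := by
        rintro g hgsum ⟨j0, hj0⟩
        classical
        have hne : (Finset.univ.filter fun i : s => 0 < g i).Nonempty :=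
          ⟨j0, by simp [hj0]⟩
        obtain ⟨i0, hi0mem, hi0min⟩ := Finset.exists_min_image _ (fun i : {a // a ∈ s} => x (i : ι) / g i) hne
        rw [Finset.mem_filter] at hi0mem
        have hgi0 : 0 < g i0 := hi0mem.2
        set t0 : ℝ := x i0 / g i0 with ht0
        have ht0nn : 0 ≤ t0 := div_nonneg (hx _ i0.2) hgi0.le
        set x' : ι → ℝ := fun i => if h : i ∈ s then x i - t0 * g ⟨i, h⟩ else 0 with hx'
        have hx'nn : ∀ i ∈ s, 0 ≤ x' i := by
          intro i hi
          simp only [hx', dif_pos hi]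
          rcases le_or_gt (g ⟨i, hi⟩) 0 with hg | hg
          · have h1 : t0 * g ⟨i, hi⟩ ≤ 0 := mul_nonpos_of_nonneg_of_nonpos ht0nn hg
            linarith [hx i hi]
          · have hmin := hi0min ⟨i, hi⟩ (by simp [hg])
            have := (le_div_iff₀ hg).1 hmin
            linarith
        have hx'i0 : x' (i0 : ι) = 0 := by
          simp only [hx', dif_pos i0.2]
          rw [ht0, div_mul_cancel₀ _ hgi0.ne']
          · simp
        have hsum' : ∑ i ∈ s, x' i • v i = ∑ i ∈ s, x i • v i := by
          rw [← Finset.sum_attach s (fun i => x' i • v i),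
              ← Finset.sum_attach s (fun i => x i • v i)]
          have : ∀ i : s, x' (i : ι) • v i = x (i : ι) • v i - (t0 * g i) • v i := by
            intro i
            simp only [hx', dif_pos i.2, Subtype.coe_eta, sub_smul]
          simp only [Finset.univ_eq_attach] at hgsum
          rw [Finset.sum_congr rfl (fun i _ => this i), Finset.sum_sub_distrib]
          have h2 : ∑ i ∈ s.attach, (t0 * g i) • v (i : ι) = 0 := by
            rw [show (fun i : s => (t0 * g i) • v (i : ι)) = fun i : s => t0 • (g i • v (i : ι))
                by funext i; rw [smul_smul], ← Finset.smul_sum, hgsum, smul_zero]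
          rw [h2, sub_zero]
        have herase : ∑ i ∈ s.erase (i0 : ι), x' i • v i = ∑ i ∈ s, x' i • v i :=
          Finset.sum_erase _ (by rw [hx'i0, zero_smul])
        obtain ⟨t, hts, hli', y, hy, hysum⟩ :=
          ih (s.erase (i0 : ι)) (Finset.erase_ssubset i0.2) x'
            (fun i hi => hx'nn i (Finset.erase_subset _ _ hi))
        exact ⟨t, hts.trans (Finset.erase_subset _ _), hli', y, hy, by
          rw [hysum, herase, hsum']⟩
      rcases (Ne.lt_or_gt hgj) with h | h
      · exact key (-g) (by simpa using hgsum) ⟨j, by simpa using h⟩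
      · exact key g hgsum ⟨j, h⟩

lemma cone_isClosed {n k : ℕ} (v : Fin n → (Fin k → ℝ)) :
    IsClosed {w : Fin k → ℝ | ∃ x : Fin n → ℝ, (∀ i, 0 ≤ x i) ∧ ∑ i, x i • v i = w} := by
  classical
  have main : {w : Fin k → ℝ | ∃ x : Fin n → ℝ, (∀ i, 0 ≤ x i) ∧ ∑ i, x i • v i = w} =
      ⋃ t : {t : Finset (Fin n) // LinearIndependent ℝ (fun i : t => v i)},
        (fun y : ((t : Finset (Fin n)) : Type) → ℝ => ∑ i, y i • v i) ''
          {y | ∀ i, 0 ≤ y i} := by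
    ext w
    constructor
    · rintro ⟨x, hx, rfl⟩
      obtain ⟨t, -, hli, y, hy, hysum⟩ :=
        cone_carath v Finset.univ x (fun i _ => hx i)
      refine Set.mem_iUnion.2 ⟨⟨t, hli⟩, ⟨fun i => y i, fun i => hy i, ?_⟩⟩
      simp only
      rw [← hysum, Finset.univ_eq_attach, Finset.sum_attach t (fun i => y i • v i)]
    · intro hw
      obtain ⟨t, y, hy, rfl⟩ := Set.mem_iUnion.1 hw
      refine ⟨fun i => if h : i ∈ (t : Finset (Fin n)) then y ⟨i, h⟩ else 0, ?_, ?_⟩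
      · intro i; dsimp only; split
        · exact hy _
        · exact le_rfl
      · rw [← Finset.sum_subset (Finset.subset_univ (t : Finset (Fin n)))
            (fun i _ hi => by simp only [dif_neg hi, zero_smul])]
        rw [← Finset.sum_attach (t : Finset (Fin n))
            (fun i => (if h : i ∈ (t : Finset (Fin n)) then y ⟨i, h⟩ else 0) • v i)]
        rw [Finset.univ_eq_attach]
        exact Finset.sum_congr rfl fun i _ => by simp only [dif_pos i.2, Subtype.coe_eta]
  rw [main]
  refine isClosed_iUnion_of_finite fun t => ?_
  have hinj : LinearMap.ker
      ((Fintype.linearCombination ℝ (fun i : (t : Finset (Fin n)) => v i))) = ⊥ := by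
    rw [LinearMap.ker_eq_bot']
    intro g hg
    have := Fintype.linearIndependent_iff.1 t.2 g (by simpa [Fintype.linearCombination] using hg)
    funext i; exact this i
  have hce := LinearMap.isClosedEmbedding_of_injective hinj
  have : (fun y : ((t : Finset (Fin n)) : Type) → ℝ => ∑ i, y i • v i) =
      (Fintype.linearCombination ℝ (fun i : (t : Finset (Fin n)) => v i)) := by
    funext y; simp [Fintype.linearCombination]
  rw [this]
  refine hce.isClosedMap _ ?_
  have : {y : ((t : Finset (Fin n)) : Type) → ℝ | ∀ i, 0 ≤ y i} =
      Set.pi Set.univ (fun _ => Set.Ici (0 : ℝ)) := by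
    ext y
    simp only [Set.mem_setOf_eq, Set.mem_pi, Set.mem_univ, Set.mem_Ici, forall_true_left]
  rw [this]
  exact isClosed_set_pi fun _ _ => isClosed_Ici

lemma pad_sum {α : Type*} {M : Type*} [AddCommMonoid M] (t : Finset α)
    (N : ℕ) (hc : t.card ≤ N) (F : α → M) :
    ∑ i : Fin N, (if h : (i : ℕ) < t.card then F (t.equivFin.symm ⟨(i : ℕ), h⟩ : α) else 0)
      = ∑ y ∈ t, F y := by
  classical
  set G : ℕ → M := fun i => if h : i < t.card then F (t.equivFin.symm ⟨i, h⟩) else 0 with hG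
  have h1 : ∑ i : Fin N, G (i : ℕ) = ∑ i ∈ Finset.range N, G i :=
    Fin.sum_univ_eq_sum_range G N
  have h2 : ∑ i ∈ Finset.range t.card, G i = ∑ i ∈ Finset.range N, G i :=
    Finset.sum_subset (Finset.range_subset_range.2 hc)
      (fun i _ hi => dif_neg (by simpa using hi))
  have h3 : ∑ i ∈ Finset.range t.card, G i = ∑ i : Fin t.card, G (i : ℕ) :=
    (Fin.sum_univ_eq_sum_range G t.card).symm
  have h4 : ∀ i : Fin t.card, G (i : ℕ) = F (t.equivFin.symm i) := by
    intro i
    rw [hG]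
    simp only [dif_pos i.isLt, Fin.eta]
  calc ∑ i : Fin N, G (i : ℕ) = ∑ i ∈ Finset.range N, G i := h1
    _ = ∑ i ∈ Finset.range t.card, G i := h2.symm
    _ = ∑ i : Fin t.card, G (i : ℕ) := h3
    _ = ∑ i : Fin t.card, F (t.equivFin.symm i) := Finset.sum_congr rfl fun i _ => h4 i
    _ = ∑ j : {x // x ∈ t}, F (j : α) := Equiv.sum_comp t.equivFin.symm (fun j => F (j : α))
    _ = ∑ y ∈ t, F y := Finset.sum_coe_sort t F

lemma isCompact_convexHull_fd {k : ℕ} {S : Set (Fin k → ℝ)} (hS : IsCompact S) :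
    IsCompact (convexHull ℝ S) := by
  rcases S.eq_empty_or_nonempty with rfl | ⟨s₀, hs₀⟩
  · rw [convexHull_empty]; exact isCompact_empty
  classical
  set N := k + 1 with hN
  set φ : (Fin N → ℝ) × (Fin N → (Fin k → ℝ)) → (Fin k → ℝ) :=
    fun p => ∑ i, p.1 i • p.2 i with hφ
  set D : Set ((Fin N → ℝ) × (Fin N → (Fin k → ℝ))) :=
    (stdSimplex ℝ (Fin N)) ×ˢ (Set.pi Set.univ fun _ => S) with hD
  have hDc : IsCompact D := (isCompact_stdSimplex _ _).prod (isCompact_univ_pi fun _ => hS)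
  have hφc : Continuous φ := by
    refine continuous_finset_sum _ fun i _ => ?_
    exact ((continuous_apply i).comp continuous_fst).smul
      ((continuous_apply i).comp continuous_snd)
  have himg : convexHull ℝ S = φ '' D := by
    apply Set.Subset.antisymm
    · intro x hx
      rw [convexHull_eq_union] at hx
      simp only [Set.mem_iUnion] at hx
      obtain ⟨t, hts, hai, hx⟩ := hx
      have hcard : t.card ≤ N := by
        have h1 := hai.card_le_finrank_succ
        rw [Fintype.card_coe] at h1
        have h3 := Submodule.finrank_le (vectorSpan ℝ (Set.range ((↑) : t → (Fin k → ℝ))))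
        have h2 : Module.finrank ℝ (Fin k → ℝ) = k := by
          rw [Module.finrank_pi]; simp
        omega
      rw [Finset.convexHull_eq] at hx
      obtain ⟨w, hw0, hw1, hcm⟩ := hx
      rw [t.centerMass_eq_of_sum_1 _ hw1] at hcm
      set e := t.equivFin with he
      set w' : Fin N → ℝ := fun i =>
        if h : (i : ℕ) < t.card then w (e.symm ⟨(i : ℕ), h⟩ : (Fin k → ℝ)) else 0 with hw'
      set z : Fin N → (Fin k → ℝ) := fun i =>
        if h : (i : ℕ) < t.card then ((e.symm ⟨(i : ℕ), h⟩ : {x // x ∈ t}) : (Fin k → ℝ))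
        else s₀ with hz
      refine ⟨⟨w', z⟩, ⟨⟨?_, ?_⟩, ?_⟩, ?_⟩
      · intro i
        rw [hw']; dsimp only; split
        · exact hw0 _ (Finset.coe_mem _)
        · exact le_rfl
      · rw [hw']
        have := pad_sum t N hcard w
        rw [← hw1]
        exact this
      · intro i _
        rw [hz]; dsimp only; split
        · exact hts (Finset.coe_mem _)
        · exact hs₀
      · rw [hφ]; dsimp only
        have hpt : ∀ i : Fin N, w' i • z i =
            (if h : (i : ℕ) < t.card then
              (fun y => w y • y) ((e.symm ⟨(i : ℕ), h⟩ : {x // x ∈ t}) : (Fin k → ℝ)) else 0) := by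
          intro i
          rw [hw', hz]; dsimp only; split
          · rfl
          · rw [zero_smul]
        rw [Finset.sum_congr rfl fun i _ => hpt i, pad_sum t N hcard (fun y => w y • y), ← hcm]
        exact Finset.sum_congr rfl fun y _ => by rw [id]
    · rintro _ ⟨⟨w, z⟩, ⟨⟨hw0, hw1⟩, hz⟩, rfl⟩
      rw [hφ]; dsimp only
      have : ∀ i : Fin N, z i ∈ convexHull ℝ S := fun i =>
        subset_convexHull ℝ S (hz i (Set.mem_univ i))
      exact (convex_convexHull ℝ S).sum_mem (fun i _ => hw0 i) hw1 (fun i _ => this i)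
  rw [himg]
  exact hDc.image hφc

theorem stmt2 (k n m : ℕ) (K : Set (Fin k → ℝ))
    (hKcone : ∀ (c : ℝ), 0 ≤ c → ∀ x ∈ K, c • x ∈ K)
    (hKclosed : IsClosed K) (hKconvex : Convex ℝ K)
    (hKpointed : K ∩ (-K) = {0})
    (hKne : K ≠ {0}) (hKuniv : K ≠ Set.univ)
    (L : Matrix (Fin k) (Fin n) ℝ) (A : Matrix (Fin m) (Fin n) ℝ)
    (U : Matrix (Fin k) (Fin m) ℝ) :
    ({w : Fin k → ℝ | ∃ x : Fin n → ℝ, (∀ i, 0 ≤ x i) ∧ (L - U * A) *ᵥ x = w} ∩ (-K) = {0})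
    ↔ ∃ l : Fin k → ℝ, (∀ u ∈ K, u ≠ 0 → 0 < l ⬝ᵥ u) ∧
        ∀ i, 0 ≤ ((L - U * A)ᵀ *ᵥ l) i := by
  classical
  set B : Matrix (Fin k) (Fin n) ℝ := L - U * A with hB
  set v : Fin n → (Fin k → ℝ) := fun i j => B j i with hv
  have hBv : ∀ x : Fin n → ℝ, B *ᵥ x = ∑ i, x i • v i := by
    intro x; funext j
    rw [Matrix.mulVec, dotProduct, Finset.sum_apply]
    exact Finset.sum_congr rfl fun i _ => by rw [hv, Pi.smul_apply, smul_eq_mul, mul_comm]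
  set C : Set (Fin k → ℝ) := {w | ∃ x : Fin n → ℝ, (∀ i, 0 ≤ x i) ∧ B *ᵥ x = w} with hC
  have h0K : (0 : Fin k → ℝ) ∈ K := by
    have h1 : (0 : Fin k → ℝ) ∈ ({0} : Set (Fin k → ℝ)) := rfl
    rw [← hKpointed] at h1
    exact h1.1
  have hCzero : (0 : Fin k → ℝ) ∈ C := ⟨0, fun i => le_rfl, by rw [Matrix.mulVec_zero]⟩
  constructor
  · -- hard direction
    intro h
    have hCeq : C = {w : Fin k → ℝ | ∃ x : Fin n → ℝ, (∀ i, 0 ≤ x i) ∧ ∑ i, x i • v i = w} := by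
      rw [hC]; ext w; simp_rw [hBv]
    have hCclosed : IsClosed C := by rw [hCeq]; exact cone_isClosed v
    have hCconvex : Convex ℝ C := by
      rintro w1 ⟨x1, hx1, rfl⟩ w2 ⟨x2, hx2, rfl⟩ a b ha hb hab
      exact ⟨a • x1 + b • x2,
        fun i => add_nonneg (mul_nonneg ha (hx1 i)) (mul_nonneg hb (hx2 i)),
        by rw [Matrix.mulVec_add, Matrix.mulVec_smul, Matrix.mulVec_smul]⟩
    have hCsmul : ∀ (c : ℝ), 0 ≤ c → ∀ w ∈ C, c • w ∈ C := by
      rintro c hc w ⟨x, hx, rfl⟩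
      exact ⟨c • x, fun i => mul_nonneg hc (hx i), by rw [Matrix.mulVec_smul]⟩
    have hKadd : ∀ u ∈ K, ∀ w ∈ K, u + w ∈ K := by
      intro u hu w hw
      have h1 : (1/2 : ℝ) • u + (1/2 : ℝ) • w ∈ K :=
        hKconvex hu hw (by norm_num) (by norm_num) (by norm_num)
      have h2 := hKcone 2 (by norm_num) _ h1
      rw [smul_add, smul_smul, smul_smul] at h2
      norm_num at h2
      exact h2
    have hKsum : ∀ {ι' : Type} (t : Finset ι') (f : ι' → (Fin k → ℝ)),
        (∀ i ∈ t, f i ∈ K) → ∑ i ∈ t, f i ∈ K := by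
      intro ι' t f hf
      induction t using Finset.induction_on with
      | empty => simpa using h0K
      | insert _ _ hnotmem ih =>
        rw [Finset.sum_insert hnotmem]
        exact hKadd _ (hf _ (Finset.mem_insert_self _ _)) _
          (ih fun i hi => hf i (Finset.mem_insert_of_mem hi))
    set S : Set (Fin k → ℝ) := K ∩ Metric.sphere 0 1 with hS
    have hScompact : IsCompact S :=
      Metric.isCompact_of_isClosed_isBounded (hKclosed.inter Metric.isClosed_sphere)
        (Metric.isBounded_sphere.subset Set.inter_subset_right)
    set T : Set (Fin k → ℝ) := convexHull ℝ S with hT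
    have hTK : T ⊆ K := convexHull_min Set.inter_subset_left hKconvex
    have hTcompact : IsCompact T := isCompact_convexHull_fd hScompact
    have hTconvex : Convex ℝ T := convex_convexHull ℝ S
    have h0T : (0 : Fin k → ℝ) ∉ T := by
      intro h0
      rw [hT, _root_.convexHull_eq] at h0
      obtain ⟨ι', t, w, z, hw0, hw1, hzS, hcm⟩ := h0
      rw [Finset.centerMass_eq_of_sum_1 _ _ hw1] at hcm
      have hj : ∃ j ∈ t, 0 < w j := by
        by_contra hc
        push_neg at hc
        have : ∑ i ∈ t, w i = 0 :=
          Finset.sum_eq_zero fun i hi => le_antisymm (hc i hi) (hw0 i hi)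
        rw [hw1] at this
        norm_num at this
      obtain ⟨j, hjt, hjpos⟩ := hj
      have hmem : ∀ i ∈ t, w i • z i ∈ K := fun i hi => hKcone _ (hw0 i hi) _ (hzS i hi).1
      have hsplit : w j • z j + ∑ i ∈ t.erase j, w i • z i = 0 := by
        have h9 := Finset.add_sum_erase t (fun i => w i • z i) hjt
        rw [hcm] at h9
        exact h9
      have h1 : w j • z j ∈ K := hmem j hjt
      have h2 : w j • z j ∈ -K := by
        rw [Set.mem_neg]
        rw [show -(w j • z j) = ∑ i ∈ t.erase j, w i • z i from
          neg_eq_of_add_eq_zero_right hsplit]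
        exact hKsum _ _ fun i hi => hmem i (Finset.erase_subset _ _ hi)
      have h3 : w j • z j ∈ K ∩ (-K) := ⟨h1, h2⟩
      rw [hKpointed] at h3
      have hz0 : z j = 0 := by
        rcases smul_eq_zero.1 h3 with h4 | h4
        · exact absurd h4 hjpos.ne'
        · exact h4
      have hnorm : ‖z j‖ = 1 := mem_sphere_zero_iff_norm.1 (hzS j hjt).2
      rw [hz0] at hnorm
      norm_num at hnorm
    have hdisj : Disjoint (-T) C := by
      rw [Set.disjoint_left]
      intro a ha haC
      have haT : -a ∈ T := Set.mem_neg.1 ha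
      have haK : a ∈ -K := Set.mem_neg.2 (hTK haT)
      have : a ∈ C ∩ (-K) := ⟨haC, haK⟩
      rw [hC] at this
      rw [h] at this
      rw [this] at haT
      rw [neg_zero] at haT
      exact h0T haT
    obtain ⟨f, u, u', hfT, huu, hfC⟩ :=
      geometric_hahn_banach_compact_closed hTconvex.neg hTcompact.neg hCconvex hCclosed hdisj
    have hu'0 : u' < 0 := by
      have := hfC 0 hCzero
      rwa [map_zero] at this
    have hfC0 : ∀ b ∈ C, 0 ≤ f b := by
      intro b hb
      by_contra hlt
      push_neg at hlt
      have hfb : f b < 0 := hlt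
      have hdivpos : 0 < u' / f b := div_pos_of_neg_of_neg hu'0 hfb
      have hc0 : 0 < u' / f b + 1 := by linarith
      have hcb : (u' / f b + 1) • b ∈ C := hCsmul _ hc0.le b hb
      have h5 := hfC _ hcb
      rw [ContinuousLinearMap.map_smul, smul_eq_mul] at h5
      have : (u' / f b + 1) * f b = u' + f b := by
        rw [add_mul, one_mul, div_mul_cancel₀ _ hfb.ne]
      linarith
    have hfT0 : ∀ a ∈ T, 0 < f a := by
      intro a ha
      have h6 := hfT (-a) (Set.neg_mem_neg.2 ha)
      rw [map_neg] at h6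
      linarith
    set l : Fin k → ℝ := fun i => f (Pi.single i 1) with hl
    have hfl : ∀ x : Fin k → ℝ, f x = l ⬝ᵥ x := by
      intro x
      have hrep : ∑ i, x i • (Pi.single i 1 : Fin k → ℝ) = x := by
        funext j
        rw [Finset.sum_apply]
        simp [Pi.single_apply]
      calc f x = f (∑ i, x i • (Pi.single i 1 : Fin k → ℝ)) := by rw [hrep]
        _ = ∑ i, x i * f (Pi.single i 1) := by
            rw [map_sum]
            exact Finset.sum_congr rfl fun i _ => by
              rw [ContinuousLinearMap.map_smul, smul_eq_mul]
        _ = l ⬝ᵥ x := by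
            rw [dotProduct]
            exact Finset.sum_congr rfl fun i _ => by rw [hl, mul_comm]
    refine ⟨l, ?_, ?_⟩
    · intro w hw hwne
      have hnormpos : (0 : ℝ) < ‖w‖ := norm_pos_iff.2 hwne
      have h1 : ‖w‖⁻¹ • w ∈ S := by
        refine ⟨hKcone _ (inv_nonneg.2 (norm_nonneg w)) _ hw, ?_⟩
        rw [mem_sphere_zero_iff_norm, norm_smul, Real.norm_eq_abs,
          abs_of_nonneg (inv_nonneg.2 (norm_nonneg w)), inv_mul_cancel₀ hnormpos.ne']
      have h2 := hfT0 _ (subset_convexHull ℝ S h1)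
      rw [ContinuousLinearMap.map_smul, smul_eq_mul] at h2
      have h3 : 0 < f w := by
        by_contra h4
        push_neg at h4
        have : ‖w‖⁻¹ * f w ≤ 0 :=
          mul_nonpos_of_nonneg_of_nonpos (inv_nonneg.2 (norm_nonneg w)) h4
        linarith
      rwa [hfl] at h3
    · intro i
      have hvC : v i ∈ C := by
        refine ⟨(Pi.single i 1 : Fin n → ℝ), ?_, ?_⟩
        · intro i'
          by_cases hii : i' = i <;> simp [Pi.single_apply, hii]
        · funext j
          rw [Matrix.mulVec, dotProduct]
          simp [Pi.single_apply, hv]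
      have h7 := hfC0 _ hvC
      rw [hfl] at h7
      have h8 : (Bᵀ *ᵥ l) i = l ⬝ᵥ v i := by
        rw [Matrix.mulVec, dotProduct, dotProduct]
        exact Finset.sum_congr rfl fun j _ => by rw [Matrix.transpose_apply, mul_comm, hv]
      rw [← hB] at *
      rw [h8]
      exact h7
  · -- easy direction
    rintro ⟨l, hl1, hl2⟩
    apply Set.eq_singleton_iff_unique_mem.2
    constructor
    · exact ⟨hCzero, Set.mem_neg.2 (by rw [neg_zero]; exact h0K)⟩
    · rintro w ⟨⟨x, hx, rfl⟩, hwK⟩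
      have hge : 0 ≤ l ⬝ᵥ (B *ᵥ x) := by
        rw [dotProduct_mulVec, ← Matrix.mulVec_transpose]
        exact Finset.sum_nonneg fun i _ => mul_nonneg (hl2 i) (hx i)
      by_contra hne
      have hnegK : -(B *ᵥ x) ∈ K := Set.mem_neg.1 hwK
      have hpos := hl1 _ hnegK (neg_ne_zero.2 hne)
      rw [dotProduct_neg] at hpos
      linarith
end

section
/- Weak duality: with 𝒜 = {x ∈ ℝ^n_+ : Ax = b} and ℬ = {(λ, U, v) ∈ K*⁰ × ℝ^{k×m} × ℝ^k : λᵀv = 0 and (L − UA)ᵀλ ∈ ℝ^n_+}, there exist no x ∈ 𝒜 and (λ, U, v) ∈ ℬ such that Ub + v − Lx ∈ K \ {0}. -/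
open Matrix

theorem stmt3 (k n m : ℕ) (K : Set (Fin k → ℝ))
    (hKcone : ∀ (c : ℝ), 0 ≤ c → ∀ x ∈ K, c • x ∈ K)
    (hKclosed : IsClosed K) (hKconvex : Convex ℝ K)
    (hKpointed : K ∩ (-K) = {0})
    (hKne : K ≠ {0}) (hKuniv : K ≠ Set.univ)
    (L : Matrix (Fin k) (Fin n) ℝ) (A : Matrix (Fin m) (Fin n) ℝ) (b : Fin m → ℝ) :
    ¬ ∃ (x : Fin n → ℝ) (l : Fin k → ℝ) (U : Matrix (Fin k) (Fin m) ℝ) (v : Fin k → ℝ),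
      ((∀ i, 0 ≤ x i) ∧ A *ᵥ x = b) ∧
      ((∀ u ∈ K, u ≠ 0 → 0 < l ⬝ᵥ u) ∧ l ⬝ᵥ v = 0 ∧ ∀ i, 0 ≤ ((L - U * A)ᵀ *ᵥ l) i) ∧
      (U *ᵥ b + v - L *ᵥ x ∈ K ∧ U *ᵥ b + v - L *ᵥ x ≠ 0) := by
  rintro ⟨x, l, U, v, ⟨hx, hAx⟩, ⟨hl, hlv, hnn⟩, hwK, hwne⟩
  have hpos : 0 < l ⬝ᵥ (U *ᵥ b + v - L *ᵥ x) := hl _ hwK hwne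
  have hs : 0 ≤ ((L - U * A)ᵀ *ᵥ l) ⬝ᵥ x :=
    Finset.sum_nonneg fun i _ => mul_nonneg (hnn i) (hx i)
  have key : ((L - U * A)ᵀ *ᵥ l) ⬝ᵥ x = l ⬝ᵥ ((L - U * A) *ᵥ x) := by
    rw [mulVec_transpose, ← dotProduct_mulVec]
  rw [sub_mulVec, ← mulVec_mulVec, hAx] at key
  have hcalc : l ⬝ᵥ (U *ᵥ b + v - L *ᵥ x) = l ⬝ᵥ v - ((L - U * A)ᵀ *ᵥ l) ⬝ᵥ x := by
    rw [key]
    simp [dotProduct_sub, dotProduct_add]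
    ring
  rw [hcalc, hlv, zero_sub] at hpos
  linarith
end

section
/- Strong duality: if x̄ is an efficient solution to minimizing Lx over 𝒜 = {x ∈ ℝ^n_+ : Ax = b} with respect to K, then there exists (λ̄, Ū, v̄) ∈ ℬ = {(λ, U, v) ∈ K*⁰ × ℝ^{k×m} × ℝ^k : λᵀv = 0, (L − UA)ᵀλ ∈ ℝ^n_+} which is an efficient (maximal) solution of the dual problem of maximizing Ub + v over ℬ with respect to K, and Lx̄ = Ūb + v̄. -/
open Matrix Set

set_option linter.unusedSectionVars false

namespace SD

variable {ι κ : Type*} [Fintype ι] [Fintype κ]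

def coneImage (M : Matrix ι κ ℝ) : Set (ι → ℝ) :=
  {y | ∃ x : κ → ℝ, (∀ j, 0 ≤ x j) ∧ M *ᵥ x = y}

lemma exists_vec (f : (ι → ℝ) →L[ℝ] ℝ) : ∃ ν : ι → ℝ, ∀ x, f x = ν ⬝ᵥ x := by
  classical
  refine ⟨fun i => f (Pi.single i 1), fun x => ?_⟩
  have h1 : ∀ i : ι, Pi.single i (x i) = (x i) • (Pi.single i (1:ℝ) : ι → ℝ) := by
    intro i; ext j; by_cases h : j = i <;> simp [h, Pi.single_apply]
  calc f x = f (∑ i, Pi.single i (x i)) := by rw [Finset.univ_sum_single]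
    _ = ∑ i, f (Pi.single i (x i)) := map_sum f _ _
    _ = ∑ i, f (Pi.single i 1) * x i := by
        refine Finset.sum_congr rfl fun i _ => ?_
        rw [h1 i, _root_.map_smul, smul_eq_mul, mul_comm]
    _ = _ := rfl

/-- Separation of a point from a closed convex cone, in dot-product form. -/
lemma sep {C : Set (ι → ℝ)} (hclosed : IsClosed C) (hconv : Convex ℝ C)
    (hsmul : ∀ (t : ℝ), 0 ≤ t → ∀ x ∈ C, t • x ∈ C) (h0 : (0:ι → ℝ) ∈ C)
    {p : ι → ℝ} (hp : p ∉ C) :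
    ∃ ν : ι → ℝ, (∀ x ∈ C, 0 ≤ ν ⬝ᵥ x) ∧ ν ⬝ᵥ p < 0 := by
  obtain ⟨f, u, hfC, hfp⟩ := geometric_hahn_banach_closed_point hconv hclosed hp
  have hu : 0 < u := by simpa using hfC 0 h0
  have hle : ∀ x ∈ C, f x ≤ 0 := by
    intro x hx
    by_contra hpos
    push_neg at hpos
    have h2 : ((u+1)/f x) • x ∈ C := hsmul _ (le_of_lt (div_pos (by linarith) hpos)) x hx
    have := hfC _ h2
    rw [_root_.map_smul, smul_eq_mul, div_mul_cancel₀ _ (ne_of_gt hpos)] at this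
    linarith
  obtain ⟨ν₀, hν₀⟩ := exists_vec f
  refine ⟨-ν₀, fun x hx => ?_, ?_⟩
  · have := hle x hx; rw [hν₀ x] at this
    simpa using this
  · have := hfp; rw [hν₀ p] at this
    have : 0 < ν₀ ⬝ᵥ p := lt_trans hu this
    simpa using this


/-- restricted cone: support in S -/
def coneS (M : Matrix ι κ ℝ) (S : Finset κ) : Set (ι → ℝ) :=
  {y | ∃ x : κ → ℝ, (∀ j, 0 ≤ x j) ∧ (∀ j ∉ S, x j = 0) ∧ M *ᵥ x = y}

lemma coneS_mono (M : Matrix ι κ ℝ) {S T : Finset κ} (h : S ⊆ T) :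
    coneS M S ⊆ coneS M T := by
  rintro y ⟨x, hx0, hxs, hxy⟩
  exact ⟨x, hx0, fun j hj => hxs j (fun hc => hj (h hc)), hxy⟩

/-- The "positively independent" case: closedness via cone over a compact base. -/
lemma coneS_closed_of_indep [DecidableEq κ] (M : Matrix ι κ ℝ) (S : Finset κ)
    (hind : ∀ x : κ → ℝ, (∀ j, 0 ≤ x j) → (∀ j ∉ S, x j = 0) → M *ᵥ x = 0 → x = 0) :
    IsClosed (coneS M S) := by
  classical
  -- the base simplex
  set Δ : Set (κ → ℝ) := {x | (∀ j, 0 ≤ x j) ∧ (∀ j ∉ S, x j = 0) ∧ ∑ j, x j = 1} with hΔ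
  have hΔcompact : IsCompact Δ := by
    have hsub : Δ ⊆ Set.pi Set.univ (fun _ : κ => Set.Icc (0:ℝ) 1) := by
      rintro x ⟨h0, hs, h1⟩ j _
      refine ⟨h0 j, ?_⟩
      calc x j ≤ ∑ j', x j' := Finset.single_le_sum (fun j' _ => h0 j') (Finset.mem_univ j)
        _ = 1 := h1
    have hclosed : IsClosed Δ := by
      have hrw : Δ = (⋂ j, {x : κ → ℝ | 0 ≤ x j}) ∩
          ((⋂ j, ⋂ _ : j ∉ S, {x : κ → ℝ | x j = 0}) ∩ {x : κ → ℝ | ∑ j, x j = 1}) := by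
        ext x; simp [hΔ, Set.mem_iInter, and_assoc]
      rw [hrw]
      refine IsClosed.inter (isClosed_iInter fun j =>
        isClosed_le continuous_const (continuous_apply j)) (IsClosed.inter ?_ ?_)
      · exact isClosed_iInter fun j => isClosed_iInter fun _ =>
          isClosed_eq (continuous_apply j) continuous_const
      · exact isClosed_eq (continuous_finset_sum _ fun j _ => continuous_apply j) continuous_const
    exact (isCompact_univ_pi fun _ => isCompact_Icc).of_isClosed_subset hclosed hsub
  have hMcont : Continuous (fun x : κ → ℝ => M *ᵥ x) :=
    LinearMap.continuous_of_finiteDimensional (Matrix.mulVecLin M)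
  set D : Set (ι → ℝ) := (fun x => M *ᵥ x) '' Δ with hD
  have hDcompact : IsCompact D := hΔcompact.image hMcont
  have h0D : (0:ι → ℝ) ∉ D := by
    rintro ⟨x, ⟨h0, hs, h1⟩, hMx⟩
    have : x = 0 := hind x h0 hs hMx
    rw [this] at h1; simp at h1
  -- decomposition of the cone
  have hdecomp : ∀ y ∈ coneS M S, y = 0 ∨ ∃ t : ℝ, 0 < t ∧ ∃ d ∈ D, y = t • d := by
    rintro y ⟨x, h0, hs, hxy⟩
    by_cases hσ : ∑ j, x j = 0
    · left
      have hx0 : x = 0 := by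
        funext j
        exact le_antisymm (by
          have := (Finset.sum_eq_zero_iff_of_nonneg (fun j' _ => h0 j')).1 hσ j (Finset.mem_univ j)
          exact le_of_eq this) (h0 j)
      rw [← hxy, hx0]; simp
    · right
      have hσpos : 0 < ∑ j, x j := lt_of_le_of_ne (Finset.sum_nonneg fun j _ => h0 j) (Ne.symm hσ)
      refine ⟨∑ j, x j, hσpos, M *ᵥ ((∑ j, x j)⁻¹ • x), ⟨(∑ j, x j)⁻¹ • x,
        ⟨fun j => mul_nonneg (inv_nonneg.2 hσpos.le) (h0 j),
         fun j hj => by simp [hs j hj],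
         by simp only [Pi.smul_apply, smul_eq_mul]
            rw [← Finset.mul_sum, inv_mul_cancel₀ hσ]⟩, rfl⟩, ?_⟩
      rw [Matrix.mulVec_smul, smul_smul, mul_inv_cancel₀ hσ, one_smul, hxy]
  -- δ : positive distance from 0 to D
  obtain ⟨δ, hδpos, hδ⟩ : ∃ δ > 0, Metric.ball (0:ι → ℝ) δ ⊆ Dᶜ := by
    rcases Metric.isOpen_iff.1 hDcompact.isClosed.isOpen_compl 0 h0D with ⟨δ, hδpos, hδ⟩
    exact ⟨δ, hδpos, hδ⟩
  apply isClosed_of_closure_subset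
  intro y hy
  set T : ℝ := (‖y‖ + 1)/δ with hT
  set Kc : Set (ι → ℝ) :=
    (fun p : ℝ × (ι → ℝ) => p.1 • p.2) '' (Set.Icc (0:ℝ) T ×ˢ D) ∪ {0} with hKc
  have hKccompact : IsCompact Kc :=
    ((isCompact_Icc.prod hDcompact).image (continuous_fst.smul continuous_snd)).union
      isCompact_singleton
  have h1 : y ∈ closure (coneS M S ∩ Metric.ball y 1) := by
    rw [mem_closure_iff_nhds] at hy ⊢
    intro t ht
    rcases hy (t ∩ Metric.ball y 1) (Filter.inter_mem ht (Metric.ball_mem_nhds y one_pos))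
      with ⟨z, ⟨⟨hzt, hzb⟩, hzC⟩⟩
    exact ⟨z, hzt, hzC, hzb⟩
  have h2 : coneS M S ∩ Metric.ball y 1 ⊆ Kc := by
    rintro c ⟨hcC, hcb⟩
    rcases hdecomp c hcC with hc0 | ⟨t, ht, d, hd, rfl⟩
    · right; simp [hc0]
    · left
      have hdδ : δ ≤ ‖d‖ := by
        by_contra hlt
        push_neg at hlt
        exact (hδ (by simpa [Metric.mem_ball, dist_zero_right] using hlt)) hd
      have hnorm : ‖t • d‖ < ‖y‖ + 1 := by
        have h3 : dist (t • d) y < 1 := Metric.mem_ball.1 hcb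
        calc ‖t • d‖ ≤ ‖y‖ + ‖t • d - y‖ := by
              have := norm_add_le y (t • d - y); simpa using this
          _ < ‖y‖ + 1 := by rw [← dist_eq_norm]; linarith
      have htT : t ≤ T := by
        have h4 : t * δ ≤ t * ‖d‖ := by nlinarith
        have h5 : t * ‖d‖ = ‖t • d‖ := by
          rw [norm_smul, Real.norm_of_nonneg ht.le]
        have : t * δ < ‖y‖ + 1 := by linarith
        rw [hT]
        exact le_of_lt ((lt_div_iff₀ hδpos).2 this)
      exact ⟨(t, d), ⟨⟨ht.le, htT⟩, hd⟩, rfl⟩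
  have h3 : y ∈ Kc := by
    have := (closure_mono h2) h1
    rwa [hKccompact.isClosed.closure_eq] at this
  -- Kc ⊆ coneS M S
  rcases h3 with ⟨⟨t, d⟩, ⟨⟨ht0, _⟩, hdD⟩, rfl⟩ | hz
  · rcases hdD with ⟨x, ⟨hx0, hxs, _⟩, rfl⟩
    exact ⟨t • x, fun j => mul_nonneg ht0 (hx0 j), fun j hj => by simp [hxs j hj],
      by rw [Matrix.mulVec_smul]⟩
  · rw [Set.mem_singleton_iff.1 hz]
    exact ⟨0, fun j => le_refl 0, fun j _ => rfl, by simp⟩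


lemma coneS_closed [DecidableEq κ] (M : Matrix ι κ ℝ) (S : Finset κ) :
    IsClosed (coneS M S) := by
  classical
  induction S using Finset.strongInduction with
  | _ S IH =>
  by_cases hind : ∀ x : κ → ℝ, (∀ j, 0 ≤ x j) → (∀ j ∉ S, x j = 0) → M *ᵥ x = 0 → x = 0
  · exact coneS_closed_of_indep M S hind
  · push_neg at hind
    obtain ⟨x, hx0, hxs, hMx, hxne⟩ := hind
    set T : Finset κ := S.filter (fun j => 0 < x j) with hTdef
    have hTne : T.Nonempty := by
      have : ∃ j, x j ≠ 0 := Function.ne_iff.1 hxne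
      obtain ⟨j, hj⟩ := this
      have hjpos : 0 < x j := lt_of_le_of_ne (hx0 j) (Ne.symm hj)
      have hjS : j ∈ S := by
        by_contra hc; exact hj (hxs j hc)
      exact ⟨j, Finset.mem_filter.2 ⟨hjS, hjpos⟩⟩
    have hunion : coneS M S = ⋃ j ∈ T, coneS M (S.erase j) := by
      apply Set.Subset.antisymm
      · rintro y ⟨z, hz0, hzs, hzy⟩
        -- choose minimal ratio
        obtain ⟨j₀, hj₀T, hj₀min⟩ := Finset.exists_mem_eq_inf' hTne (fun j => z j / x j)
        have hx0j₀ : 0 < x j₀ := (Finset.mem_filter.1 hj₀T).2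
        set t : ℝ := T.inf' hTne (fun j => z j / x j) with htdef
        have ht0 : 0 ≤ t := by
          rw [htdef, Finset.le_inf'_iff]
          intro j hj
          exact div_nonneg (hz0 j) (le_of_lt (Finset.mem_filter.1 hj).2)
        set z' : κ → ℝ := z - t • x with hz'def
        have hz'0 : ∀ j, 0 ≤ z' j := by
          intro j
          by_cases hjT : j ∈ T
          · have h1 : t ≤ z j / x j := Finset.inf'_le _ hjT
            have h2 : 0 < x j := (Finset.mem_filter.1 hjT).2
            have := (le_div_iff₀ h2).1 h1
            simp only [hz'def, Pi.sub_apply, Pi.smul_apply, smul_eq_mul]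
            linarith
          · have hxj : x j = 0 := by
              by_cases hjS : j ∈ S
              · have : ¬ 0 < x j := fun hc => hjT (Finset.mem_filter.2 ⟨hjS, hc⟩)
                linarith [hx0 j]
              · exact hxs j hjS
            simp only [hz'def, Pi.sub_apply, Pi.smul_apply, smul_eq_mul, hxj, mul_zero, sub_zero]
            exact hz0 j
        have hz'j₀ : z' j₀ = 0 := by
          simp only [hz'def, Pi.sub_apply, Pi.smul_apply, smul_eq_mul]
          rw [hj₀min, div_mul_cancel₀ _ (ne_of_gt hx0j₀)]
          ring
        have hz's : ∀ j ∉ S.erase j₀, z' j = 0 := by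
          intro j hj
          by_cases hjj : j = j₀
          · rw [hjj]; exact hz'j₀
          · have hjS : j ∉ S := by
              intro hc; exact hj (Finset.mem_erase.2 ⟨hjj, hc⟩)
            simp [hz'def, hzs j hjS, hxs j hjS]
        have hMz' : M *ᵥ z' = y := by
          rw [hz'def, Matrix.mulVec_sub, Matrix.mulVec_smul, hMx, hzy]
          simp
        exact Set.mem_biUnion hj₀T ⟨z', hz'0, hz's, hMz'⟩
      · refine Set.iUnion₂_subset fun j hj => coneS_mono M (Finset.erase_subset j S)
    rw [hunion]
    apply Set.Finite.isClosed_biUnion (Finset.finite_toSet T)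
    intro j hj
    exact IH (S.erase j) (Finset.erase_ssubset (Finset.mem_filter.1 (Finset.mem_coe.1 hj)).1)

lemma closed_coneImage [DecidableEq κ] (M : Matrix ι κ ℝ) : IsClosed (coneImage M) := by
  have : coneImage M = coneS M Finset.univ := by
    ext y
    constructor
    · rintro ⟨x, hx0, hxy⟩; exact ⟨x, hx0, fun j hj => absurd (Finset.mem_univ j) hj, hxy⟩
    · rintro ⟨x, hx0, _, hxy⟩; exact ⟨x, hx0, hxy⟩
  rw [this]
  exact coneS_closed M Finset.univ


/-- Farkas' lemma. -/
lemma farkas [DecidableEq ι] (M : Matrix ι κ ℝ) (y : κ → ℝ)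
    (hy : ∀ v : κ → ℝ, (∀ i, 0 ≤ (M *ᵥ v) i) → 0 ≤ y ⬝ᵥ v) :
    ∃ w : ι → ℝ, (∀ i, 0 ≤ w i) ∧ Mᵀ *ᵥ w = y := by
  classical
  set C : Set (κ → ℝ) := coneImage Mᵀ with hC
  by_cases hyC : y ∈ C
  · exact hyC
  have hconv : Convex ℝ C := by
    rintro y₁ ⟨x₁, hx₁, rfl⟩ y₂ ⟨x₂, hx₂, rfl⟩ a c ha hc _
    refine ⟨a • x₁ + c • x₂, fun j => add_nonneg (mul_nonneg ha (hx₁ j)) (mul_nonneg hc (hx₂ j)), ?_⟩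
    rw [Matrix.mulVec_add, Matrix.mulVec_smul, Matrix.mulVec_smul]
  have hsmul : ∀ (t : ℝ), 0 ≤ t → ∀ x ∈ C, t • x ∈ C := by
    rintro t ht _ ⟨x, hx, rfl⟩
    exact ⟨t • x, fun j => mul_nonneg ht (hx j), by rw [Matrix.mulVec_smul]⟩
  have h0 : (0:κ → ℝ) ∈ C := ⟨0, fun j => le_refl 0, by simp⟩
  obtain ⟨ν, hν₁, hν₂⟩ := sep (closed_coneImage Mᵀ) hconv hsmul h0 hyC
  have hMν : ∀ i, 0 ≤ (M *ᵥ ν) i := by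
    intro i
    have h1 : Mᵀ *ᵥ Pi.single i 1 ∈ C := ⟨Pi.single i 1, fun j => by
      by_cases h : j = i <;> simp [h, Pi.single_apply], rfl⟩
    have h2 := hν₁ _ h1
    rwa [Matrix.dotProduct_mulVec, Matrix.vecMul_transpose, dotProduct_single, mul_one] at h2
  have := hy ν hMν
  rw [dotProduct_comm] at this
  linarith

/-- Bipolar membership. -/
lemma mem_dual_dual {K : Set (ι → ℝ)} (hclosed : IsClosed K) (hconv : Convex ℝ K)
    (hsmul : ∀ (t : ℝ), 0 ≤ t → ∀ x ∈ K, t • x ∈ K) (h0 : (0:ι → ℝ) ∈ K)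
    {μ : ι → ℝ} (hμ : ∀ l : ι → ℝ, (∀ u ∈ K, 0 ≤ l ⬝ᵥ u) → 0 ≤ l ⬝ᵥ μ) : μ ∈ K := by
  by_contra hc
  obtain ⟨ν, hν₁, hν₂⟩ := sep hclosed hconv hsmul h0 hc
  exact absurd (hμ ν hν₁) (not_le.2 hν₂)

lemma dual_closed (K : Set (ι → ℝ)) : IsClosed {l : ι → ℝ | ∀ u ∈ K, 0 ≤ l ⬝ᵥ u} := by
  have : {l : ι → ℝ | ∀ u ∈ K, 0 ≤ l ⬝ᵥ u} = ⋂ u ∈ K, {l : ι → ℝ | 0 ≤ l ⬝ᵥ u} := by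
    ext l; simp [Set.mem_iInter]
  rw [this]
  refine isClosed_biInter fun u _ => isClosed_le continuous_const ?_
  exact continuous_finset_sum _ fun i _ => (continuous_apply i).mul continuous_const

lemma dual_convex (K : Set (ι → ℝ)) : Convex ℝ {l : ι → ℝ | ∀ u ∈ K, 0 ≤ l ⬝ᵥ u} := by
  intro l₁ h₁ l₂ h₂ a c ha hc _
  intro u hu
  rw [add_dotProduct, smul_dotProduct, smul_dotProduct]
  exact add_nonneg (smul_nonneg ha (h₁ u hu)) (smul_nonneg hc (h₂ u hu))

/-- strict positivity from interior of the dual cone -/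
lemma strict_of_interior {K : Set (ι → ℝ)} {l : ι → ℝ}
    (hl : l ∈ interior {l : ι → ℝ | ∀ u ∈ K, 0 ≤ l ⬝ᵥ u}) :
    ∀ u ∈ K, u ≠ 0 → 0 < l ⬝ᵥ u := by
  intro u hu hune
  have h0 : 0 ≤ l ⬝ᵥ u := interior_subset hl u hu
  rcases eq_or_lt_of_le h0 with heq | hlt
  · exfalso
    obtain ⟨ε, hε, hball⟩ := Metric.isOpen_iff.1 isOpen_interior l hl
    have hunorm : 0 < ‖u‖ := norm_pos_iff.2 hune
    set c : ℝ := ε / (2 * ‖u‖) with hc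
    have hcpos : 0 < c := div_pos hε (by linarith)
    have hmem : l - c • u ∈ Metric.ball l ε := by
      rw [Metric.mem_ball, dist_eq_norm]
      have : l - c • u - l = -(c • u) := by abel
      rw [this, norm_neg, norm_smul, Real.norm_of_nonneg hcpos.le, hc]
      rw [div_mul_eq_mul_div, mul_comm (2:ℝ) ‖u‖, ← div_div]
      rw [mul_div_assoc, div_self (ne_of_gt hunorm)]
      linarith
    have h2 : 0 ≤ (l - c • u) ⬝ᵥ u := (interior_subset (hball hmem)) u hu
    rw [sub_dotProduct, smul_dotProduct, ← heq] at h2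
    have huu : 0 < u ⬝ᵥ u := by
      have h1 : 0 ≤ u ⬝ᵥ u := Finset.sum_nonneg fun i _ => mul_self_nonneg _
      rcases eq_or_lt_of_le h1 with h | h
      · exact absurd (dotProduct_self_eq_zero.1 h.symm) hune
      · exact h
    have : (0:ℝ) < c * (u ⬝ᵥ u) := mul_pos hcpos huu
    simp only [smul_eq_mul] at h2
    linarith
  · exact hlt


/-- The dual cone of a pointed closed convex cone has nonempty interior. -/
lemma dual_interior_nonempty {K : Set (ι → ℝ)} (hclosed : IsClosed K) (hconv : Convex ℝ K)
    (hsmul : ∀ (t : ℝ), 0 ≤ t → ∀ x ∈ K, t • x ∈ K)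
    (hpointed : K ∩ (-K) = {0}) :
    (interior {l : ι → ℝ | ∀ u ∈ K, 0 ≤ l ⬝ᵥ u}).Nonempty := by
  classical
  set Ks : Set (ι → ℝ) := {l : ι → ℝ | ∀ u ∈ K, 0 ≤ l ⬝ᵥ u} with hKs
  have h0K : (0:ι → ℝ) ∈ K := by
    have : (0:ι → ℝ) ∈ K ∩ (-K) := by rw [hpointed]; rfl
    exact this.1
  have hKsadd : ∀ x ∈ Ks, ∀ y ∈ Ks, x + y ∈ Ks := by
    intro x hx y hy u hu
    rw [add_dotProduct]
    exact add_nonneg (hx u hu) (hy u hu)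
  have hKssmul : ∀ (t : ℝ), 0 ≤ t → ∀ x ∈ Ks, t • x ∈ Ks := by
    intro t ht x hx u hu
    rw [smul_dotProduct]
    exact smul_nonneg ht (hx u hu)
  by_cases hsp : Submodule.span ℝ Ks = ⊤
  · -- find a basis inside Ks
    obtain ⟨bs, hbs, hspan, hli⟩ := exists_linearIndependent ℝ Ks
    have hfin : bs.Finite := hli.setFinite
    haveI : Fintype bs := hfin.fintype
    have htop : ⊤ ≤ Submodule.span ℝ (Set.range ((↑) : bs → (ι → ℝ))) := by
      rw [Subtype.range_coe, hspan, hsp]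
    set B : Module.Basis bs ℝ (ι → ℝ) := Module.Basis.mk hli htop with hB
    have hBmem : ∀ i : bs, B i ∈ Ks := fun i => by
      rw [hB, Module.Basis.mk_apply]; exact hbs i.2
    set p : ι → ℝ := ∑ i : bs, B i with hp
    set U : Set (ι → ℝ) := {x | ∀ i : bs, 0 < B.equivFun x i} with hU
    have hUopen : IsOpen U := by
      have : U = ⋂ i : bs, (fun x => B.equivFun x i) ⁻¹' (Set.Ioi 0) := by
        ext x; simp [hU, Set.mem_iInter]
      rw [this]
      refine isOpen_iInter_of_finite fun i => ?_
      have hcont : Continuous (fun x => B.equivFun x i) :=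
        (continuous_apply i).comp
          (LinearMap.continuous_of_finiteDimensional (B.equivFun : (ι → ℝ) →ₗ[ℝ] (bs → ℝ)))
      exact hcont.isOpen_preimage _ isOpen_Ioi
    have hpU : p ∈ U := by
      intro i
      have : B.equivFun p i = 1 := by
        rw [hp]
        simp only [map_sum]
        rw [show (∑ j : bs, B.equivFun (B j)) i = ∑ j : bs, B.equivFun (B j) i from by
          simp [Finset.sum_apply]]
        have : ∀ j : bs, B.equivFun (B j) i = if j = i then 1 else 0 := by
          intro j
          rw [Module.Basis.equivFun_apply, Module.Basis.repr_self, Finsupp.single_apply]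
        rw [Finset.sum_congr rfl (fun j _ => this j)]
        simp
      rw [this]; exact one_pos
    have hUKs : U ⊆ Ks := by
      intro x hx
      have hxsum : x = ∑ i : bs, B.equivFun x i • B i := by
        rw [B.sum_equivFun x]
      rw [hxsum]
      have : ∀ (s : Finset bs), (∑ i ∈ s, B.equivFun x i • B i) ∈ Ks := by
        intro s
        induction s using Finset.induction with
        | empty => simp only [Finset.sum_empty]; exact fun u hu => by simp
        | insert _ _ hnot ih =>
          rw [Finset.sum_insert hnot]
          exact hKsadd _ (hKssmul _ (le_of_lt (hx _)) _ (hBmem _)) _ ih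
      exact this Finset.univ
    exact ⟨p, mem_interior.2 ⟨U, hUKs, hUopen, hpU⟩⟩
  · -- span is proper : contradiction with pointedness
    exfalso
    have : ∃ v, v ∉ Submodule.span ℝ Ks := by
      by_contra hc
      push_neg at hc
      exact hsp (Submodule.eq_top_iff'.2 hc)
    obtain ⟨v, hv⟩ := this
    obtain ⟨f, u, hfspan, hfv⟩ := geometric_hahn_banach_closed_point
      (Submodule.span ℝ Ks).convex (Submodule.span ℝ Ks).closed_of_finiteDimensional hv
    have hu0 : 0 < u := by simpa using hfspan 0 (Submodule.zero_mem _)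
    have hf0 : ∀ a ∈ Submodule.span ℝ Ks, f a = 0 := by
      intro a ha
      by_contra hfa
      have h1 := hfspan (((u+1)/f a) • a) (Submodule.smul_mem _ _ ha)
      rw [_root_.map_smul, smul_eq_mul, div_mul_cancel₀ _ hfa] at h1
      linarith
    obtain ⟨ν, hν⟩ := exists_vec f
    have hνK : ν ∈ K := by
      refine mem_dual_dual hclosed hconv hsmul h0K fun l hl => ?_
      have : f l = 0 := hf0 l (Submodule.subset_span hl)
      rw [hν l] at this
      rw [dotProduct_comm]
      exact le_of_eq this.symm
    have hνK' : -ν ∈ K := by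
      refine mem_dual_dual hclosed hconv hsmul h0K fun l hl => ?_
      have : f l = 0 := hf0 l (Submodule.subset_span hl)
      rw [hν l] at this
      rw [dotProduct_comm, neg_dotProduct, this, neg_zero]
    have : ν ∈ K ∩ (-K) := ⟨hνK, by simpa [Set.mem_neg] using hνK'⟩
    rw [hpointed] at this
    have hν0 : ν = (0:ι → ℝ) := this
    have : f v = 0 := by rw [hν v, hν0]; simp
    linarith

lemma vecMulVec_mulVec' {ι κ : Type*} [Fintype κ] (u : ι → ℝ) (v w : κ → ℝ) :
    (Matrix.vecMulVec u v) *ᵥ w = (v ⬝ᵥ w) • u := by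
  funext i
  simp only [Matrix.mulVec, dotProduct, Matrix.vecMulVec_apply, Pi.smul_apply,
    smul_eq_mul]
  rw [Finset.sum_mul]
  exact Finset.sum_congr rfl fun j _ => by ring

lemma transpose_vecMulVec' {ι κ : Type*} (u : ι → ℝ) (v : κ → ℝ) :
    (Matrix.vecMulVec u v)ᵀ = Matrix.vecMulVec v u := by
  funext j i
  simp [Matrix.vecMulVec_apply, Matrix.transpose_apply, mul_comm]


end SD

open SD

theorem stmt4 (k n m : ℕ) (K : Set (Fin k → ℝ))
    (hKcone : ∀ (c : ℝ), 0 ≤ c → ∀ x ∈ K, c • x ∈ K)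
    (hKclosed : IsClosed K) (hKconvex : Convex ℝ K)
    (hKpointed : K ∩ (-K) = {0})
    (hKne : K ≠ {0}) (hKuniv : K ≠ Set.univ)
    (L : Matrix (Fin k) (Fin n) ℝ) (A : Matrix (Fin m) (Fin n) ℝ) (b : Fin m → ℝ)
    (xbar : Fin n → ℝ)
    (hxbar : (∀ i, 0 ≤ xbar i) ∧ A *ᵥ xbar = b)
    (heff : ¬ ∃ x : Fin n → ℝ, ((∀ i, 0 ≤ x i) ∧ A *ᵥ x = b) ∧
      L *ᵥ xbar - L *ᵥ x ∈ K ∧ L *ᵥ xbar - L *ᵥ x ≠ 0) :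
    ∃ (lbar : Fin k → ℝ) (Ubar : Matrix (Fin k) (Fin m) ℝ) (vbar : Fin k → ℝ),
      ((∀ u ∈ K, u ≠ 0 → 0 < lbar ⬝ᵥ u) ∧ lbar ⬝ᵥ vbar = 0 ∧
        ∀ i, 0 ≤ ((L - Ubar * A)ᵀ *ᵥ lbar) i) ∧
      (¬ ∃ (l : Fin k → ℝ) (U : Matrix (Fin k) (Fin m) ℝ) (v : Fin k → ℝ),
        ((∀ u ∈ K, u ≠ 0 → 0 < l ⬝ᵥ u) ∧ l ⬝ᵥ v = 0 ∧
          ∀ i, 0 ≤ ((L - U * A)ᵀ *ᵥ l) i) ∧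
        (U *ᵥ b + v) - (Ubar *ᵥ b + vbar) ∈ K ∧
        (U *ᵥ b + v) - (Ubar *ᵥ b + vbar) ≠ 0) ∧
      L *ᵥ xbar = Ubar *ᵥ b + vbar := by
  classical
  obtain ⟨hxbar0, hxbarA⟩ := hxbar
  have h0K : (0 : Fin k → ℝ) ∈ K := by
    have : (0 : Fin k → ℝ) ∈ K ∩ (-K) := by rw [hKpointed]; rfl
    exact this.1
  obtain ⟨u₀, hu₀K, hu₀ne⟩ : ∃ u₀ ∈ K, u₀ ≠ 0 := by
    by_contra hc
    push_neg at hc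
    exact hKne (Set.Subset.antisymm (fun u hu => hc u hu) (fun u hu => by
      rw [Set.mem_singleton_iff.1 hu]; exact h0K))
  -- the dual cone of K and the scalarization set S
  set Ks : Set (Fin k → ℝ) := {l | ∀ u ∈ K, 0 ≤ l ⬝ᵥ u} with hKsdef
  set S : Set (Fin k → ℝ) := {l | ∀ (z : Fin n → ℝ) (t : ℝ), (∀ j, 0 ≤ z j) → 0 ≤ t →
      A *ᵥ z = t • b → 0 ≤ l ⬝ᵥ (L *ᵥ z - t • (L *ᵥ xbar))} with hSdef
  -- auxiliary matrices
  set F : Matrix (Fin k) (Fin n ⊕ Unit) ℝ :=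
    Matrix.of fun i j => Sum.elim (fun j' => L i j') (fun _ => -(L *ᵥ xbar) i) j with hFdef
  set A' : Matrix (Fin m) (Fin n ⊕ Unit) ℝ :=
    Matrix.of fun i j => Sum.elim (fun j' => A i j') (fun _ => -b i) j with hA'def
  have hFv : ∀ w : (Fin n ⊕ Unit) → ℝ,
      F *ᵥ w = L *ᵥ (w ∘ Sum.inl) - (w (Sum.inr ())) • (L *ᵥ xbar) := by
    intro w
    funext i
    simp only [Matrix.mulVec, dotProduct, Fintype.sum_sum_type, hFdef, Matrix.of_apply,
      Sum.elim_inl, Sum.elim_inr, Pi.sub_apply, Pi.smul_apply, smul_eq_mul, Function.comp]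
    simp only [Finset.univ_unique, Finset.sum_singleton]
    ring
  have hA'v : ∀ w : (Fin n ⊕ Unit) → ℝ,
      A' *ᵥ w = A *ᵥ (w ∘ Sum.inl) - (w (Sum.inr ())) • b := by
    intro w
    funext i
    simp only [Matrix.mulVec, dotProduct, Fintype.sum_sum_type, hA'def, Matrix.of_apply,
      Sum.elim_inl, Sum.elim_inr, Pi.sub_apply, Pi.smul_apply, smul_eq_mul, Function.comp]
    simp only [Finset.univ_unique, Finset.sum_singleton]
    ring
  have hsum : ∀ (v w : (Fin k ⊕ Fin m) → ℝ),
      v ⬝ᵥ w = (v ∘ Sum.inl) ⬝ᵥ (w ∘ Sum.inl) + (v ∘ Sum.inr) ⬝ᵥ (w ∘ Sum.inr) := by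
    intro v w
    simp [dotProduct, Fintype.sum_sum_type, Function.comp]
  -- efficiency in cone form
  have hQeff : ∀ (z : Fin n → ℝ) (t : ℝ), (∀ j, 0 ≤ z j) → 0 ≤ t → A *ᵥ z = t • b →
      L *ᵥ z - t • (L *ᵥ xbar) ∈ (-K) → L *ᵥ z - t • (L *ᵥ xbar) = 0 := by
    intro z t hz ht hAz hmem
    by_contra hne
    have hmem' : -(L *ᵥ z - t • (L *ᵥ xbar)) ∈ K := Set.mem_neg.1 hmem
    rcases lt_or_eq_of_le ht with htpos | hteq
    · apply heff
      refine ⟨t⁻¹ • z, ⟨fun i => mul_nonneg (inv_nonneg.2 ht) (hz i), ?_⟩, ?_, ?_⟩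
      · rw [Matrix.mulVec_smul, hAz, smul_smul, inv_mul_cancel₀ (ne_of_gt htpos), one_smul]
      · have heq : L *ᵥ xbar - L *ᵥ (t⁻¹ • z) = t⁻¹ • (-(L *ᵥ z - t • (L *ᵥ xbar))) := by
          rw [Matrix.mulVec_smul]
          funext i
          simp only [Pi.sub_apply, Pi.smul_apply, Pi.neg_apply, smul_eq_mul]
          field_simp
          ring
        rw [heq]
        exact hKcone _ (inv_nonneg.2 ht) _ hmem'
      · have heq : L *ᵥ xbar - L *ᵥ (t⁻¹ • z) = t⁻¹ • (-(L *ᵥ z - t • (L *ᵥ xbar))) := by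
          rw [Matrix.mulVec_smul]
          funext i
          simp only [Pi.sub_apply, Pi.smul_apply, Pi.neg_apply, smul_eq_mul]
          field_simp
          ring
        rw [heq]
        intro hzero
        rcases smul_eq_zero.1 hzero with h | h
        · exact (inv_ne_zero (ne_of_gt htpos)) h
        · exact hne (neg_eq_zero.1 h)
    · apply heff
      have hAz0 : A *ᵥ z = 0 := by rw [hAz, ← hteq, zero_smul]
      refine ⟨xbar + z, ⟨fun i => add_nonneg (hxbar0 i) (hz i), ?_⟩, ?_, ?_⟩
      · rw [Matrix.mulVec_add, hxbarA, hAz0, add_zero]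
      · have heq : L *ᵥ xbar - L *ᵥ (xbar + z) = -(L *ᵥ z - t • (L *ᵥ xbar)) := by
          rw [Matrix.mulVec_add, ← hteq, zero_smul, sub_zero]
          abel
        rw [heq]; exact hmem'
      · have heq : L *ᵥ xbar - L *ᵥ (xbar + z) = -(L *ᵥ z - t • (L *ᵥ xbar)) := by
          rw [Matrix.mulVec_add, ← hteq, zero_smul, sub_zero]
          abel
        rw [heq]
        intro hzero
        exact hne (neg_eq_zero.1 hzero)
  -- basic properties of S
  have h0S : (0 : Fin k → ℝ) ∈ S := by
    intro z t hz ht hAz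
    simp
  have hSconv : Convex ℝ S := by
    intro l₁ h₁ l₂ h₂ a c ha hc _
    intro z t hz ht hAz
    rw [add_dotProduct, smul_dotProduct, smul_dotProduct]
    exact add_nonneg (smul_nonneg ha (h₁ z t hz ht hAz)) (smul_nonneg hc (h₂ z t hz ht hAz))
  have hSsmul : ∀ (c : ℝ), 0 ≤ c → ∀ l ∈ S, c • l ∈ S := by
    intro c hcn l hl z t hz ht hAz
    rw [smul_dotProduct]
    exact smul_nonneg hcn (hl z t hz ht hAz)
  have hKsconv : Convex ℝ Ks := by
    intro l₁ h₁ l₂ h₂ a c ha hc _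
    intro u hu
    rw [add_dotProduct, smul_dotProduct, smul_dotProduct]
    exact add_nonneg (smul_nonneg ha (h₁ u hu)) (smul_nonneg hc (h₂ u hu))
  -- scalarization : a strictly positive functional minimized at xbar
  obtain ⟨lbar, hlbarS, hlbarInt⟩ : ∃ l, l ∈ S ∧ l ∈ interior Ks := by
    by_contra hcon
    push_neg at hcon
    have hdisj : Disjoint (interior Ks) S :=
      Set.disjoint_left.2 fun a ha haS => (hcon a haS) ha
    obtain ⟨f, c, hfint, hfS⟩ :=
      geometric_hahn_banach_open hKsconv.interior isOpen_interior hSconv hdisj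
    have hc0 : c ≤ 0 := by simpa using hfS 0 h0S
    obtain ⟨a₀, ha₀⟩ := dual_interior_nonempty hKclosed hKconvex hKcone hKpointed
    have hfa₀ : f a₀ < c := hfint a₀ ha₀
    have hfKs : ∀ l ∈ Ks, f l ≤ c := by
      intro l hl
      by_contra hgt
      push_neg at hgt
      set t₀ : ℝ := (f l - c)/(f l - f a₀) with ht₀def
      have hd : 0 < f l - f a₀ := by linarith
      have ht₀pos : 0 < t₀ := div_pos (by linarith) hd
      have ht₀lt : t₀ < 1 := (div_lt_one hd).2 (by linarith)
      have hmem : t₀ • a₀ + (1 - t₀) • l ∈ interior Ks :=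
        Convex.combo_interior_closure_mem_interior hKsconv ha₀ (subset_closure hl)
          ht₀pos (by linarith) (by ring)
      have h1 := hfint _ hmem
      rw [map_add, _root_.map_smul, _root_.map_smul, smul_eq_mul, smul_eq_mul] at h1
      have h2 : t₀ * (f l - f a₀) = f l - c := div_mul_cancel₀ _ (ne_of_gt hd)
      nlinarith
    have hfS0 : ∀ l ∈ S, 0 ≤ f l := by
      intro l hl
      by_contra hneg
      push_neg at hneg
      have h1 := hfS _ (hSsmul ((c-1)/f l) (le_of_lt (div_pos_of_neg_of_neg (by linarith) hneg)) l hl)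
      rw [_root_.map_smul, smul_eq_mul, div_mul_cancel₀ _ (ne_of_lt hneg)] at h1
      linarith
    obtain ⟨ν, hν⟩ := exists_vec f
    have hνne : ν ≠ 0 := by
      intro h
      rw [hν a₀, h] at hfa₀
      simp only [zero_dotProduct] at hfa₀
      linarith
    have hμK : -ν ∈ K := by
      refine mem_dual_dual hKclosed hKconvex hKcone h0K fun l hl => ?_
      have h1 : f l ≤ c := hfKs l hl
      rw [hν l] at h1
      rw [dotProduct_comm, neg_dotProduct]
      linarith
    -- Farkas step : ν is in the image cone, contradicting efficiency
    set M₂ : Matrix (Fin n ⊕ Unit) (Fin k ⊕ Fin m) ℝ :=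
      Matrix.of fun j c' => Sum.elim (fun ik => F ik j) (fun im => -(A' im j)) c' with hM₂def
    have hM₂v : ∀ v : (Fin k ⊕ Fin m) → ℝ,
        M₂ *ᵥ v = Fᵀ *ᵥ (v ∘ Sum.inl) - A'ᵀ *ᵥ (v ∘ Sum.inr) := by
      intro v
      funext j
      simp only [Matrix.mulVec, dotProduct, Fintype.sum_sum_type, hM₂def, Matrix.of_apply,
        Sum.elim_inl, Sum.elim_inr, Pi.sub_apply, Matrix.transpose_apply, Function.comp,
        neg_mul, Finset.sum_neg_distrib]
      ring
    have hM₂tv : ∀ w : (Fin n ⊕ Unit) → ℝ,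
        M₂ᵀ *ᵥ w = Sum.elim (F *ᵥ w) (-(A' *ᵥ w)) := by
      intro w
      funext c'
      cases c' with
      | inl ik =>
        simp [hM₂def, Matrix.mulVec, dotProduct, Matrix.transpose_apply]
      | inr im =>
        simp [hM₂def, Matrix.mulVec, dotProduct, Matrix.transpose_apply,
          Finset.sum_neg_distrib]
    obtain ⟨w, hw0, hwid⟩ := farkas M₂ (Sum.elim ν (0 : Fin m → ℝ)) (by
      intro v hv
      rw [hM₂v] at hv
      set l := v ∘ Sum.inl with hldef
      set u := v ∘ Sum.inr with hudef
      have hlS : l ∈ S := by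
        intro z t hz ht hAz
        set w' : (Fin n ⊕ Unit) → ℝ := Sum.elim z (fun _ => t) with hw'def
        have hw'0 : ∀ j, 0 ≤ w' j := by
          intro j; cases j with
          | inl j' => exact hz j'
          | inr j' => exact ht
        have hw'inl : w' ∘ Sum.inl = z := rfl
        have hw'inr : w' (Sum.inr ()) = t := rfl
        have hFw' : F *ᵥ w' = L *ᵥ z - t • (L *ᵥ xbar) := by
          rw [hFv, hw'inl, hw'inr]
        have hA'w' : A' *ᵥ w' = 0 := by
          rw [hA'v, hw'inl, hw'inr, hAz, sub_self]
        rw [← hFw', Matrix.dotProduct_mulVec, ← Matrix.mulVec_transpose]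
        calc (0:ℝ) = (A'ᵀ *ᵥ u) ⬝ᵥ w' := by
              rw [Matrix.mulVec_transpose, ← Matrix.dotProduct_mulVec, hA'w',
                dotProduct_zero]
          _ ≤ (Fᵀ *ᵥ l) ⬝ᵥ w' := by
              simp only [dotProduct]
              refine Finset.sum_le_sum fun j _ => ?_
              have := hv j
              rw [Pi.sub_apply] at this
              exact mul_le_mul_of_nonneg_right (by linarith) (hw'0 j)
      have h1 := hfS0 l hlS
      rw [hν l] at h1
      rw [hsum]
      simpa using h1)
    rw [hM₂tv] at hwid
    have hFw : F *ᵥ w = ν := by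
      funext i
      have := congrFun hwid (Sum.inl i)
      simpa using this
    have hA'w : A' *ᵥ w = 0 := by
      funext i
      have := congrFun hwid (Sum.inr i)
      simpa [neg_eq_zero] using this
    have hAzw : A *ᵥ (w ∘ Sum.inl) = (w (Sum.inr ())) • b := by
      have h : A *ᵥ (w ∘ Sum.inl) - (w (Sum.inr ())) • b = 0 := by rw [← hA'v w, hA'w]
      exact sub_eq_zero.1 h
    have hLzw : L *ᵥ (w ∘ Sum.inl) - (w (Sum.inr ())) • (L *ᵥ xbar) = ν := by
      rw [← hFv, hFw]
    have hzero := hQeff (w ∘ Sum.inl) (w (Sum.inr ())) (fun j => hw0 (Sum.inl j))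
      (hw0 (Sum.inr ())) hAzw (by rw [hLzw]; exact Set.mem_neg.2 hμK)
    rw [hLzw] at hzero
    exact hνne hzero
  -- properties of lbar
  have hstrict : ∀ u ∈ K, u ≠ 0 → 0 < lbar ⬝ᵥ u := strict_of_interior hlbarInt
  have hlbarne : lbar ≠ 0 := by
    intro h
    have := hstrict u₀ hu₀K hu₀ne
    rw [h] at this
    simp only [zero_dotProduct] at this
    linarith
  have hll : 0 < lbar ⬝ᵥ lbar := by
    have h1 : 0 ≤ lbar ⬝ᵥ lbar := Finset.sum_nonneg fun i _ => mul_self_nonneg _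
    rcases eq_or_lt_of_le h1 with h | h
    · exact absurd (dotProduct_self_eq_zero.1 h.symm) hlbarne
    · exact h
  -- LP duality for the scalarized problem
  set γ : ℝ := lbar ⬝ᵥ (L *ᵥ xbar) with hγdef
  set cvec : Fin n → ℝ := Lᵀ *ᵥ lbar with hcvecdef
  have hcvecdot : ∀ z : Fin n → ℝ, cvec ⬝ᵥ z = lbar ⬝ᵥ (L *ᵥ z) := by
    intro z
    rw [hcvecdef, Matrix.mulVec_transpose, ← Matrix.dotProduct_mulVec]
  have hdotsum : ∀ (v w : (Fin n ⊕ Unit) → ℝ),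
      v ⬝ᵥ w = (v ∘ Sum.inl) ⬝ᵥ (w ∘ Sum.inl) + v (Sum.inr ()) * w (Sum.inr ()) := by
    intro v w
    simp [dotProduct, Fintype.sum_sum_type, Function.comp]
  set M₁ : Matrix ((Fin m ⊕ Fin m) ⊕ (Fin n ⊕ Unit)) (Fin n ⊕ Unit) ℝ :=
    Matrix.of fun r j => Sum.elim (Sum.elim (fun i₁ => A' i₁ j) (fun i₂ => -(A' i₂ j)))
      (fun j' => if j' = j then (1:ℝ) else 0) r with hM₁def
  have hM₁v : ∀ v : (Fin n ⊕ Unit) → ℝ,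
      M₁ *ᵥ v = Sum.elim (Sum.elim (A' *ᵥ v) (-(A' *ᵥ v))) v := by
    intro v
    funext r
    rcases r with (r' | r') | j'
    · simp [hM₁def, Matrix.mulVec, dotProduct]
    · simp [hM₁def, Matrix.mulVec, dotProduct]
    · simp [hM₁def, Matrix.mulVec, dotProduct, ite_mul, Finset.sum_ite_eq]
  have hA't : ∀ u : Fin m → ℝ,
      A'ᵀ *ᵥ u = Sum.elim (Aᵀ *ᵥ u) (fun _ => -(b ⬝ᵥ u)) := by
    intro u
    funext j
    rcases j with j' | j'
    · simp [hA'def, Matrix.mulVec, dotProduct, Matrix.transpose_apply, mul_comm]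
    · simp [hA'def, Matrix.mulVec, dotProduct, Matrix.transpose_apply, mul_comm]
  have hM₁tv : ∀ w : ((Fin m ⊕ Fin m) ⊕ (Fin n ⊕ Unit)) → ℝ,
      M₁ᵀ *ᵥ w = A'ᵀ *ᵥ ((w ∘ Sum.inl ∘ Sum.inl) - (w ∘ Sum.inl ∘ Sum.inr)) + (w ∘ Sum.inr) := by
    intro w
    funext j
    rcases j with j' | j' <;>
    · simp only [Matrix.mulVec, dotProduct, Fintype.sum_sum_type, Matrix.transpose_apply,
        hM₁def, Matrix.of_apply, Sum.elim_inl, Sum.elim_inr, Pi.add_apply, Pi.sub_apply,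
        Function.comp, neg_mul, Finset.sum_neg_distrib, ite_mul, one_mul, zero_mul,
        Sum.inl.injEq, Sum.inr.injEq, reduceCtorEq, if_false, Finset.sum_const_zero,
        Finset.sum_ite_eq', Finset.mem_univ, if_true, mul_sub]
      rw [Finset.sum_sub_distrib]
      ring
  obtain ⟨w, hw0, hwid⟩ := farkas M₁ (Sum.elim cvec (fun _ => -γ)) (by
    intro v hv
    rw [hM₁v] at hv
    have hA'v0 : A' *ᵥ v = 0 := by
      funext i
      have h1 := hv (Sum.inl (Sum.inl i))
      have h2 := hv (Sum.inl (Sum.inr i))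
      simp only [Sum.elim_inl, Sum.elim_inr, Pi.neg_apply] at h1 h2
      have : (A' *ᵥ v) i ≤ 0 := by linarith
      exact le_antisymm this h1
    have hv0 : ∀ j, 0 ≤ v j := fun j => by simpa using hv (Sum.inr j)
    have hAz : A *ᵥ (v ∘ Sum.inl) = (v (Sum.inr ())) • b := by
      have h : A *ᵥ (v ∘ Sum.inl) - (v (Sum.inr ())) • b = 0 := by rw [← hA'v v, hA'v0]
      exact sub_eq_zero.1 h
    have hlS := hlbarS (v ∘ Sum.inl) (v (Sum.inr ())) (fun j => hv0 (Sum.inl j))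
      (hv0 (Sum.inr ())) hAz
    have hexp : (Sum.elim cvec (fun _ => -γ)) ⬝ᵥ v
        = lbar ⬝ᵥ (L *ᵥ (v ∘ Sum.inl) - (v (Sum.inr ())) • (L *ᵥ xbar)) := by
      rw [hdotsum]
      simp only [Sum.elim_comp_inl, Sum.elim_inr]
      rw [dotProduct_sub, dotProduct_smul, hcvecdot]
      simp only [smul_eq_mul, hγdef]
      ring
    rw [hexp]
    exact hlS)
  rw [hM₁tv, hA't] at hwid
  set y : Fin m → ℝ := (w ∘ Sum.inl ∘ Sum.inl) - (w ∘ Sum.inl ∘ Sum.inr) with hydef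
  have hAy : ∀ j, (Aᵀ *ᵥ y) j ≤ cvec j := by
    intro j
    have := congrFun hwid (Sum.inl j)
    simp only [Pi.add_apply, Sum.elim_inl, Function.comp] at this
    have hw' := hw0 (Sum.inr (Sum.inl j))
    rw [← this]
    simp only [hydef]
    linarith [hw0 (Sum.inr (Sum.inl j))]
  have hby : γ ≤ b ⬝ᵥ y := by
    have := congrFun hwid (Sum.inr ())
    simp only [Pi.add_apply, Sum.elim_inr, Function.comp] at this
    have hw' := hw0 (Sum.inr (Sum.inr ()))
    have : -(b ⬝ᵥ y) + w (Sum.inr (Sum.inr ())) = -γ := this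
    linarith
  have hweak : b ⬝ᵥ y ≤ γ := by
    have h1 : b ⬝ᵥ y = (Aᵀ *ᵥ y) ⬝ᵥ xbar := by
      rw [← hxbarA, dotProduct_comm, Matrix.dotProduct_mulVec, ← Matrix.mulVec_transpose]
    have h2 : (Aᵀ *ᵥ y) ⬝ᵥ xbar ≤ cvec ⬝ᵥ xbar := by
      simp only [dotProduct]
      exact Finset.sum_le_sum fun i _ => mul_le_mul_of_nonneg_right (hAy i) (hxbar0 i)
    have h3 : cvec ⬝ᵥ xbar = γ := hcvecdot xbar
    linarith
  have hbyγ : b ⬝ᵥ y = γ := le_antisymm hweak hby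
  -- construction of the dual solution
  set Ubar : Matrix (Fin k) (Fin m) ℝ :=
    (lbar ⬝ᵥ lbar)⁻¹ • Matrix.vecMulVec lbar y with hUdef
  set vbar : Fin k → ℝ := L *ᵥ xbar - Ubar *ᵥ b with hvdef
  have hUb : Ubar *ᵥ b = (lbar ⬝ᵥ lbar)⁻¹ • ((y ⬝ᵥ b) • lbar) := by
    rw [hUdef, Matrix.smul_mulVec, vecMulVec_mulVec']
  have hUt : Ubarᵀ *ᵥ lbar = y := by
    rw [hUdef, Matrix.transpose_smul, transpose_vecMulVec', Matrix.smul_mulVec,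
      vecMulVec_mulVec', smul_smul, inv_mul_cancel₀ (ne_of_gt hll), one_smul]
  have hEq : Ubar *ᵥ b + vbar = L *ᵥ xbar := by
    rw [hvdef, add_comm, sub_add_cancel]
  have hvb0 : lbar ⬝ᵥ vbar = 0 := by
    rw [hvdef, dotProduct_sub, hUb, dotProduct_smul, dotProduct_smul,
      smul_eq_mul, smul_eq_mul]
    rw [show y ⬝ᵥ b = b ⬝ᵥ y from dotProduct_comm _ _, hbyγ]
    rw [← hγdef, mul_comm γ (lbar ⬝ᵥ lbar), ← mul_assoc, inv_mul_cancel₀ (ne_of_gt hll), one_mul]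
    ring
  have hfeas : ∀ i, 0 ≤ ((L - Ubar * A)ᵀ *ᵥ lbar) i := by
    intro i
    rw [Matrix.transpose_sub, Matrix.transpose_mul, Matrix.sub_mulVec, ← Matrix.mulVec_mulVec,
      hUt]
    simp only [Pi.sub_apply]
    have := hAy i
    rw [hcvecdef] at this
    linarith
  refine ⟨lbar, Ubar, vbar, ⟨hstrict, hvb0, hfeas⟩, ?_, hEq.symm⟩
  rintro ⟨l, U, v, ⟨hl1, hl2, hl3⟩, hd1, hd2⟩
  rw [hEq] at hd1 hd2
  have hpos : 0 < l ⬝ᵥ (U *ᵥ b + v - L *ᵥ xbar) := hl1 _ hd1 hd2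
  have hkey : l ⬝ᵥ (U *ᵥ b + v - L *ᵥ xbar) = -(((L - U * A)ᵀ *ᵥ l) ⬝ᵥ xbar) := by
    have h1 : ((L - U * A)ᵀ *ᵥ l) ⬝ᵥ xbar = l ⬝ᵥ ((L - U * A) *ᵥ xbar) := by
      rw [Matrix.mulVec_transpose, ← Matrix.dotProduct_mulVec]
    rw [h1, Matrix.sub_mulVec, ← Matrix.mulVec_mulVec, hxbarA]
    rw [dotProduct_sub, dotProduct_add, dotProduct_sub, hl2]
    ring
  have hnn : 0 ≤ ((L - U * A)ᵀ *ᵥ l) ⬝ᵥ xbar :=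
    Finset.sum_nonneg fun i _ => mul_nonneg (hl3 i) (hxbar0 i)
  rw [hkey] at hpos
  linarith
end

section
/- Converse duality: if (λ̄, Ū, v̄) ∈ ℬ = {(λ, U, v) ∈ K*⁰ × ℝ^{k×m} × ℝ^k : λᵀv = 0, (L − UA)ᵀλ ∈ ℝ^n_+} is an efficient (maximal) solution to the dual of maximizing Ub + v over ℬ with respect to K, then there exists x̄ ∈ 𝒜 = {x ∈ ℝ^n_+ : Ax = b}, an efficient solution to minimizing Lx over 𝒜, with Lx̄ = Ūb + v̄. -/
open Matrix Finset


theorem farkas_aux (N : ℕ) : ∀ (nn : ℕ) (a : Fin nn → Fin N → ℝ) (q : Fin N → ℝ),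
    (∃ x : Fin nn → ℝ, (∀ i, 0 ≤ x i) ∧ ∑ i, x i • a i = q) ∨
    (∃ z : Fin N → ℝ, (∀ i, a i ⬝ᵥ z ≤ 0) ∧ 0 < q ⬝ᵥ z) := by
  intro nn
  induction nn with
  | zero =>
    intro a q
    by_cases hq : q = 0
    · exact Or.inl ⟨0, fun i => le_refl _, by simp [hq]⟩
    · refine Or.inr ⟨q, fun i => i.elim0, ?_⟩
      have h1 : (0:ℝ) ≤ q ⬝ᵥ q := Finset.sum_nonneg fun i _ => mul_self_nonneg _
      rcases h1.lt_or_eq with h | h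
      · exact h
      · exact absurd (dotProduct_self_eq_zero.mp h.symm) hq
  | succ nn ih =>
    intro a q
    rcases ih (fun i => a i.castSucc) q with ⟨x, hx, hsum⟩ | ⟨z, hz, hzq⟩
    · refine Or.inl ⟨Fin.snoc x 0, ?_, ?_⟩
      · intro i
        refine Fin.lastCases ?_ ?_ i
        · simp
        · intro j; simpa using hx j
      · rw [Fin.sum_univ_castSucc]
        simp [hsum]
    · by_cases hlast : a (Fin.last nn) ⬝ᵥ z ≤ 0
      · refine Or.inr ⟨z, ?_, hzq⟩
        intro i
        refine Fin.lastCases hlast (fun j => hz j) i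
      · push_neg at hlast
        set β := a (Fin.last nn) ⬝ᵥ z with hβ
        have hβne : β ≠ 0 := ne_of_gt hlast
        set a' : Fin nn → Fin N → ℝ :=
          fun i => a i.castSucc - ((a i.castSucc ⬝ᵥ z) / β) • a (Fin.last nn) with ha'
        set q' : Fin N → ℝ := q - ((q ⬝ᵥ z) / β) • a (Fin.last nn) with hq'
        rcases ih a' q' with ⟨x, hx, hsum⟩ | ⟨w, hw, hwq⟩
        · -- build solution for the big system
          set γ : ℝ := (q ⬝ᵥ z - ∑ i, x i * (a i.castSucc ⬝ᵥ z)) / β with hγ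
          have hγ0 : 0 ≤ γ := by
            apply div_nonneg _ hlast.le
            have : ∑ i, x i * (a i.castSucc ⬝ᵥ z) ≤ 0 :=
              Finset.sum_nonpos fun i _ => mul_nonpos_of_nonneg_of_nonpos (hx i) (hz i)
            linarith
          refine Or.inl ⟨Fin.snoc x γ, ?_, ?_⟩
          · intro i
            refine Fin.lastCases ?_ ?_ i
            · simpa using hγ0
            · intro j; simpa using hx j
          · rw [Fin.sum_univ_castSucc]
            simp only [Fin.snoc_castSucc, Fin.snoc_last]
            have expand : ∀ i : Fin nn, x i • a' i
                = x i • a i.castSucc - (x i * ((a i.castSucc ⬝ᵥ z) / β)) • a (Fin.last nn) := by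
              intro i
              rw [ha']
              simp only [smul_sub, smul_smul]
            rw [Finset.sum_congr rfl (fun i _ => expand i), Finset.sum_sub_distrib,
              ← Finset.sum_smul] at hsum
            set S := ∑ i, x i • a i.castSucc with hS
            set T := ∑ i, x i * ((a i.castSucc ⬝ᵥ z) / β) with hT
            have hγ' : T + γ = (q ⬝ᵥ z) / β := by
              have hT' : T = (∑ i, x i * (a i.castSucc ⬝ᵥ z)) / β := by
                rw [hT, Finset.sum_div]
                exact Finset.sum_congr rfl fun i _ => (mul_div_assoc _ _ _).symm
              rw [hT', hγ, sub_div]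
              ring
            calc S + γ • a (Fin.last nn)
                = (S - T • a (Fin.last nn)) + (T + γ) • a (Fin.last nn) := by module
              _ = (q - ((q ⬝ᵥ z) / β) • a (Fin.last nn)) + ((q ⬝ᵥ z) / β) • a (Fin.last nn) := by
                  rw [hsum, hγ']
              _ = q := by module
        · -- build separating functional for the big system
          refine Or.inr ⟨w - ((a (Fin.last nn) ⬝ᵥ w) / β) • z, ?_, ?_⟩
          · intro i
            refine Fin.lastCases ?_ ?_ i
            · rw [dotProduct_sub, dotProduct_smul]
              simp only [smul_eq_mul, ← hβ]
              rw [div_mul_cancel₀ _ hβne]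
              simp
            · intro j
              have hwj := hw j
              rw [ha'] at hwj
              rw [sub_dotProduct, smul_dotProduct] at hwj
              rw [dotProduct_sub, dotProduct_smul]
              simp only [smul_eq_mul] at hwj ⊢
              have heq : a (Fin.castSucc j) ⬝ᵥ w - a (Fin.last nn) ⬝ᵥ w / β * (a (Fin.castSucc j) ⬝ᵥ z)
                  = a (Fin.castSucc j) ⬝ᵥ w - a (Fin.castSucc j) ⬝ᵥ z / β * (a (Fin.last nn) ⬝ᵥ w) := by
                ring
              linarith [hwj, heq.le, heq.ge]
          · have hwq' := hwq
            rw [hq'] at hwq'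
            rw [sub_dotProduct, smul_dotProduct] at hwq'
            rw [dotProduct_sub, dotProduct_smul]
            simp only [smul_eq_mul] at hwq' ⊢
            have heq : q ⬝ᵥ w - q ⬝ᵥ z / β * (a (Fin.last nn) ⬝ᵥ w)
                = q ⬝ᵥ w - a (Fin.last nn) ⬝ᵥ w / β * (q ⬝ᵥ z) := by ring
            linarith [hwq', heq.le, heq.ge]


theorem perturb_aux {k : ℕ} (K : Set (Fin k → ℝ)) (hKclosed : IsClosed K)
    (hKcone : ∀ (c : ℝ), 0 ≤ c → ∀ x ∈ K, c • x ∈ K)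
    (lam mu : Fin k → ℝ) (hl : ∀ u ∈ K, u ≠ 0 → 0 < lam ⬝ᵥ u) :
    ∃ t : ℝ, 0 < t ∧ ∀ u ∈ K, u ≠ 0 → 0 < (lam - t • mu) ⬝ᵥ u := by
  by_cases hKz : ∀ u ∈ K, u = 0
  · exact ⟨1, one_pos, fun u hu hne => absurd (hKz u hu) hne⟩
  · push_neg at hKz
    obtain ⟨u₀, hu₀K, hu₀ne⟩ := hKz
    set B := K ∩ Metric.sphere (0 : Fin k → ℝ) 1 with hB
    have hBcomp : IsCompact B := (isCompact_sphere _ _).inter_left hKclosed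
    have hBne : B.Nonempty := by
      refine ⟨‖u₀‖⁻¹ • u₀, hKcone _ (inv_nonneg.mpr (norm_nonneg _)) _ hu₀K, ?_⟩
      rw [Metric.mem_sphere, dist_zero_right, norm_smul, norm_inv, norm_norm]
      exact inv_mul_cancel₀ (norm_ne_zero_iff.mpr hu₀ne)
    have hcont : Continuous fun u : Fin k → ℝ => lam ⬝ᵥ u := by
      have : (fun u : Fin k → ℝ => lam ⬝ᵥ u) = fun u => ∑ i, lam i * u i := rfl
      rw [this]
      exact continuous_finset_sum _ fun i _ => continuous_const.mul (continuous_apply i)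
    obtain ⟨u₁, hu₁B, hmin⟩ := hBcomp.exists_isMinOn hBne hcont.continuousOn
    have hu₁norm : ‖u₁‖ = 1 := by
      have := hu₁B.2
      rwa [Metric.mem_sphere, dist_zero_right] at this
    have hu₁ne : u₁ ≠ 0 := by
      intro h; rw [h, norm_zero] at hu₁norm; norm_num at hu₁norm
    set δ := lam ⬝ᵥ u₁ with hδdef
    have hδ : 0 < δ := hl u₁ hu₁B.1 hu₁ne
    set M := ∑ i, |mu i| with hM
    have hM0 : 0 ≤ M := Finset.sum_nonneg fun i _ => abs_nonneg _
    refine ⟨δ / (2 * (M + 1)), by positivity, ?_⟩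
    set t := δ / (2 * (M + 1)) with ht
    have htpos : 0 < t := by positivity
    have htM : t * M < δ := by
      rw [ht]
      rw [div_mul_eq_mul_div, div_lt_iff₀ (by positivity)]
      nlinarith
    intro u huK hune
    have hr : 0 < ‖u‖ := norm_pos_iff.mpr hune
    set w := ‖u‖⁻¹ • u with hw
    have hwK : w ∈ K := hKcone _ (inv_nonneg.mpr (norm_nonneg _)) _ huK
    have hwnorm : ‖w‖ = 1 := by
      rw [hw, norm_smul, norm_inv, norm_norm]
      exact inv_mul_cancel₀ (ne_of_gt hr)
    have hwB : w ∈ B := ⟨hwK, by rw [Metric.mem_sphere, dist_zero_right]; exact hwnorm⟩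
    have hlamw : δ ≤ lam ⬝ᵥ w := hmin hwB
    have hmuw : mu ⬝ᵥ w ≤ M := by
      have h1 : mu ⬝ᵥ w ≤ |mu ⬝ᵥ w| := le_abs_self _
      have h2 : |mu ⬝ᵥ w| ≤ ∑ i, |mu i * w i| := Finset.abs_sum_le_sum_abs _ _
      have h3 : ∀ i, |mu i * w i| ≤ |mu i| := by
        intro i
        rw [abs_mul]
        have : |w i| ≤ 1 := by
          have := norm_le_pi_norm w i
          rwa [Real.norm_eq_abs, hwnorm] at this
        nlinarith [abs_nonneg (mu i)]
      have h4 : ∑ i, |mu i * w i| ≤ M := Finset.sum_le_sum fun i _ => h3 i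
      linarith
    have hwpos : 0 < (lam - t • mu) ⬝ᵥ w := by
      rw [sub_dotProduct, smul_dotProduct]
      simp only [smul_eq_mul]
      nlinarith
    have huw : u = ‖u‖ • w := by
      rw [hw, smul_smul, mul_inv_cancel₀ (ne_of_gt hr), one_smul]
    rw [huw, dotProduct_smul]
    simp only [smul_eq_mul]
    exact mul_pos hr hwpos


theorem adj_aux {α β : ℕ} (M : Matrix (Fin α) (Fin β) ℝ) (v : Fin α → ℝ) (w : Fin β → ℝ) :
    v ⬝ᵥ (M *ᵥ w) = (Mᵀ *ᵥ v) ⬝ᵥ w := by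
  rw [Matrix.dotProduct_mulVec, Matrix.mulVec_transpose]

theorem tsub_aux {k m n : ℕ} (L : Matrix (Fin k) (Fin n) ℝ) (M : Matrix (Fin k) (Fin m) ℝ)
    (A : Matrix (Fin m) (Fin n) ℝ) (w : Fin k → ℝ) :
    (L - M * A)ᵀ *ᵥ w = Lᵀ *ᵥ w - Aᵀ *ᵥ (Mᵀ *ᵥ w) := by
  rw [Matrix.transpose_sub, Matrix.sub_mulVec, Matrix.transpose_mul, ← Matrix.mulVec_mulVec]

theorem stmt5 (k n m : ℕ) (K : Set (Fin k → ℝ))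
    (hKcone : ∀ (c : ℝ), 0 ≤ c → ∀ x ∈ K, c • x ∈ K)
    (hKclosed : IsClosed K) (hKconvex : Convex ℝ K)
    (hKpointed : K ∩ (-K) = {0})
    (hKne : K ≠ {0}) (hKuniv : K ≠ Set.univ)
    (L : Matrix (Fin k) (Fin n) ℝ) (A : Matrix (Fin m) (Fin n) ℝ) (b : Fin m → ℝ)
    (lbar : Fin k → ℝ) (Ubar : Matrix (Fin k) (Fin m) ℝ) (vbar : Fin k → ℝ)
    (hfeas : (∀ u ∈ K, u ≠ 0 → 0 < lbar ⬝ᵥ u) ∧ lbar ⬝ᵥ vbar = 0 ∧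
      ∀ i, 0 ≤ ((L - Ubar * A)ᵀ *ᵥ lbar) i)
    (hmax : ¬ ∃ (l : Fin k → ℝ) (U : Matrix (Fin k) (Fin m) ℝ) (v : Fin k → ℝ),
      ((∀ u ∈ K, u ≠ 0 → 0 < l ⬝ᵥ u) ∧ l ⬝ᵥ v = 0 ∧
        ∀ i, 0 ≤ ((L - U * A)ᵀ *ᵥ l) i) ∧
      (U *ᵥ b + v) - (Ubar *ᵥ b + vbar) ∈ K ∧
      (U *ᵥ b + v) - (Ubar *ᵥ b + vbar) ≠ 0) :
    ∃ xbar : Fin n → ℝ, ((∀ i, 0 ≤ xbar i) ∧ A *ᵥ xbar = b) ∧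
      (¬ ∃ x : Fin n → ℝ, ((∀ i, 0 ≤ x i) ∧ A *ᵥ x = b) ∧
        L *ᵥ xbar - L *ᵥ x ∈ K ∧ L *ᵥ xbar - L *ᵥ x ≠ 0) ∧
      L *ᵥ xbar = Ubar *ᵥ b + vbar := by
  obtain ⟨hstrict, hcomp, hpos⟩ := hfeas
  set c : Fin k → ℝ := Ubar *ᵥ b + vbar with hc
  -- basic facts about K
  have h0K : (0 : Fin k → ℝ) ∈ K := by
    have h0 : (0 : Fin k → ℝ) ∈ ({0} : Set (Fin k → ℝ)) := rfl
    rw [← hKpointed] at h0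
    exact h0.1
  have hex : ∃ d ∈ K, d ≠ (0 : Fin k → ℝ) := by
    by_contra h
    push_neg at h
    apply hKne
    ext u
    simp only [Set.mem_singleton_iff]
    exact ⟨fun hu => h u hu, fun hu => hu ▸ h0K⟩
  obtain ⟨d, hdK, hdne⟩ := hex
  -- rewrite hpos using the transpose identity
  have hpos' : ∀ i, (Aᵀ *ᵥ (Ubarᵀ *ᵥ lbar)) i ≤ (Lᵀ *ᵥ lbar) i := by
    intro i
    have := hpos i
    rw [tsub_aux] at this
    simp only [Pi.sub_apply] at this
    linarith
  -- the combined system is feasible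
  have hsys : ∃ x : Fin n → ℝ, (∀ i, 0 ≤ x i) ∧ A *ᵥ x = b ∧ L *ᵥ x = c := by
    rcases farkas_aux (m + k) n
        (fun j => Fin.append (fun i => A i j) (fun i => L i j))
        (Fin.append b c) with ⟨x, hx, hsum⟩ | ⟨z, hz, hzq⟩
    · refine ⟨x, hx, ?_, ?_⟩
      · funext i
        have h1 := congrFun hsum (Fin.castAdd k i)
        rw [Finset.sum_apply] at h1
        simp only [Pi.smul_apply, smul_eq_mul, Fin.append_left] at h1
        rw [show (A *ᵥ x) i = ∑ j, A i j * x j from rfl]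
        rw [← h1]
        exact Finset.sum_congr rfl fun j _ => mul_comm _ _
      · funext i
        have h1 := congrFun hsum (Fin.natAdd m i)
        rw [Finset.sum_apply] at h1
        simp only [Pi.smul_apply, smul_eq_mul, Fin.append_right] at h1
        rw [show (L *ᵥ x) i = ∑ j, L i j * x j from rfl]
        rw [← h1]
        exact Finset.sum_congr rfl fun j _ => mul_comm _ _
    · -- construct an improving dual solution, contradiction with hmax
      exfalso
      apply hmax
      set y : Fin m → ℝ := fun i => z (Fin.castAdd k i) with hy
      set mu : Fin k → ℝ := fun i => z (Fin.natAdd m i) with hmu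
      have hz' : ∀ j, (Aᵀ *ᵥ y) j + (Lᵀ *ᵥ mu) j ≤ 0 := by
        intro j
        have := hz j
        rw [show (Fin.append (fun i => A i j) (fun i => L i j)) ⬝ᵥ z
            = ∑ i : Fin (m + k), (Fin.append (fun i => A i j) (fun i => L i j)) i * z i
            from rfl, Fin.sum_univ_add] at this
        simp only [Fin.append_left, Fin.append_right] at this
        rw [show (Aᵀ *ᵥ y) j = ∑ i, A i j * y i from rfl,
          show (Lᵀ *ᵥ mu) j = ∑ i, L i j * mu i from rfl]
        exact this
      have hδ : 0 < b ⬝ᵥ y + c ⬝ᵥ mu := by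
        have := hzq
        rw [show (Fin.append b c) ⬝ᵥ z = ∑ i : Fin (m + k), (Fin.append b c) i * z i from rfl,
          Fin.sum_univ_add] at this
        simp only [Fin.append_left, Fin.append_right] at this
        exact this
      obtain ⟨t, htpos, hlpos⟩ := perturb_aux K hKclosed hKcone lbar mu hstrict
      set l : Fin k → ℝ := lbar - t • mu with hl
      set p : Fin m → ℝ := (Ubarᵀ *ᵥ lbar) + t • y with hp
      have hld : 0 < l ⬝ᵥ d := hlpos d hdK hdne
      have hlne : l ≠ 0 := by
        intro h
        rw [h, zero_dotProduct] at hld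
        exact lt_irrefl _ hld
      have hll : 0 < l ⬝ᵥ l := by
        have h1 : (0:ℝ) ≤ l ⬝ᵥ l := Finset.sum_nonneg fun i _ => mul_self_nonneg _
        rcases h1.lt_or_eq with h | h
        · exact h
        · exact absurd (dotProduct_self_eq_zero.mp h.symm) hlne
      -- key scalar computation
      have hkey : b ⬝ᵥ p - l ⬝ᵥ c = t * (b ⬝ᵥ y + c ⬝ᵥ mu) := by
        have e1 : b ⬝ᵥ p = b ⬝ᵥ (Ubarᵀ *ᵥ lbar) + t * (b ⬝ᵥ y) := by
          rw [hp, dotProduct_add, dotProduct_smul, smul_eq_mul]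
        have e2 : l ⬝ᵥ c = lbar ⬝ᵥ c - t * (mu ⬝ᵥ c) := by
          rw [hl, sub_dotProduct, smul_dotProduct, smul_eq_mul]
        have e3 : lbar ⬝ᵥ c = lbar ⬝ᵥ (Ubar *ᵥ b) := by
          rw [hc, dotProduct_add, hcomp, add_zero]
        have e4 : b ⬝ᵥ (Ubarᵀ *ᵥ lbar) = lbar ⬝ᵥ (Ubar *ᵥ b) := by
          rw [dotProduct_comm, ← adj_aux]
        have e5 : mu ⬝ᵥ c = c ⬝ᵥ mu := dotProduct_comm _ _
        have e6 : b ⬝ᵥ y = b ⬝ᵥ y := rfl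
        rw [e1, e2, e3, e4, e5]
        ring
      set s : ℝ := (b ⬝ᵥ p - l ⬝ᵥ c) / (l ⬝ᵥ d) with hs
      have hspos : 0 < s := by
        rw [hs]
        exact div_pos (hkey ▸ mul_pos htpos hδ) hld
      set U : Matrix (Fin k) (Fin m) ℝ := Matrix.of (fun i j => l i * p j / (l ⬝ᵥ l)) with hU
      have hUl : Uᵀ *ᵥ l = p := by
        funext j
        rw [show (Uᵀ *ᵥ l) j = ∑ i, U i j * l i from rfl]
        have : ∀ i : Fin k, U i j * l i = (p j / (l ⬝ᵥ l)) * (l i * l i) := by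
          intro i
          rw [hU]
          simp only [Matrix.of_apply]
          ring
        rw [Finset.sum_congr rfl fun i _ => this i, ← Finset.mul_sum,
          show ∑ i, l i * l i = l ⬝ᵥ l from rfl]
        field_simp
      set g : Fin k → ℝ := c + s • d with hg
      set v : Fin k → ℝ := g - U *ᵥ b with hv
      have hUbv : U *ᵥ b + v = g := by rw [hv]; abel
      refine ⟨l, U, v, ⟨fun u hu hune => hlpos u hu hune, ?_, ?_⟩, ?_, ?_⟩
      · -- l ⬝ᵥ v = 0
        have e1 : l ⬝ᵥ (U *ᵥ b) = p ⬝ᵥ b := by rw [adj_aux, hUl]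
        have e2 : l ⬝ᵥ g = l ⬝ᵥ c + s * (l ⬝ᵥ d) := by
          rw [hg, dotProduct_add, dotProduct_smul, smul_eq_mul]
        have e3 : s * (l ⬝ᵥ d) = b ⬝ᵥ p - l ⬝ᵥ c := by
          rw [hs]
          field_simp
        have e4 : p ⬝ᵥ b = b ⬝ᵥ p := dotProduct_comm _ _
        rw [hv, dotProduct_sub, e1, e2, e3, e4]
        ring
      · -- feasibility of (l, U, v)
        intro i
        rw [tsub_aux, hUl]
        simp only [Pi.sub_apply]
        have eL : (Lᵀ *ᵥ l) i = (Lᵀ *ᵥ lbar) i - t * (Lᵀ *ᵥ mu) i := by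
          rw [hl, Matrix.mulVec_sub]
          simp only [Pi.sub_apply]
          congr 1
          rw [Matrix.mulVec_smul]
          simp
        have eA : (Aᵀ *ᵥ p) i = (Aᵀ *ᵥ (Ubarᵀ *ᵥ lbar)) i + t * (Aᵀ *ᵥ y) i := by
          rw [hp, Matrix.mulVec_add]
          simp only [Pi.add_apply]
          congr 1
          rw [Matrix.mulVec_smul]
          simp
        rw [eL, eA]
        have h1 := hpos' i
        have h2 := hz' i
        nlinarith
      · -- improvement in K
        rw [hUbv, hg, hc]
        have : c + s • d - c = s • d := by abel
        rw [← hc, this]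
        exact hKcone s hspos.le d hdK
      · -- nonzero
        rw [hUbv, hg, hc]
        have : c + s • d - c = s • d := by abel
        rw [← hc, this]
        exact smul_ne_zero (ne_of_gt hspos) hdne
  -- final assembly
  obtain ⟨xbar, hxpos, hAx, hLx⟩ := hsys
  refine ⟨xbar, ⟨hxpos, hAx⟩, ?_, hLx⟩
  rintro ⟨x, ⟨hxp, hAx'⟩, hKm, hKne'⟩
  have h1 : 0 < lbar ⬝ᵥ (L *ᵥ xbar - L *ᵥ x) := hstrict _ hKm hKne'
  have h2 : lbar ⬝ᵥ (L *ᵥ xbar) = lbar ⬝ᵥ c := by rw [hLx]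
  have h3 : lbar ⬝ᵥ c = (Aᵀ *ᵥ (Ubarᵀ *ᵥ lbar)) ⬝ᵥ x := by
    rw [hc, dotProduct_add, hcomp, add_zero, adj_aux, ← hAx', adj_aux]
  have h4 : (Aᵀ *ᵥ (Ubarᵀ *ᵥ lbar)) ⬝ᵥ x ≤ (Lᵀ *ᵥ lbar) ⬝ᵥ x :=
    Finset.sum_le_sum fun i _ => mul_le_mul_of_nonneg_right (hpos' i) (hxp i)
  have h5 : (Lᵀ *ᵥ lbar) ⬝ᵥ x = lbar ⬝ᵥ (L *ᵥ x) := (adj_aux L lbar x).symm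
  have h6 : lbar ⬝ᵥ (L *ᵥ xbar - L *ᵥ x)
      = lbar ⬝ᵥ (L *ᵥ xbar) - lbar ⬝ᵥ (L *ᵥ x) := dotProduct_sub _ _ _
  linarith
end

section
/- The set of minimal elements of L(𝒜) with respect to K equals the set of maximal elements of h(ℬ) with respect to K, where 𝒜 = {x ∈ ℝ^n_+ : Ax = b}, ℬ = {(λ, U, v) ∈ K*⁰ × ℝ^{k×m} × ℝ^k : λᵀv = 0, (L − UA)ᵀλ ∈ ℝ^n_+} and h(λ, U, v) = Ub + v. -/
open Matrix

open Matrix Finset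

variable {p : ℕ} {η ι : Type} [Fintype η] [Fintype ι] [DecidableEq ι]

/-- Carathéodory for cones: reduce to linearly independent support. -/
lemma conic_carat (v : ι → (η → ℝ)) :
    ∀ (N : ℕ) (s : Finset ι) (x : ι → ℝ), s.card ≤ N → (∀ i, 0 ≤ x i) →
      (∀ i, x i ≠ 0 → i ∈ s) →
    ∃ (t : Finset ι) (x' : ι → ℝ), (∀ i, 0 ≤ x' i) ∧ (∀ i, x' i ≠ 0 → i ∈ t) ∧
      (∑ i, x' i • v i = ∑ i, x i • v i) ∧ LinearIndependent ℝ (fun i : t => v i) := by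
  intro N
  induction N with
  | zero =>
    intro s x hcard hx hsupp
    refine ⟨∅, x, hx, ?_, rfl, linearIndependent_empty_type⟩
    intro i hi
    have := hsupp i hi
    have : s = ∅ := Finset.card_eq_zero.mp (Nat.le_zero.mp hcard)
    simp_all
  | succ N ih =>
    intro s x hcard hx hsupp
    by_cases hli : LinearIndependent ℝ (fun i : s => v i)
    · exact ⟨s, x, hx, hsupp, rfl, hli⟩
    · obtain ⟨g, hg0, i₁, hgi₁⟩ := Fintype.not_linearIndependent_iff.mp hli
      -- build c : ι → ℝ supported in s with ∑ c i • v i = 0 and some positive entry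
      have key : ∃ c : ι → ℝ, (∀ i, c i ≠ 0 → i ∈ s) ∧ (∑ i, c i • v i = 0) ∧
          ∃ i, 0 < c i := by
        set c0 : ι → ℝ := fun i => if h : i ∈ s then g ⟨i, h⟩ else 0 with hc0
        have hsum : ∑ i, c0 i • v i = 0 := by
          rw [← Finset.sum_subset (Finset.subset_univ s)]
          · rw [← hg0, ← Finset.sum_attach s (fun i => c0 i • v i)]
            apply Finset.sum_congr rfl
            intro i _
            simp [hc0, i.2]
          · intro i _ hi
            simp [hc0, hi]
        have hsuppc : ∀ i, c0 i ≠ 0 → i ∈ s := by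
          intro i hi
          by_contra h
          simp [hc0, h] at hi
        have hne : c0 (i₁ : ι) ≠ 0 := by simp [hc0, i₁.2, hgi₁]
        rcases lt_or_gt_of_ne hne with h | h
        · refine ⟨-c0, fun i hi => hsuppc i (by simpa using hi), by
            simpa [neg_smul] using congrArg Neg.neg hsum, ⟨i₁, by simpa using h⟩⟩
        · exact ⟨c0, hsuppc, hsum, ⟨i₁, h⟩⟩
      obtain ⟨c, hcsupp, hcsum, i₂, hi₂⟩ := key
      set T : Finset ι := s.filter (fun i => 0 < c i) with hT
      have hTne : T.Nonempty := ⟨i₂, by simp [hT, hcsupp i₂ (ne_of_gt hi₂), hi₂]⟩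
      obtain ⟨i₀, hi₀T, hi₀min⟩ := Finset.exists_min_image T (fun i => x i / c i) hTne
      have hci₀ : 0 < c i₀ := (Finset.mem_filter.mp hi₀T).2
      set r : ℝ := x i₀ / c i₀ with hr
      have hr0 : 0 ≤ r := div_nonneg (hx i₀) hci₀.le
      set x' : ι → ℝ := fun i => x i - r * c i with hx'
      have hx'0 : ∀ i, 0 ≤ x' i := by
        intro i
        by_cases hc : 0 < c i
        · have hiT : i ∈ T := by simp [hT, hcsupp i (ne_of_gt hc), hc]
          have := hi₀min i hiT
          have : r * c i ≤ x i := by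
            rw [hr]
            calc x i₀ / c i₀ * c i ≤ x i / c i * c i := by
                  apply mul_le_mul_of_nonneg_right this hc.le
            _ = x i := div_mul_cancel₀ _ (ne_of_gt hc)
          simpa [hx'] using this
        · push_neg at hc
          have : r * c i ≤ 0 := mul_nonpos_of_nonneg_of_nonpos hr0 hc
          simp only [hx', sub_nonneg]
          linarith [hx i]
      have hx'sum : ∑ i, x' i • v i = ∑ i, x i • v i := by
        simp only [hx', sub_smul, Finset.sum_sub_distrib, mul_smul]
        rw [← Finset.smul_sum, hcsum, smul_zero, sub_zero]
      have hx'i₀ : x' i₀ = 0 := by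
        simp [hx', hr, div_mul_cancel₀ _ (ne_of_gt hci₀)]
      have hsupp' : ∀ i, x' i ≠ 0 → i ∈ s.erase i₀ := by
        intro i hi
        rcases eq_or_ne i i₀ with rfl | hne
        · exact absurd hx'i₀ hi
        · refine Finset.mem_erase.mpr ⟨hne, ?_⟩
          by_cases hxi : x i ≠ 0
          · exact hsupp i hxi
          · push_neg at hxi
            apply hcsupp i
            intro hci
            apply hi
            simp [hx', hxi, hci]
      have hcard' : (s.erase i₀).card ≤ N := by
        have : i₀ ∈ s := (Finset.mem_filter.mp hi₀T).1
        have := Finset.card_erase_of_mem this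
        omega
      obtain ⟨t, x'', h1, h2, h3, h4⟩ := ih (s.erase i₀) x' hcard' hx'0 hsupp'
      exact ⟨t, x'', h1, h2, h3.trans hx'sum, h4⟩

/-- A finitely generated cone is closed. -/
lemma fg_closed (v : ι → (η → ℝ)) :
    IsClosed {y : η → ℝ | ∃ x : ι → ℝ, (∀ i, 0 ≤ x i) ∧ ∑ i, x i • v i = y} := by
  have main : {y : η → ℝ | ∃ x : ι → ℝ, (∀ i, 0 ≤ x i) ∧ ∑ i, x i • v i = y} =
      ⋃ (t : Finset ι), ⋃ (_ : LinearIndependent ℝ (fun i : t => v i)),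
        {y | ∃ x : ι → ℝ, (∀ i, 0 ≤ x i) ∧ (∀ i, x i ≠ 0 → i ∈ t) ∧ ∑ i, x i • v i = y} := by
    ext y
    simp only [Set.mem_setOf_eq, Set.mem_iUnion]
    constructor
    · rintro ⟨x, hx, rfl⟩
      obtain ⟨t, x', h1, h2, h3, h4⟩ :=
        conic_carat v (Finset.univ.card) Finset.univ x (le_refl _) hx (fun i _ => Finset.mem_univ i)
      exact ⟨t, h4, x', h1, h2, h3⟩
    · rintro ⟨t, _, x, hx, _, rfl⟩
      exact ⟨x, hx, rfl⟩
  rw [main]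
  apply isClosed_iUnion_of_finite
  intro t
  apply isClosed_iUnion_of_finite
  intro hli
  -- the piece is the image of the nonnegative orthant under an injective linear map
  set φ : ({ x // x ∈ t } → ℝ) →ₗ[ℝ] (η → ℝ) :=
    { toFun := fun g => ∑ i : t, g i • v i
      map_add' := by intro a b; simp [add_smul, Finset.sum_add_distrib]
      map_smul' := by intro r a; simp [mul_smul, Finset.smul_sum] } with hφ
  have himg : {y : η → ℝ | ∃ x : ι → ℝ, (∀ i, 0 ≤ x i) ∧ (∀ i, x i ≠ 0 → i ∈ t) ∧
      ∑ i, x i • v i = y} = φ '' {g | ∀ i, 0 ≤ g i} := by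
    ext y
    simp only [Set.mem_setOf_eq, Set.mem_image]
    constructor
    · rintro ⟨x, hx, hsupp, rfl⟩
      refine ⟨fun i => x i, fun i => hx i, ?_⟩
      simp only [hφ, LinearMap.coe_mk, AddHom.coe_mk]
      show ∑ i : t, x i • v i = ∑ i, x i • v i
      rw [Finset.sum_coe_sort t (fun i => x i • v i)]
      apply Finset.sum_subset (Finset.subset_univ t)
      intro i _ hi
      have : x i = 0 := by
        by_contra h
        exact hi (hsupp i h)
      simp [this]
    · rintro ⟨g, hg, rfl⟩
      refine ⟨fun i => if h : i ∈ t then g ⟨i, h⟩ else 0, ?_, ?_, ?_⟩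
      · intro i
        by_cases h : i ∈ t <;> simp [h, hg]
      · intro i hi
        by_contra h
        simp [h] at hi
      · simp only [hφ, LinearMap.coe_mk, AddHom.coe_mk]
        show _ = ∑ i : t, g i • v i
        rw [← Finset.sum_subset (Finset.subset_univ t), ← Finset.sum_attach t]
        · apply Finset.sum_congr rfl
          intro i _
          simp [i.2]
        · intro i _ hi
          simp [hi]
  rw [himg]
  have hinj : LinearMap.ker φ = ⊥ := by
    rw [LinearMap.ker_eq_bot']
    intro g hg
    have := Fintype.linearIndependent_iff.mp hli g hg
    funext i
    exact this i
  have hce := LinearMap.isClosedEmbedding_of_injective hinj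
  apply hce.isClosedMap
  have : {g : { x // x ∈ t } → ℝ | ∀ i, 0 ≤ g i} = ⋂ i, {g | 0 ≤ g i} := by
    ext g; simp
  rw [this]
  apply isClosed_iInter
  intro i
  exact isClosed_le continuous_const (continuous_apply i)

section Helpers
variable {η ι : Type} [Fintype η] [Fintype ι] [DecidableEq ι]

lemma dual_vec_s6 [DecidableEq η] (f : (η → ℝ) →L[ℝ] ℝ) : ∃ g : η → ℝ, ∀ x, f x = g ⬝ᵥ x := by
  refine ⟨fun j => f (Pi.single j (1:ℝ) : η → ℝ), fun x => ?_⟩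
  have hx : x = ∑ j, x j • (Pi.single j (1:ℝ) : η → ℝ) := by
    funext i
    rw [Finset.sum_apply]
    simp [Pi.single_apply]
  conv_lhs => rw [hx]
  rw [map_sum]
  simp only [_root_.map_smul]
  rw [dotProduct]
  apply Finset.sum_congr rfl
  intro j _
  simp [mul_comm]

lemma cone_sep {S : Set (η → ℝ)} [DecidableEq η] (hconv : Convex ℝ S) (hclosed : IsClosed S)
    (h0 : (0 : η → ℝ) ∈ S) (hscale : ∀ c : ℝ, 0 < c → ∀ z ∈ S, c • z ∈ S)
    {d : η → ℝ} (hd : d ∉ S) :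
    ∃ g : η → ℝ, (∀ z ∈ S, 0 ≤ g ⬝ᵥ z) ∧ g ⬝ᵥ d < 0 := by
  obtain ⟨f, u, hfd, hfS⟩ := geometric_hahn_banach_point_closed hconv hclosed hd
  have hu0 : u < 0 := by simpa using hfS 0 h0
  have hfz : ∀ z ∈ S, 0 ≤ f z := by
    intro z hz
    by_contra h
    push_neg at h
    set c : ℝ := (u - 1) / f z with hc
    have hcpos : 0 < c := div_pos_of_neg_of_neg (by linarith) h
    have := hfS _ (hscale c hcpos z hz)
    rw [f.map_smul] at this
    simp only [smul_eq_mul, hc] at this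
    rw [div_mul_cancel₀ _ (ne_of_lt h)] at this
    linarith
  obtain ⟨g, hg⟩ := dual_vec_s6 f
  exact ⟨g, fun z hz => (hg z) ▸ hfz z hz, by rw [← hg]; linarith⟩

lemma fgcone_convex (v : ι → (η → ℝ)) :
    Convex ℝ {y : η → ℝ | ∃ x : ι → ℝ, (∀ i, 0 ≤ x i) ∧ ∑ i, x i • v i = y} := by
  rintro y₁ ⟨x₁, hx₁, rfl⟩ y₂ ⟨x₂, hx₂, rfl⟩ a b ha hb _
  refine ⟨fun i => a * x₁ i + b * x₂ i, fun i => add_nonneg (mul_nonneg ha (hx₁ i)) (mul_nonneg hb (hx₂ i)), ?_⟩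
  simp only [add_smul, mul_smul, Finset.sum_add_distrib, ← Finset.smul_sum]

lemma fgcone_zero (v : ι → (η → ℝ)) :
    (0 : η → ℝ) ∈ {y : η → ℝ | ∃ x : ι → ℝ, (∀ i, 0 ≤ x i) ∧ ∑ i, x i • v i = y} :=
  ⟨0, fun i => le_refl _, by simp⟩

lemma fgcone_smul (v : ι → (η → ℝ)) (c : ℝ) (hc : 0 < c) :
    ∀ z ∈ {y : η → ℝ | ∃ x : ι → ℝ, (∀ i, 0 ≤ x i) ∧ ∑ i, x i • v i = y},
      c • z ∈ {y : η → ℝ | ∃ x : ι → ℝ, (∀ i, 0 ≤ x i) ∧ ∑ i, x i • v i = y} := by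
  rintro z ⟨x, hx, rfl⟩
  refine ⟨fun i => c * x i, fun i => mul_nonneg hc.le (hx i), ?_⟩
  simp only [mul_smul, ← Finset.smul_sum]

lemma mulVec_eq_sum' {p q : ℕ} (M : Matrix (Fin p) (Fin q) ℝ) (x : Fin q → ℝ) :
    M *ᵥ x = ∑ j, x j • (fun i => M i j) := by
  funext i
  rw [Finset.sum_apply]
  simp only [Pi.smul_apply, smul_eq_mul]
  simp [Matrix.mulVec, dotProduct, mul_comm]

lemma row_dot_eq_sum {p : ℕ} (row : η → (Fin p → ℝ)) (μ : Fin p → ℝ) :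
    (fun e => row e ⬝ᵥ μ) = ∑ i, μ i • (fun e => row e i) := by
  funext e
  rw [Finset.sum_apply]
  simp [dotProduct, mul_comm]

end Helpers

section Farkas
variable {η : Type} [Fintype η] [DecidableEq η]

lemma farkas_ineq {p : ℕ} (row : η → (Fin p → ℝ)) (q : η → ℝ)
    (h : ¬ ∃ μ : Fin p → ℝ, ∀ e, row e ⬝ᵥ μ ≤ q e) :
    ∃ y : η → ℝ, (∀ e, 0 ≤ y e) ∧ (∑ e, y e • row e) = 0 ∧ q ⬝ᵥ y < 0 := by
  classical
  set v : ((Fin p ⊕ Fin p) ⊕ η) → (η → ℝ) :=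
    Sum.elim (Sum.elim (fun i e => row e i) (fun i e => -(row e i))) (fun e' => Pi.single e' 1)
    with hv
  set S := {y : η → ℝ | ∃ x : ((Fin p ⊕ Fin p) ⊕ η) → ℝ, (∀ i, 0 ≤ x i) ∧ ∑ i, x i • v i = y}
    with hS
  have hsingle : ∀ (s' : η → ℝ) (e : η), ∑ e' : η, s' e' * (Pi.single e' (1:ℝ) : η → ℝ) e = s' e := by
    intro s' e
    rw [Finset.sum_eq_single e]
    · simp
    · intro b _ hb; simp [Pi.single_apply, hb]
    · simp
  have hmem : ∀ z : η → ℝ, z ∈ S ↔ ∃ (μ : Fin p → ℝ) (s : η → ℝ),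
      (∀ e, 0 ≤ s e) ∧ (∀ e, row e ⬝ᵥ μ + s e = z e) := by
    intro z
    constructor
    · rintro ⟨x, hx, rfl⟩
      refine ⟨fun i => x (Sum.inl (Sum.inl i)) - x (Sum.inl (Sum.inr i)),
        fun e => x (Sum.inr e), fun e => hx _, ?_⟩
      intro e
      rw [Finset.sum_apply, Fintype.sum_sum_type, Fintype.sum_sum_type]
      simp only [hv, Sum.elim_inl, Sum.elim_inr, Pi.smul_apply, smul_eq_mul]
      rw [hsingle (fun e' => x (Sum.inr e')) e, dotProduct]
      have : ∑ i, row e i * (x (Sum.inl (Sum.inl i)) - x (Sum.inl (Sum.inr i)))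
          = ∑ i, (x (Sum.inl (Sum.inl i)) * row e i + x (Sum.inl (Sum.inr i)) * -(row e i)) := by
        apply Finset.sum_congr rfl; intro i _; ring
      rw [this]
      try rw [Finset.sum_add_distrib]
      try ring
    · rintro ⟨μ, s, hs, hz⟩
      refine ⟨Sum.elim (Sum.elim (fun i => max (μ i) 0) (fun i => max (-μ i) 0)) s, ?_, ?_⟩
      · rintro (⟨i | i⟩ | e) <;> simp [hs, le_max_right]
      · funext e
        rw [Finset.sum_apply, Fintype.sum_sum_type, Fintype.sum_sum_type]
        simp only [hv, Sum.elim_inl, Sum.elim_inr, Pi.smul_apply, smul_eq_mul]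
        rw [hsingle s e, ← hz e, dotProduct]
        have : ∀ i, max (μ i) 0 * row e i + max (-μ i) 0 * -(row e i) = row e i * μ i := by
          intro i
          rcases le_total (μ i) 0 with h' | h'
          · rw [max_eq_right h', max_eq_left (by linarith)]; ring
          · rw [max_eq_left h', max_eq_right (by linarith)]; ring
        rw [← Finset.sum_add_distrib]
        rw [Finset.sum_congr rfl (fun i _ => this i)]
  have hqS : q ∉ S := by
    intro hq
    obtain ⟨μ, s, hs, hz⟩ := (hmem q).mp hq
    exact h ⟨μ, fun e => by have := hz e; nlinarith [hs e]⟩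
  obtain ⟨g, hgS, hgq⟩ := cone_sep (fgcone_convex v) (fg_closed v) (fgcone_zero v)
    (fun c hc => fgcone_smul v c hc) hqS
  refine ⟨g, ?_, ?_, by rwa [dotProduct_comm]⟩
  · intro e
    have : Pi.single e (1:ℝ) ∈ S := (hmem _).mpr ⟨0, Pi.single e 1, by
      intro e'; by_cases h' : e' = e <;> simp [h', Pi.single_apply], by
      intro e'; simp⟩
    have := hgS _ this
    rw [dotProduct] at this
    rw [Finset.sum_eq_single e] at this
    · simpa using this
    · intro b _ hb; simp [Pi.single_apply, hb]
    · simp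
  · funext i
    have h1 : (fun e => row e i) ∈ S := (hmem _).mpr
      ⟨Pi.single i 1, 0, fun e => le_refl _, by
        intro e; simp [dotProduct_single]⟩
    have h2 : (fun e => -(row e i)) ∈ S := (hmem _).mpr
      ⟨-(Pi.single i 1), 0, fun e => le_refl _, by
        intro e; simp [dotProduct_single]⟩
    have e1 := hgS _ h1
    have e2 := hgS _ h2
    have : g ⬝ᵥ (fun e => row e i) = 0 := by
      rw [show (fun e => -(row e i)) = -(fun e => row e i) from rfl, dotProduct_neg] at e2
      linarith
    rw [Finset.sum_apply]
    simp only [Pi.smul_apply, smul_eq_mul]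
    rw [dotProduct] at this
    simpa using this
end Farkas
section LP
open Matrix Finset

-- Farkas for equalities: infeasibility certificate
lemma farkas_eq {n' m' : ℕ} (A : Matrix (Fin m') (Fin n') ℝ) (b : Fin m' → ℝ)
    (h : ¬ ∃ x : Fin n' → ℝ, (∀ i, 0 ≤ x i) ∧ A *ᵥ x = b) :
    ∃ d : Fin m' → ℝ, (∀ j, (Aᵀ *ᵥ d) j ≤ 0) ∧ 0 < b ⬝ᵥ d := by
  classical
  set v : Fin n' → (Fin m' → ℝ) := fun j => (fun i => A i j) with hv
  set S := {y : Fin m' → ℝ | ∃ x : Fin n' → ℝ, (∀ i, 0 ≤ x i) ∧ ∑ i, x i • v i = y} with hS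
  have hbS : b ∉ S := by
    rintro ⟨x, hx, hsum⟩
    exact h ⟨x, hx, by rw [mulVec_eq_sum' A x]; exact hsum⟩
  obtain ⟨g, hgS, hgb⟩ := cone_sep (fgcone_convex v) (fg_closed v) (fgcone_zero v)
    (fun c hc => fgcone_smul v c hc) hbS
  refine ⟨-g, ?_, ?_⟩
  · intro j
    have hmem : v j ∈ S := ⟨Pi.single j 1, by
      intro i; by_cases h' : i = j <;> simp [h', Pi.single_apply], by
      rw [Finset.sum_eq_single j]
      · simp
      · intro b' _ hb'; simp [Pi.single_apply, hb']
      · simp⟩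
    have := hgS _ hmem
    have hAt : (Aᵀ *ᵥ (-g)) j = -(g ⬝ᵥ v j) := by
      simp only [Matrix.mulVec, dotProduct, Matrix.transpose_apply, Pi.neg_apply, hv]
      rw [← Finset.sum_neg_distrib]
      exact Finset.sum_congr rfl (fun i _ => by ring)
    rw [hAt]
    linarith
  · rw [dotProduct_neg]
    have h2 : b ⬝ᵥ g = g ⬝ᵥ b := dotProduct_comm _ _
    linarith [h2]

-- Strong duality (bound form): any lower bound on the primal is dominated by a dual value
lemma strong_duality_bound {n' m' : ℕ} (A : Matrix (Fin m') (Fin n') ℝ) (b : Fin m' → ℝ)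
    (c : Fin n' → ℝ) (γ : ℝ) (x0 : Fin n' → ℝ) (hx00 : ∀ i, 0 ≤ x0 i) (hx0b : A *ᵥ x0 = b)
    (hlb : ∀ x : Fin n' → ℝ, (∀ i, 0 ≤ x i) → A *ᵥ x = b → γ ≤ c ⬝ᵥ x) :
    ∃ μ : Fin m' → ℝ, (∀ j, (Aᵀ *ᵥ μ) j ≤ c j) ∧ γ ≤ b ⬝ᵥ μ := by
  classical
  by_contra hno
  -- set up the inequality system  (Aᵀ μ ≤ c, -b⬝μ ≤ -γ)
  set row : (Fin n' ⊕ Unit) → (Fin m' → ℝ) :=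
    Sum.elim (fun j => (fun i => A i j)) (fun _ => -b) with hrow
  set q : (Fin n' ⊕ Unit) → ℝ := Sum.elim c (fun _ => -γ) with hq
  have hsys : ¬ ∃ μ : Fin m' → ℝ, ∀ e, row e ⬝ᵥ μ ≤ q e := by
    rintro ⟨μ, hμ⟩
    apply hno
    refine ⟨μ, ?_, ?_⟩
    · intro j
      have := hμ (Sum.inl j)
      simpa [hrow, hq, Matrix.mulVec, dotProduct, Matrix.transpose_apply] using this
    · have := hμ (Sum.inr ())
      simp only [hrow, hq, Sum.elim_inr, neg_dotProduct] at this
      have h2 : μ ⬝ᵥ b = b ⬝ᵥ μ := dotProduct_comm _ _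
      linarith [this, h2]
  obtain ⟨y, hy0, hysum, hyq⟩ := farkas_ineq row q hsys
  set x : Fin n' → ℝ := fun j => y (Sum.inl j) with hx
  set t : ℝ := y (Sum.inr ()) with ht
  have hxt : A *ᵥ x = t • b := by
    funext i
    have := congrFun hysum i
    rw [Finset.sum_apply, Fintype.sum_sum_type] at this
    simp only [hrow, Sum.elim_inl, Sum.elim_inr, Pi.smul_apply, smul_eq_mul,
      Finset.univ_unique, Finset.sum_singleton, Pi.zero_apply, Pi.neg_apply] at this
    have hAx : (A *ᵥ x) i = ∑ j, y (Sum.inl j) * A i j := by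
      simp [Matrix.mulVec, dotProduct, hx, mul_comm]
    rw [hAx]
    simp only [Pi.smul_apply, smul_eq_mul, ht]
    linarith [this]
  have hqy : c ⬝ᵥ x - γ * t < 0 := by
    rw [dotProduct] at hyq ⊢
    rw [Fintype.sum_sum_type] at hyq
    simp only [hq, Sum.elim_inl, Sum.elim_inr, Finset.univ_unique, Finset.sum_singleton] at hyq
    have : ∑ j, c j * x j = ∑ j, c j * y (Sum.inl j) := rfl
    rw [this]
    linarith [hyq]
  have ht0 : 0 ≤ t := hy0 (Sum.inr ())
  rcases eq_or_lt_of_le ht0 with hteq | htpos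
  · -- t = 0 : unbounded ray
    have hAx0 : A *ᵥ x = 0 := by rw [hxt, ← hteq]; simp
    have hcx : c ⬝ᵥ x < 0 := by rw [← hteq] at hqy; simpa using hqy
    set s : ℝ := max ((γ - 1 - c ⬝ᵥ x0) / (c ⬝ᵥ x)) 0 with hs
    have hs0 : 0 ≤ s := le_max_right _ _
    have hfeas : A *ᵥ (x0 + s • x) = b := by
      rw [Matrix.mulVec_add, Matrix.mulVec_smul, hAx0, hx0b]; simp
    have hge := hlb (x0 + s • x) (fun i => add_nonneg (hx00 i) (smul_nonneg hs0 (hy0 _))) hfeas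
    rw [dotProduct_add, dotProduct_smul] at hge
    have hkey : s * (c ⬝ᵥ x) ≤ (γ - 1 - c ⬝ᵥ x0) := by
      have h1 : (γ - 1 - c ⬝ᵥ x0) / (c ⬝ᵥ x) ≤ s := le_max_left _ _
      have := mul_le_mul_of_nonpos_right h1 hcx.le
      rwa [div_mul_cancel₀ _ (ne_of_lt hcx)] at this
    simp only [smul_eq_mul] at hge
    linarith
  · -- t > 0 : scaled feasible point beats the lower bound
    have hfeas : A *ᵥ (t⁻¹ • x) = b := by
      rw [Matrix.mulVec_smul, hxt, smul_smul, inv_mul_cancel₀ (ne_of_gt htpos), one_smul]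
    have hge := hlb (t⁻¹ • x) (fun i => smul_nonneg (inv_nonneg.mpr ht0) (hy0 _)) hfeas
    rw [dotProduct_smul] at hge
    have : γ * t ≤ c ⬝ᵥ x := by
      rw [smul_eq_mul, ← div_eq_inv_mul, le_div_iff₀ htpos] at hge
      linarith
    linarith
end LP
section ConeGeom
open Matrix Finset

variable {k : ℕ} {K : Set (Fin k → ℝ)}

lemma dot_sum_left (t : Finset (Fin k → ℝ)) (u : Fin k → ℝ) :
    (∑ y ∈ t, y) ⬝ᵥ u = ∑ y ∈ t, y ⬝ᵥ u := by
  simp only [dotProduct, Finset.sum_apply, Finset.sum_mul]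
  exact Finset.sum_comm

lemma dot_continuous (l : Fin k → ℝ) : Continuous (fun u : Fin k → ℝ => l ⬝ᵥ u) := by
  simp only [dotProduct]
  exact continuous_finset_sum _ (fun i _ => continuous_const.mul (continuous_apply i))

lemma cone_zero_mem (hKpointed : K ∩ (-K) = {0}) : (0 : Fin k → ℝ) ∈ K := by
  have : (0 : Fin k → ℝ) ∈ K ∩ (-K) := by rw [hKpointed]; rfl
  exact this.1

lemma cone_add (hKcone : ∀ (c : ℝ), 0 ≤ c → ∀ x ∈ K, c • x ∈ K) (hKconvex : Convex ℝ K)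
    {u v : Fin k → ℝ} (hu : u ∈ K) (hv : v ∈ K) : u + v ∈ K := by
  have hmid : (1/2 : ℝ) • u + (1/2 : ℝ) • v ∈ K :=
    hKconvex hu hv (by norm_num) (by norm_num) (by norm_num)
  have := hKcone 2 (by norm_num) _ hmid
  rw [smul_add, smul_smul, smul_smul] at this
  norm_num at this
  exact this

lemma qi_nonneg {l : Fin k → ℝ} (hl : ∀ u ∈ K, u ≠ 0 → 0 < l ⬝ᵥ u) :
    ∀ u ∈ K, 0 ≤ l ⬝ᵥ u := by
  intro u hu
  rcases eq_or_ne u 0 with rfl | h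
  · simp
  · exact (hl u hu h).le

lemma exists_qi (hKcone : ∀ (c : ℝ), 0 ≤ c → ∀ x ∈ K, c • x ∈ K)
    (hKclosed : IsClosed K) (hKconvex : Convex ℝ K) (hKpointed : K ∩ (-K) = {0}) :
    ∃ e : Fin k → ℝ, ∀ u ∈ K, u ≠ 0 → 0 < e ⬝ᵥ u := by
  classical
  set Kstar : Set (Fin k → ℝ) := {y | ∀ u ∈ K, 0 ≤ y ⬝ᵥ u} with hKstar
  have bipolar : ∀ d : Fin k → ℝ, d ∉ K → ∃ g ∈ Kstar, g ⬝ᵥ d < 0 := by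
    intro d hd
    obtain ⟨g, hgK, hgd⟩ := cone_sep hKconvex hKclosed (cone_zero_mem hKpointed)
      (fun c hc z hz => hKcone c hc.le z hz) hd
    exact ⟨g, fun u hu => hgK u hu, hgd⟩
  obtain ⟨bs, hbsub, hbspan, hbli⟩ := exists_linearIndependent ℝ Kstar
  have hbfin : bs.Finite := hbli.setFinite
  refine ⟨∑ y ∈ hbfin.toFinset, y, ?_⟩
  intro u hu hune
  have hnn : ∀ y ∈ hbfin.toFinset, 0 ≤ y ⬝ᵥ u := by
    intro y hy
    exact hbsub (by rwa [Set.Finite.mem_toFinset] at hy) u hu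
  rw [dot_sum_left]
  rcases (Finset.sum_nonneg hnn).lt_or_eq with h | h
  · exact h
  · exfalso
    -- all terms vanish, so every element of Kstar vanishes on u
    have hzero : ∀ y ∈ hbfin.toFinset, y ⬝ᵥ u = 0 :=
      (Finset.sum_eq_zero_iff_of_nonneg hnn).mp h.symm
    have hspan0 : ∀ y ∈ Submodule.span ℝ bs, y ⬝ᵥ u = 0 := by
      intro y hy
      induction hy using Submodule.span_induction with
      | mem z hz => exact hzero z (hbfin.mem_toFinset.mpr hz)
      | zero => simp
      | add a b _ _ ha hb => rw [add_dotProduct, ha, hb, add_zero]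
      | smul c a _ ha => rw [smul_dotProduct, ha, smul_zero]
    have hKstar0 : ∀ y ∈ Kstar, y ⬝ᵥ u = 0 := by
      intro y hy
      exact hspan0 y (hbspan ▸ Submodule.subset_span hy)
    have hneg : -u ∈ K := by
      by_contra hneg
      obtain ⟨g, hgK, hgd⟩ := bipolar (-u) hneg
      rw [dotProduct_neg, hKstar0 g hgK] at hgd
      simp at hgd
    have : u ∈ K ∩ (-K) := ⟨hu, by simpa using hneg⟩
    rw [hKpointed] at this
    exact hune this

lemma slice_compact (hKcone : ∀ (c : ℝ), 0 ≤ c → ∀ x ∈ K, c • x ∈ K)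
    (hKclosed : IsClosed K) {l : Fin k → ℝ} (hl : ∀ u ∈ K, u ≠ 0 → 0 < l ⬝ᵥ u) (c : ℝ) :
    IsCompact {u : Fin k → ℝ | u ∈ K ∧ l ⬝ᵥ u ≤ c} := by
  apply Metric.isCompact_of_isClosed_isBounded
  · exact hKclosed.inter (isClosed_le (dot_continuous l) continuous_const)
  · -- bounded: the functional grows at least linearly on K
    have hS1 : IsCompact (K ∩ Metric.sphere 0 1) :=
      (isCompact_sphere (0 : Fin k → ℝ) 1).inter_left hKclosed
    rcases Set.eq_empty_or_nonempty (K ∩ Metric.sphere 0 1) with hemp | hne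
    · -- then K = {0}
      have hK0 : ∀ u ∈ K, u = 0 := by
        intro u hu
        by_contra hne0
        have hnorm : ‖u‖ ≠ 0 := norm_ne_zero_iff.mpr hne0
        have : ‖u‖⁻¹ • u ∈ K ∩ Metric.sphere 0 1 := by
          constructor
          · exact hKcone _ (inv_nonneg.mpr (norm_nonneg u)) u hu
          · rw [mem_sphere_zero_iff_norm, norm_smul, norm_inv, norm_norm,
              inv_mul_cancel₀ hnorm]
        rw [hemp] at this
        exact this
      apply Bornology.IsBounded.subset (Metric.isBounded_ball (x := (0 : Fin k → ℝ)) (r := 1))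
      intro u hu
      rw [hK0 u hu.1]
      simp
    · obtain ⟨d, hdmem, hdmin⟩ := hS1.exists_isMinOn hne ((dot_continuous l).continuousOn)
      have hdne : d ≠ 0 := by
        intro h
        have := hdmem.2
        rw [mem_sphere_zero_iff_norm, h] at this
        simp at this
      have hδ : 0 < l ⬝ᵥ d := hl d hdmem.1 hdne
      rw [isBounded_iff_forall_norm_le]
      refine ⟨max (c / (l ⬝ᵥ d)) 0, ?_⟩
      rintro u ⟨huK, hlu⟩
      rcases eq_or_ne u 0 with rfl | hne0
      · simp [le_max_right]
      · have hnorm : (0:ℝ) < ‖u‖ := norm_pos_iff.mpr hne0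
        have hmem : ‖u‖⁻¹ • u ∈ K ∩ Metric.sphere 0 1 := by
          constructor
          · exact hKcone _ (inv_nonneg.mpr (norm_nonneg u)) u huK
          · rw [mem_sphere_zero_iff_norm, norm_smul, norm_inv, norm_norm,
              inv_mul_cancel₀ (ne_of_gt hnorm)]
        have := hdmin hmem
        simp only [Set.mem_setOf_eq] at this
        have hkey : l ⬝ᵥ d ≤ ‖u‖⁻¹ * (l ⬝ᵥ u) := by
          have : l ⬝ᵥ d ≤ l ⬝ᵥ (‖u‖⁻¹ • u) := this
          rwa [dotProduct_smul, smul_eq_mul] at this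
        have h1 : ‖u‖ * (l ⬝ᵥ d) ≤ l ⬝ᵥ u := by
          have := mul_le_mul_of_nonneg_right hkey hnorm.le
          rwa [mul_comm (‖u‖⁻¹) _, mul_assoc, inv_mul_cancel₀ (ne_of_gt hnorm), mul_one,
            mul_comm] at this
        have : ‖u‖ ≤ c / (l ⬝ᵥ d) := by
          rw [le_div_iff₀ hδ]
          nlinarith
        exact le_trans this (le_max_left _ _)

lemma cone_sep_strict [DecidableEq (Fin k)]
    (hKcone : ∀ (c : ℝ), 0 ≤ c → ∀ x ∈ K, c • x ∈ K)
    (hKclosed : IsClosed K) (hKconvex : Convex ℝ K) (hKpointed : K ∩ (-K) = {0})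
    {D : Set (Fin k → ℝ)} (hDconv : Convex ℝ D) (hDclosed : IsClosed D)
    (hD0 : (0 : Fin k → ℝ) ∈ D) (hDscale : ∀ c : ℝ, 0 < c → ∀ z ∈ D, c • z ∈ D)
    (hDK : ∀ z ∈ D, -z ∈ K → z = 0) :
    ∃ l : Fin k → ℝ, (∀ u ∈ K, u ≠ 0 → 0 < l ⬝ᵥ u) ∧ ∀ z ∈ D, 0 ≤ l ⬝ᵥ z := by
  obtain ⟨e, he⟩ := exists_qi hKcone hKclosed hKconvex hKpointed
  set B : Set (Fin k → ℝ) := {u | u ∈ K ∧ e ⬝ᵥ u = 1} with hBdef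
  have hBcompact : IsCompact B := by
    apply IsCompact.of_isClosed_subset (slice_compact hKcone hKclosed he 1)
      (hKclosed.inter (isClosed_eq (dot_continuous e) continuous_const))
    rintro u ⟨huK, hue⟩
    exact ⟨huK, le_of_eq hue⟩
  have hBconv : Convex ℝ B := by
    rintro u ⟨huK, hue⟩ v ⟨hvK, hve⟩ a b ha hb hab
    refine ⟨hKconvex huK hvK ha hb hab, ?_⟩
    rw [dotProduct_add, dotProduct_smul, dotProduct_smul, hue, hve]
    simpa using hab
  have hnBcompact : IsCompact (-B) := hBcompact.neg
  have hnBconv : Convex ℝ (-B) := hBconv.neg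
  have hdisj : Disjoint (-B) D := by
    rw [Set.disjoint_left]
    rintro z hzB hzD
    have hz := hDK z hzD (Set.mem_neg.mp hzB).1
    rw [Set.mem_neg, hz] at hzB
    simp only [neg_zero] at hzB
    have := hzB.2
    simp at this
  obtain ⟨f, u₁, u₂, hfB, hu12, hfD⟩ :=
    geometric_hahn_banach_compact_closed hnBconv hnBcompact hDconv hDclosed hdisj
  have hu₂0 : u₂ < 0 := by simpa using hfD 0 hD0
  have hfDpos : ∀ z ∈ D, 0 ≤ f z := by
    intro z hz
    by_contra h
    push_neg at h
    set c : ℝ := (u₂ - 1) / f z with hc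
    have hcpos : 0 < c := div_pos_of_neg_of_neg (by linarith) h
    have := hfD _ (hDscale c hcpos z hz)
    rw [f.map_smul] at this
    simp only [smul_eq_mul, hc] at this
    rw [div_mul_cancel₀ _ (ne_of_lt h)] at this
    linarith
  have hfKpos : ∀ u ∈ K, u ≠ 0 → 0 < f u := by
    intro u hu hune
    have heu : 0 < e ⬝ᵥ u := he u hu hune
    set u' : Fin k → ℝ := (e ⬝ᵥ u)⁻¹ • u with hu'
    have hu'B : u' ∈ B := by
      constructor
      · exact hKcone _ (inv_nonneg.mpr heu.le) u hu
      · rw [dotProduct_smul, smul_eq_mul, inv_mul_cancel₀ (ne_of_gt heu)]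
    have : f (-u') < u₁ := hfB _ (by rw [Set.mem_neg]; simpa using hu'B)
    rw [map_neg] at this
    have hfu' : 0 < f u' := by linarith
    have : f u = (e ⬝ᵥ u) * f u' := by
      rw [hu', f.map_smul, smul_eq_mul]
      field_simp
    rw [this]
    exact mul_pos heu hfu'
  obtain ⟨g, hg⟩ := dual_vec_s6 f
  refine ⟨g, fun u hu hune => ?_, fun z hz => ?_⟩
  · rw [← hg]; exact hfKpos u hu hune
  · rw [← hg]; exact hfDpos z hz
end ConeGeom
open Matrix Filter

theorem stmt6 (k n m : ℕ) (K : Set (Fin k → ℝ))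
    (hKcone : ∀ (c : ℝ), 0 ≤ c → ∀ x ∈ K, c • x ∈ K)
    (hKclosed : IsClosed K) (hKconvex : Convex ℝ K)
    (hKpointed : K ∩ (-K) = {0})
    (hKne : K ≠ {0}) (hKuniv : K ≠ Set.univ)
    (L : Matrix (Fin k) (Fin n) ℝ) (A : Matrix (Fin m) (Fin n) ℝ) (b : Fin m → ℝ)
    (LA hB : Set (Fin k → ℝ))
    (hLA : LA = {w | ∃ x : Fin n → ℝ, ((∀ i, 0 ≤ x i) ∧ A *ᵥ x = b) ∧ L *ᵥ x = w})
    (hhB : hB = {w | ∃ (l : Fin k → ℝ) (U : Matrix (Fin k) (Fin m) ℝ) (v : Fin k → ℝ),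
      ((∀ u ∈ K, u ≠ 0 → 0 < l ⬝ᵥ u) ∧ l ⬝ᵥ v = 0 ∧
        ∀ i, 0 ≤ ((L - U * A)ᵀ *ᵥ l) i) ∧ U *ᵥ b + v = w}) :
    {w ∈ LA | ¬ ∃ w' ∈ LA, w - w' ∈ K ∧ w - w' ≠ 0} =
    {w ∈ hB | ¬ ∃ w' ∈ hB, w' - w ∈ K ∧ w' - w ≠ 0} := by
  classical
  have hK0 : (0 : Fin k → ℝ) ∈ K := cone_zero_mem hKpointed
  obtain ⟨u₀, hu₀K, hu₀ne⟩ : ∃ u ∈ K, u ≠ 0 := by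
    by_contra h
    push_neg at h
    apply hKne
    ext u
    simp only [Set.mem_singleton_iff]
    exact ⟨fun hu => h u hu, fun hu => hu ▸ hK0⟩
  -- characterization of the dual attainable set
  have hBchar : ∀ w : Fin k → ℝ, w ∈ hB ↔ ∃ (l : Fin k → ℝ) (μ : Fin m → ℝ),
      (∀ u ∈ K, u ≠ 0 → 0 < l ⬝ᵥ u) ∧ (∀ j, (Aᵀ *ᵥ μ) j ≤ (Lᵀ *ᵥ l) j) ∧
      l ⬝ᵥ w = b ⬝ᵥ μ := by
    intro w
    rw [hhB]
    simp only [Set.mem_setOf_eq]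
    constructor
    · rintro ⟨l, U, v, ⟨hqi, hlv, hpos⟩, hw⟩
      refine ⟨l, Uᵀ *ᵥ l, hqi, ?_, ?_⟩
      · intro j
        have := hpos j
        rw [Matrix.transpose_sub, Matrix.sub_mulVec, Matrix.transpose_mul,
          ← Matrix.mulVec_mulVec] at this
        simp only [Pi.sub_apply] at this
        linarith
      · rw [← hw, dotProduct_add, hlv, add_zero, dotProduct_mulVec, Matrix.mulVec_transpose,
          dotProduct_comm]
    · rintro ⟨l, μ, hqi, hdf, hval⟩
      have hlne : l ≠ 0 := by
        intro h
        have := hqi u₀ hu₀K hu₀ne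
        rw [h] at this
        simp at this
      have hll : 0 < l ⬝ᵥ l := by
        rcases (Finset.sum_nonneg (fun i _ => mul_self_nonneg (l i))).lt_or_eq with h | h
        · exact h
        · exact absurd (dotProduct_self_eq_zero.mp h.symm) hlne
      set U : Matrix (Fin k) (Fin m) ℝ := Matrix.of (fun i j => l i * μ j / (l ⬝ᵥ l)) with hU
      have hUt : Uᵀ *ᵥ l = μ := by
        funext j
        have hptwise : ∀ i, Uᵀ j i * l i = (l i * l i) * (μ j / (l ⬝ᵥ l)) := by
          intro i
          simp only [Matrix.transpose_apply, Matrix.of_apply, hU]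
          ring
        have hd : (Uᵀ *ᵥ l) j = (l ⬝ᵥ l) * (μ j / (l ⬝ᵥ l)) :=
          calc (Uᵀ *ᵥ l) j = ∑ i, Uᵀ j i * l i := rfl
          _ = ∑ i, (l i * l i) * (μ j / (l ⬝ᵥ l)) :=
              Finset.sum_congr rfl (fun i _ => hptwise i)
          _ = (∑ i, l i * l i) * (μ j / (l ⬝ᵥ l)) := by rw [Finset.sum_mul]
          _ = (l ⬝ᵥ l) * (μ j / (l ⬝ᵥ l)) := rfl
        rw [hd, mul_comm, div_mul_cancel₀ _ (ne_of_gt hll)]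
      refine ⟨l, U, w - U *ᵥ b, ⟨hqi, ?_, ?_⟩, by abel⟩
      · rw [dotProduct_sub, hval, dotProduct_mulVec, ← Matrix.mulVec_transpose, hUt,
          dotProduct_comm b μ]
        ring
      · intro i
        rw [Matrix.transpose_sub, Matrix.sub_mulVec, Matrix.transpose_mul,
          ← Matrix.mulVec_mulVec, hUt]
        simp only [Pi.sub_apply]
        have := hdf i
        linarith
  -- weak duality
  have hweak : ∀ (x : Fin n → ℝ), (∀ i, 0 ≤ x i) → A *ᵥ x = b →
      ∀ (l : Fin k → ℝ) (μ : Fin m → ℝ), (∀ j, (Aᵀ *ᵥ μ) j ≤ (Lᵀ *ᵥ l) j) →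
      b ⬝ᵥ μ ≤ l ⬝ᵥ (L *ᵥ x) := by
    intro x hx hAx l μ hdf
    have h1 : b ⬝ᵥ μ = (Aᵀ *ᵥ μ) ⬝ᵥ x := by
      rw [Matrix.mulVec_transpose, ← dotProduct_mulVec, hAx, dotProduct_comm]
    have h2 : l ⬝ᵥ (L *ᵥ x) = (Lᵀ *ᵥ l) ⬝ᵥ x := by
      rw [Matrix.mulVec_transpose, ← dotProduct_mulVec]
    rw [h1, h2, ← sub_nonneg, ← sub_dotProduct, dotProduct]
    apply Finset.sum_nonneg
    intro j _
    refine mul_nonneg ?_ (hx j)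
    have := hdf j
    simp only [Pi.sub_apply]
    linarith
  -- LA is closed and convex
  set v₂ : Fin n → (Fin k ⊕ Fin m → ℝ) :=
    fun j => Sum.elim (fun i => L i j) (fun i => A i j) with hv₂
  have hsum₂ : ∀ x : Fin n → ℝ, ∑ j, x j • v₂ j = Sum.elim (L *ᵥ x) (A *ᵥ x) := by
    intro x
    funext e
    rw [Finset.sum_apply]
    rcases e with i | i
    · simp only [hv₂, Pi.smul_apply, Sum.elim_inl, smul_eq_mul]
      simp [Matrix.mulVec, dotProduct, mul_comm]
    · simp only [hv₂, Pi.smul_apply, Sum.elim_inr, smul_eq_mul]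
      simp [Matrix.mulVec, dotProduct, mul_comm]
  have hLAchar : ∀ y, y ∈ LA ↔ Sum.elim y b ∈
      {z : Fin k ⊕ Fin m → ℝ | ∃ x : Fin n → ℝ, (∀ i, 0 ≤ x i) ∧ ∑ j, x j • v₂ j = z} := by
    intro y
    rw [hLA]
    simp only [Set.mem_setOf_eq]
    constructor
    · rintro ⟨x, ⟨hx, hAx⟩, hLx⟩
      exact ⟨x, hx, by rw [hsum₂, hAx, hLx]⟩
    · rintro ⟨x, hx, hsum⟩
      rw [hsum₂] at hsum
      refine ⟨x, ⟨hx, ?_⟩, ?_⟩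
      · funext i; exact congrFun hsum (Sum.inr i)
      · funext i; exact congrFun hsum (Sum.inl i)
  have hcontElim : ∀ q : Fin m → ℝ, Continuous (fun y : Fin k → ℝ => Sum.elim y q) := by
    intro q
    apply continuous_pi
    rintro (i | i)
    · exact continuous_apply i
    · exact continuous_const
  have hLAclosed : IsClosed LA := by
    have heq : LA = (fun y : Fin k → ℝ => Sum.elim y b) ⁻¹'
        {z : Fin k ⊕ Fin m → ℝ | ∃ x : Fin n → ℝ, (∀ i, 0 ≤ x i) ∧ ∑ j, x j • v₂ j = z} := by
      ext y
      exact hLAchar y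
    rw [heq]
    exact IsClosed.preimage (hcontElim b) (fg_closed v₂)
  have hLAconv : Convex ℝ LA := by
    rw [hLA]
    rintro y₁ ⟨x₁, ⟨hx₁, hA₁⟩, hL₁⟩ y₂ ⟨x₂, ⟨hx₂, hA₂⟩, hL₂⟩ α β hα hβ hαβ
    refine ⟨α • x₁ + β • x₂, ⟨fun i => ?_, ?_⟩, ?_⟩
    · simp only [Pi.add_apply, Pi.smul_apply, smul_eq_mul]
      exact add_nonneg (mul_nonneg hα (hx₁ i)) (mul_nonneg hβ (hx₂ i))
    · rw [Matrix.mulVec_add, Matrix.mulVec_smul, Matrix.mulVec_smul, hA₁, hA₂, ← add_smul,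
        hαβ, one_smul]
    · rw [Matrix.mulVec_add, Matrix.mulVec_smul, Matrix.mulVec_smul, hL₁, hL₂]
  ext w
  simp only [Set.mem_setOf_eq]
  constructor
  · -- minimal in LA implies maximal in hB
    rintro ⟨hwLA, hwmin⟩
    have hwLA' := hwLA
    rw [hLA] at hwLA'
    obtain ⟨xbar, ⟨hxbar0, hxbarA⟩, hxbarL⟩ := hwLA'
    -- the closed cone D generated by the problem at w
    set vD : (Fin n ⊕ Unit) → (Fin k ⊕ Fin m → ℝ) :=
      Sum.elim v₂ (fun _ => Sum.elim (fun i => -(w i)) (fun i => -(b i))) with hvD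
    set E : Set (Fin k ⊕ Fin m → ℝ) :=
      {z | ∃ x' : (Fin n ⊕ Unit) → ℝ, (∀ i, 0 ≤ x' i) ∧ ∑ i, x' i • vD i = z} with hE
    have hsumD : ∀ x' : (Fin n ⊕ Unit) → ℝ, ∑ i, x' i • vD i =
        Sum.elim (L *ᵥ (fun j => x' (Sum.inl j)) - x' (Sum.inr ()) • w)
                 (A *ᵥ (fun j => x' (Sum.inl j)) - x' (Sum.inr ()) • b) := by
      intro x'
      rw [Fintype.sum_sum_type]
      simp only [Finset.univ_unique, Finset.sum_singleton, hvD, Sum.elim_inl, Sum.elim_inr]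
      rw [hsum₂ (fun j => x' (Sum.inl j))]
      have hdef : (default : Unit) = () := rfl
      rw [hdef]
      funext e
      rcases e with i | i
      · simp only [Sum.elim_inl, Sum.elim_inr, Pi.add_apply, Pi.sub_apply,
          Pi.smul_apply, smul_eq_mul]
        ring
      · simp only [Sum.elim_inl, Sum.elim_inr, Pi.add_apply, Pi.sub_apply,
          Pi.smul_apply, smul_eq_mul]
        ring
    set D : Set (Fin k → ℝ) := {z | Sum.elim z (0 : Fin m → ℝ) ∈ E} with hD
    have hDchar : ∀ z, z ∈ D ↔ ∃ (x : Fin n → ℝ) (t : ℝ), (∀ i, 0 ≤ x i) ∧ 0 ≤ t ∧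
        A *ᵥ x = t • b ∧ L *ᵥ x - t • w = z := by
      intro z
      constructor
      · rintro ⟨x', hx', hsum⟩
        rw [hsumD] at hsum
        refine ⟨fun j => x' (Sum.inl j), x' (Sum.inr ()), fun j => hx' _, hx' _, ?_, ?_⟩
        · have := fun i => congrFun hsum (Sum.inr i)
          have h0 : A *ᵥ (fun j => x' (Sum.inl j)) - x' (Sum.inr ()) • b = 0 := by
            funext i
            exact this i
          rwa [sub_eq_zero] at h0
        · funext i
          exact congrFun hsum (Sum.inl i)
      · rintro ⟨x, t, hx, ht, hAx, hLx⟩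
        refine ⟨Sum.elim x (fun _ => t), ?_, ?_⟩
        · rintro (j | j)
          · exact hx j
          · exact ht
        · rw [hsumD]
          have hxx : (fun j : Fin n => Sum.elim x (fun _ : Unit => t) (Sum.inl j)) = x := rfl
          rw [hxx]
          funext e
          rcases e with i | i
          · simp only [Sum.elim_inl, Sum.elim_inr]
            rw [← hLx]
          · simp only [Sum.elim_inl, Sum.elim_inr]
            rw [hAx]
            simp
    have hDclosed : IsClosed D := IsClosed.preimage (hcontElim 0) (fg_closed vD)
    have hDconv : Convex ℝ D := by
      rintro z₁ hz₁ z₂ hz₂ α β hα hβ hαβ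
      obtain ⟨x₁, t₁, hx₁, ht₁, hA₁, hL₁⟩ := (hDchar z₁).mp hz₁
      obtain ⟨x₂, t₂, hx₂, ht₂, hA₂, hL₂⟩ := (hDchar z₂).mp hz₂
      refine (hDchar _).mpr ⟨α • x₁ + β • x₂, α * t₁ + β * t₂, fun i => ?_, ?_, ?_, ?_⟩
      · simp only [Pi.add_apply, Pi.smul_apply, smul_eq_mul]
        exact add_nonneg (mul_nonneg hα (hx₁ i)) (mul_nonneg hβ (hx₂ i))
      · exact add_nonneg (mul_nonneg hα ht₁) (mul_nonneg hβ ht₂)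
      · rw [Matrix.mulVec_add, Matrix.mulVec_smul, Matrix.mulVec_smul, hA₁, hA₂, add_smul,
          smul_smul, smul_smul]
      · have hLcomb : L *ᵥ (α • x₁ + β • x₂) = α • (L *ᵥ x₁) + β • (L *ᵥ x₂) := by
          rw [Matrix.mulVec_add, Matrix.mulVec_smul, Matrix.mulVec_smul]
        rw [hLcomb, ← hL₁, ← hL₂, smul_sub, smul_sub, add_smul, smul_smul, smul_smul]
        abel
    have hD0 : (0 : Fin k → ℝ) ∈ D :=
      (hDchar 0).mpr ⟨0, 0, fun i => le_refl _, le_refl _, by simp, by simp⟩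
    have hDscale : ∀ c : ℝ, 0 < c → ∀ z ∈ D, c • z ∈ D := by
      intro c hc z hz
      obtain ⟨x, t, hx, ht, hAx, hLx⟩ := (hDchar z).mp hz
      refine (hDchar _).mpr ⟨c • x, c * t, fun i => ?_, mul_nonneg hc.le ht, ?_, ?_⟩
      · simp only [Pi.smul_apply, smul_eq_mul]
        exact mul_nonneg hc.le (hx i)
      · rw [Matrix.mulVec_smul, hAx, smul_smul]
      · rw [Matrix.mulVec_smul, ← hLx, smul_sub, smul_smul]
    have hDK : ∀ z ∈ D, -z ∈ K → z = 0 := by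
      intro z hz hzK
      obtain ⟨x, t, hx, ht, hAx, hLx⟩ := (hDchar z).mp hz
      rcases eq_or_lt_of_le ht with hteq | htpos
      · -- t = 0 : recession direction
        have hAx0 : A *ᵥ x = 0 := by rw [hAx, ← hteq, zero_smul]
        have hLz : L *ᵥ x = z := by rw [← hLx, ← hteq, zero_smul, sub_zero]
        have hmem : L *ᵥ (xbar + x) ∈ LA := by
          rw [hLA]
          exact ⟨xbar + x, ⟨fun i => add_nonneg (hxbar0 i) (hx i),
            by rw [Matrix.mulVec_add, hxbarA, hAx0, add_zero]⟩, rfl⟩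
        have hdiff : w - L *ᵥ (xbar + x) = -z := by
          rw [Matrix.mulVec_add, hxbarL, hLz]
          abel
        by_contra hzne
        exact hwmin ⟨L *ᵥ (xbar + x), hmem, by rw [hdiff]; exact hzK, by
          rw [hdiff]; simpa using hzne⟩
      · -- t > 0 : rescale to a feasible point
        have hfeas : A *ᵥ (t⁻¹ • x) = b := by
          rw [Matrix.mulVec_smul, hAx, smul_smul, inv_mul_cancel₀ (ne_of_gt htpos), one_smul]
        have hmem : L *ᵥ (t⁻¹ • x) ∈ LA := by
          rw [hLA]
          exact ⟨t⁻¹ • x, ⟨fun i => by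
            simp only [Pi.smul_apply, smul_eq_mul]
            exact mul_nonneg (inv_nonneg.mpr ht) (hx i), hfeas⟩, rfl⟩
        have hdiff : w - L *ᵥ (t⁻¹ • x) = -(t⁻¹ • z) := by
          rw [Matrix.mulVec_smul, ← hLx]
          rw [smul_sub, smul_smul, inv_mul_cancel₀ (ne_of_gt htpos), one_smul]
          abel
        have hKmem : -(t⁻¹ • z) ∈ K := by
          have := hKcone t⁻¹ (inv_nonneg.mpr ht) (-z) hzK
          rwa [smul_neg] at this
        by_contra hzne
        apply hwmin ⟨L *ᵥ (t⁻¹ • x), hmem, by rw [hdiff]; exact hKmem, by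
          rw [hdiff]
          intro hcon
          apply hzne
          have : t⁻¹ • z = 0 := by
            have := neg_eq_zero.mp hcon
            exact this
          have := congrArg (fun y => t • y) this
          simpa [smul_smul, mul_inv_cancel₀ (ne_of_gt htpos)] using this⟩
    obtain ⟨l, hqi, hDpos⟩ := cone_sep_strict hKcone hKclosed hKconvex hKpointed
      hDconv hDclosed hD0 hDscale hDK
    -- scalarized optimality of w
    have hlb : ∀ x, (∀ i, 0 ≤ x i) → A *ᵥ x = b → l ⬝ᵥ w ≤ (Lᵀ *ᵥ l) ⬝ᵥ x := by
      intro x hx hAx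
      have hmem : L *ᵥ x - (1:ℝ) • w ∈ D :=
        (hDchar _).mpr ⟨x, 1, hx, zero_le_one, by rw [one_smul, hAx], rfl⟩
      have := hDpos _ hmem
      rw [dotProduct_sub, dotProduct_smul, one_smul] at this
      have h3 : (Lᵀ *ᵥ l) ⬝ᵥ x = l ⬝ᵥ (L *ᵥ x) := by
        rw [Matrix.mulVec_transpose, ← dotProduct_mulVec]
      rw [h3]
      linarith
    obtain ⟨μ, hdf, hγ⟩ := strong_duality_bound A b (Lᵀ *ᵥ l) (l ⬝ᵥ w) xbar hxbar0 hxbarA hlb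
    have hval : l ⬝ᵥ w = b ⬝ᵥ μ := by
      have h1 : b ⬝ᵥ μ ≤ l ⬝ᵥ (L *ᵥ xbar) := hweak xbar hxbar0 hxbarA l μ hdf
      rw [hxbarL] at h1
      linarith
    refine ⟨(hBchar w).mpr ⟨l, μ, hqi, hdf, hval⟩, ?_⟩
    rintro ⟨w', hw'hB, hw'K, hw'ne⟩
    obtain ⟨l', μ', hqi', hdf', hval'⟩ := (hBchar w').mp hw'hB
    have h1 : b ⬝ᵥ μ' ≤ l' ⬝ᵥ (L *ᵥ xbar) := hweak xbar hxbar0 hxbarA l' μ' hdf'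
    rw [hxbarL] at h1
    have h2 : 0 < l' ⬝ᵥ (w' - w) := hqi' _ hw'K hw'ne
    rw [dotProduct_sub, hval'] at h2
    linarith
  · -- maximal in hB implies minimal in LA
    rintro ⟨hwhB, hwmax⟩
    obtain ⟨l, μ, hqi, hdf, hval⟩ := (hBchar w).mp hwhB
    -- primal feasibility
    obtain ⟨xbar, hxbar0, hxbarA⟩ : ∃ x : Fin n → ℝ, (∀ i, 0 ≤ x i) ∧ A *ᵥ x = b := by
      by_contra hinf
      obtain ⟨d, hd1, hd2⟩ := farkas_eq A b hinf
      have hu₀pos : 0 < l ⬝ᵥ u₀ := hqi u₀ hu₀K hu₀ne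
      set t := (l ⬝ᵥ u₀) / (b ⬝ᵥ d) with ht
      have htpos : 0 < t := div_pos hu₀pos hd2
      apply hwmax
      refine ⟨w + u₀, (hBchar _).mpr ⟨l, μ + t • d, hqi, ?_, ?_⟩,
        by rw [add_sub_cancel_left]; exact hu₀K, by rw [add_sub_cancel_left]; exact hu₀ne⟩
      · intro j
        rw [Matrix.mulVec_add, Matrix.mulVec_smul]
        simp only [Pi.add_apply, Pi.smul_apply, smul_eq_mul]
        have h1 := hdf j
        have h2 := hd1 j
        nlinarith
      · rw [dotProduct_add, dotProduct_add, dotProduct_smul, smul_eq_mul, hval, ht,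
          div_mul_cancel₀ _ (ne_of_gt hd2)]
    -- w belongs to LA
    have hwLA : w ∈ LA := by
      by_contra hwnot
      set P : Set (Fin k → ℝ) := {y | ∃ p u, p ∈ LA ∧ u ∈ K ∧ p + u = y} with hP
      have hwP : w ∉ closure P := by
        intro hcl
        obtain ⟨ys, hysP, hyslim⟩ := mem_closure_iff_seq_limit.mp hcl
        choose ps us hpsLA husK hsum using hysP
        have hlps : ∀ i, b ⬝ᵥ μ ≤ l ⬝ᵥ ps i := by
          intro i
          have h := hpsLA i
          rw [hLA] at h
          obtain ⟨x, ⟨hx0, hxA⟩, hxL⟩ := h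
          rw [← hxL]
          exact hweak x hx0 hxA l μ hdf
        have hlus0 : ∀ i, 0 ≤ l ⬝ᵥ us i := fun i => qi_nonneg hqi _ (husK i)
        have hlys : Tendsto (fun i => l ⬝ᵥ ys i) atTop (nhds (l ⬝ᵥ w)) :=
          ((dot_continuous l).tendsto w).comp hyslim
        have hlus : Tendsto (fun i => l ⬝ᵥ us i) atTop (nhds 0) := by
          have hbound : ∀ i, l ⬝ᵥ us i ≤ l ⬝ᵥ ys i - b ⬝ᵥ μ := by
            intro i
            have := hlps i
            have hsplit : l ⬝ᵥ ys i = l ⬝ᵥ ps i + l ⬝ᵥ us i := by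
              rw [← hsum i, dotProduct_add]
            linarith
          have hg : Tendsto (fun i => l ⬝ᵥ ys i - b ⬝ᵥ μ) atTop (nhds 0) := by
            have := hlys.sub_const (b ⬝ᵥ μ)
            rwa [hval, sub_self] at this
          exact squeeze_zero hlus0 hbound hg
        obtain ⟨N, hN⟩ : ∃ N, ∀ i ≥ N, l ⬝ᵥ us i ≤ 1 := by
          have := hlus.eventually_lt_const one_pos
          rw [Filter.eventually_atTop] at this
          obtain ⟨N, hN⟩ := this
          exact ⟨N, fun i hi => (hN i hi).le⟩
        have hsub : ∀ i : ℕ, us (i + N) ∈ {u | u ∈ K ∧ l ⬝ᵥ u ≤ 1} :=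
          fun i => ⟨husK _, hN _ (Nat.le_add_left N i)⟩
        obtain ⟨ustar, hustar, φ, hφmono, hφlim⟩ :=
          (slice_compact hKcone hKclosed hqi 1).tendsto_subseq hsub
        have hidx : Tendsto (fun i => φ i + N) atTop atTop :=
          Filter.tendsto_atTop_mono (fun i => le_trans hφmono.le_apply (Nat.le_add_right _ N))
            tendsto_id
        have h1 : Tendsto (fun i => l ⬝ᵥ us (φ i + N)) atTop (nhds (l ⬝ᵥ ustar)) :=
          ((dot_continuous l).tendsto ustar).comp hφlim
        have h2 : Tendsto (fun i => l ⬝ᵥ us (φ i + N)) atTop (nhds 0) := hlus.comp hidx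
        have hl0 : l ⬝ᵥ ustar = 0 := tendsto_nhds_unique h1 h2
        have hustar0 : ustar = 0 := by
          by_contra hne
          exact absurd hl0 (ne_of_gt (hqi ustar hustar.1 hne))
        have hps : Tendsto (fun i => ps (φ i + N)) atTop (nhds w) := by
          have heq : (fun i => ps (φ i + N)) = (fun i => ys (φ i + N) - us (φ i + N)) := by
            funext i
            rw [← hsum (φ i + N)]
            abel
          rw [heq]
          have hys' : Tendsto (fun i => ys (φ i + N)) atTop (nhds w) := hyslim.comp hidx
          have := hys'.sub hφlim
          rwa [hustar0, sub_zero] at this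
        exact hwnot (hLAclosed.mem_of_tendsto hps (Filter.Eventually.of_forall
          (fun i => hpsLA _)))
      have hPconv : Convex ℝ P := by
        rintro y₁ ⟨p₁, q₁, hp₁, hq₁, rfl⟩ y₂ ⟨p₂, q₂, hp₂, hq₂, rfl⟩ α β hα hβ hαβ
        refine ⟨α • p₁ + β • p₂, α • q₁ + β • q₂, hLAconv hp₁ hp₂ hα hβ hαβ,
          cone_add hKcone hKconvex (hKcone α hα q₁ hq₁) (hKcone β hβ q₂ hq₂), ?_⟩
        simp only [smul_add]
        abel
      obtain ⟨f, s, hfw, hfP⟩ := geometric_hahn_banach_point_closed hPconv.closure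
        isClosed_closure hwP
      obtain ⟨g, hg⟩ := dual_vec_s6 f
      have hgw : g ⬝ᵥ w < s := by rw [← hg]; exact hfw
      have hgP : ∀ y ∈ P, s < g ⬝ᵥ y := fun y hy => by
        rw [← hg]; exact hfP y (subset_closure hy)
      have hp0 : L *ᵥ xbar ∈ LA := by rw [hLA]; exact ⟨xbar, ⟨hxbar0, hxbarA⟩, rfl⟩
      have hgK : ∀ u ∈ K, 0 ≤ g ⬝ᵥ u := by
        intro u hu
        by_contra hneg
        push_neg at hneg
        set c : ℝ := max 1 ((s - 1 - g ⬝ᵥ (L *ᵥ xbar)) / (g ⬝ᵥ u)) with hc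
        have hc1 : (1:ℝ) ≤ c := le_max_left _ _
        have hcpos : 0 < c := lt_of_lt_of_le one_pos hc1
        have hcu : c * (g ⬝ᵥ u) ≤ s - 1 - g ⬝ᵥ (L *ᵥ xbar) := by
          have h1 : (s - 1 - g ⬝ᵥ (L *ᵥ xbar)) / (g ⬝ᵥ u) ≤ c := le_max_right _ _
          have := mul_le_mul_of_nonpos_right h1 hneg.le
          rwa [div_mul_cancel₀ _ (ne_of_lt hneg)] at this
        have hyP : (L *ᵥ xbar) + c • u ∈ P := ⟨L *ᵥ xbar, c • u, hp0,
          hKcone c hcpos.le u hu, rfl⟩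
        have := hgP _ hyP
        rw [dotProduct_add, dotProduct_smul, smul_eq_mul] at this
        linarith
      set l' : Fin k → ℝ := g + l with hl'
      have hqi' : ∀ u ∈ K, u ≠ 0 → 0 < l' ⬝ᵥ u := by
        intro u hu hne
        rw [hl', add_dotProduct]
        have := hqi u hu hne
        have := hgK u hu
        linarith
      have hlb : ∀ x, (∀ i, 0 ≤ x i) → A *ᵥ x = b → s + b ⬝ᵥ μ ≤ (Lᵀ *ᵥ l') ⬝ᵥ x := by
        intro x hx hAx
        have hmemLA : L *ᵥ x ∈ LA := by rw [hLA]; exact ⟨x, ⟨hx, hAx⟩, rfl⟩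
        have hmem : L *ᵥ x ∈ P := ⟨L *ᵥ x, 0, hmemLA, hK0, add_zero _⟩
        have h1 : s < g ⬝ᵥ (L *ᵥ x) := hgP _ hmem
        have h2 : b ⬝ᵥ μ ≤ l ⬝ᵥ (L *ᵥ x) := hweak x hx hAx l μ hdf
        have h3 : (Lᵀ *ᵥ l') ⬝ᵥ x = l' ⬝ᵥ (L *ᵥ x) := by
          rw [Matrix.mulVec_transpose, ← dotProduct_mulVec]
        rw [h3, hl', add_dotProduct]
        linarith
      obtain ⟨μ'', hdf'', hγ''⟩ := strong_duality_bound A b (Lᵀ *ᵥ l') (s + b ⬝ᵥ μ)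
        xbar hxbar0 hxbarA hlb
      have hδpos : 0 < b ⬝ᵥ μ'' - l' ⬝ᵥ w := by
        have hlw : l' ⬝ᵥ w = g ⬝ᵥ w + l ⬝ᵥ w := by rw [hl', add_dotProduct]
        rw [hlw, hval]
        linarith
      have hu₀pos : 0 < l' ⬝ᵥ u₀ := hqi' u₀ hu₀K hu₀ne
      set c : ℝ := (b ⬝ᵥ μ'' - l' ⬝ᵥ w) / (l' ⬝ᵥ u₀) with hcdef
      have hcpos : 0 < c := div_pos hδpos hu₀pos
      exfalso
      apply hwmax
      refine ⟨w + c • u₀, (hBchar _).mpr ⟨l', μ'', hqi', hdf'', ?_⟩, ?_, ?_⟩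
      · rw [dotProduct_add, dotProduct_smul, smul_eq_mul, hcdef,
          div_mul_cancel₀ _ (ne_of_gt hu₀pos)]
        ring
      · rw [add_sub_cancel_left]
        exact hKcone c hcpos.le u₀ hu₀K
      · rw [add_sub_cancel_left]
        exact fun h => hu₀ne ((smul_eq_zero.mp h).resolve_left (ne_of_gt hcpos))
    -- minimality of w
    refine ⟨hwLA, ?_⟩
    rintro ⟨w', hw'LA, hwK, hwne⟩
    rw [hLA] at hw'LA
    obtain ⟨x', ⟨hx'0, hx'A⟩, hx'L⟩ := hw'LA
    have h2 : b ⬝ᵥ μ ≤ l ⬝ᵥ w' := by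
      rw [← hx'L]
      exact hweak x' hx'0 hx'A l μ hdf
    have h3 : 0 < l ⬝ᵥ (w - w') := hqi _ hwK hwne
    rw [dotProduct_sub, hval] at h3
    linarith
end
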